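/- arXiv:2005.01998 — 7 statements merged into one kernel-verified Lean document; each statement's English description precedes it below -/
import Mathlib

section
/- Let Φ = (G, 𝕋, φ) be a complex unit gain graph and μ(G) the matching number of its underlying simple graph G. Then the energy of Φ satisfies 𝓔(Φ) ≥ 2μ(G). -/
open Matrix

variable {V : Type*}

/-- A gain function on `G` with values in the circle group `𝕋 ⊆ ℂ`:
each ordered pair of adjacent vertices gets a unit complex number, and
reversing the pair inverts the gain. -/
structure IsGain (G : SimpleGraph V) (φ : V → V → ℂ) : Prop where
  unit : ∀ u v, G.Adj u v → ‖φ u v‖ = 1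
  inv : ∀ u v, G.Adj u v → φ v u = (φ u v)⁻¹

/-- The adjacency matrix of the complex unit gain graph `(G, 𝕋, φ)`. -/
noncomputable def gainAdj (G : SimpleGraph V) (φ : V → V → ℂ) : Matrix V V ℂ :=
  fun u v => @ite _ (G.Adj u v) (Classical.dec _) (φ u v) 0

theorem IsGain.isHermitian {G : SimpleGraph V} {φ : V → V → ℂ} (hg : IsGain G φ) :
    (gainAdj G φ).IsHermitian := by
  ext u v
  simp only [conjTranspose_apply, gainAdj]
  by_cases h : G.Adj u v
  · rw [if_pos h.symm, if_pos h, hg.inv u v h, Complex.inv_eq_conj (hg.unit u v h)]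
    simp
  · rw [if_neg (fun h' => h h'.symm), if_neg h]
    simp

/-- The energy of a complex unit gain graph: the sum of the absolute values of the
eigenvalues of its (Hermitian) adjacency matrix. -/
noncomputable def gainEnergy [Fintype V] [DecidableEq V] (G : SimpleGraph V) (φ : V → V → ℂ)
    (hg : IsGain G φ) : ℝ :=
  ∑ i, |hg.isHermitian.eigenvalues i|

/-- `M` is a matching of `G`: a set of edges of `G`, pairwise sharing no vertex. -/
def IsGraphMatching (G : SimpleGraph V) (M : Finset (Sym2 V)) : Prop :=
  (↑M : Set (Sym2 V)) ⊆ G.edgeSet ∧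
    ∀ e ∈ M, ∀ f ∈ M, e ≠ f → ∀ v : V, v ∈ e → v ∉ f

/-- The matching number of `G`: the largest size of a matching. -/
noncomputable def matchingNumber (G : SimpleGraph V) : ℕ :=
  sSup {n | ∃ M : Finset (Sym2 V), IsGraphMatching G M ∧ M.card = n}

/-- The gain of a walk: the product of the gains along its darts. -/
def walkGain {G : SimpleGraph V} (φ : V → V → ℂ) {u v : V} (w : G.Walk u v) : ℂ :=
  (w.darts.map fun d => φ d.toProd.1 d.toProd.2).prod

/-- A complex unit gain graph is balanced if every cycle has gain `1`. -/
def IsBalanced (G : SimpleGraph V) (φ : V → V → ℂ) : Prop :=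
  ∀ (v : V) (w : G.Walk v v), w.IsCycle → walkGain φ w = 1

theorem IsGain.anti {G H : SimpleGraph V} {φ : V → V → ℂ} (hg : IsGain G φ) (hle : H ≤ G) :
    IsGain H φ :=
  ⟨fun u v h => hg.unit u v (hle h), fun u v h => hg.inv u v (hle h)⟩

theorem IsGain.induce {G : SimpleGraph V} {φ : V → V → ℂ} (hg : IsGain G φ) (s : Set V) :
    IsGain (G.induce s) (fun a b => φ a b) :=
  ⟨fun u v h => hg.unit u v h, fun u v h => hg.inv u v h⟩


section EnergyAux
open Finset
variable [Fintype V] [DecidableEq V]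


/-- auxiliary matrix supported on a matching -/
noncomputable def matchMat (M : Finset (Sym2 V)) (φ : V → V → ℂ) : Matrix V V ℂ :=
  fun u v => if s(u, v) ∈ M then φ u v else 0

lemma matching_fiber_card (M : Finset (Sym2 V)) (hnd : ∀ e ∈ M, ¬ e.IsDiag) :
    ((Finset.univ ×ˢ Finset.univ).filter fun p : V × V => s(p.1, p.2) ∈ M).card
      = 2 * M.card := by
  rw [Finset.card_eq_sum_card_fiberwise (f := fun p : V × V => s(p.1, p.2)) (t := M)
    (s := (Finset.univ ×ˢ Finset.univ).filter fun p : V × V => s(p.1, p.2) ∈ M)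
    (fun p hp => (Finset.mem_filter.mp hp).2)]
  rw [Finset.sum_congr rfl (g := fun _ => 2) ?_, Finset.sum_const, smul_eq_mul, mul_comm]
  intro e he
  induction e using Sym2.inductionOn with
  | hf a b =>
    have hab : a ≠ b := fun h => hnd _ he (by simp [h])
    have hset : (((Finset.univ ×ˢ Finset.univ).filter
          fun p : V × V => s(p.1,p.2) ∈ M).filter
        (fun p => s(p.1, p.2) = s(a,b))) = {(a,b), (b,a)} := by
      ext p
      simp only [Finset.mem_filter, Finset.mem_insert, Finset.mem_singleton,
        Finset.mem_product, Finset.mem_univ, true_and]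
      constructor
      · rintro ⟨-, h⟩
        rcases Sym2.eq_iff.mp h with ⟨h1, h2⟩ | ⟨h1, h2⟩
        · left; exact Prod.ext h1 h2
        · right; exact Prod.ext h1 h2
      · rintro (rfl | rfl)
        · exact ⟨he, rfl⟩
        · exact ⟨by rwa [Sym2.eq_swap], Sym2.eq_swap⟩
    rw [hset, Finset.card_insert_of_notMem (by simp [Prod.ext_iff, hab]),
      Finset.card_singleton]


lemma trace_gainAdj_mul_matchMat {G : SimpleGraph V} {φ : V → V → ℂ} (hg : IsGain G φ)
    {M : Finset (Sym2 V)} (hM : IsGraphMatching G M) :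
    Matrix.trace (gainAdj G φ * matchMat M φ) = (2 * M.card : ℂ) := by
  have hnd : ∀ e ∈ M, ¬ e.IsDiag := fun e he => G.not_isDiag_of_mem_edgeSet (hM.1 he)
  have key : ∀ u v : V, gainAdj G φ u v * matchMat M φ v u
      = if s(u, v) ∈ M then (1 : ℂ) else 0 := by
    intro u v
    by_cases h : s(u, v) ∈ M
    · have hadj : G.Adj u v := (G.mem_edgeSet).mp (hM.1 h)
      have h' : s(v, u) ∈ M := by rwa [Sym2.eq_swap]
      simp only [gainAdj, matchMat, if_pos hadj, if_pos h', if_pos h]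
      rw [hg.inv u v hadj, mul_inv_cancel₀]
      intro h0
      have := hg.unit u v hadj
      rw [h0] at this
      simp at this
    · have h' : s(v, u) ∉ M := by rwa [Sym2.eq_swap]
      simp [matchMat, h, h']
  have : Matrix.trace (gainAdj G φ * matchMat M φ)
      = ∑ u : V, ∑ v : V, (if s(u, v) ∈ M then (1 : ℂ) else 0) := by
    simp only [Matrix.trace, Matrix.diag, Matrix.mul_apply]
    exact Finset.sum_congr rfl fun u _ => Finset.sum_congr rfl fun v _ => key u v
  rw [this, ← Finset.sum_product', Finset.sum_boole, matching_fiber_card M hnd]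
  push_cast
  ring

lemma matching_card_le_one {G : SimpleGraph V} {M : Finset (Sym2 V)}
    (hM : IsGraphMatching G M) (u : V) :
    (Finset.univ.filter fun v => s(u, v) ∈ M).card ≤ 1 := by
  rw [Finset.card_le_one]
  intro a ha b hb
  simp only [Finset.mem_filter] at ha hb
  by_contra hne
  have hef : s(u, a) ≠ s(u, b) := fun h => hne (Sym2.congr_right.mp h)
  exact hM.2 _ ha.2 _ hb.2 hef u (Sym2.mem_mk_left u a) (Sym2.mem_mk_left u b)

lemma quad_bound {G : SimpleGraph V} {M : Finset (Sym2 V)} (hM : IsGraphMatching G M)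
    (y : V → ℝ) (hnorm : ∑ u, y u ^ 2 ≤ 1) :
    ∑ u : V, ∑ v : V, (if s(u, v) ∈ M then y u * y v else 0) ≤ 1 := by
  have step1 : ∑ u : V, ∑ v : V, (if s(u, v) ∈ M then y u * y v else 0)
      ≤ ∑ u : V, ∑ v : V, (if s(u, v) ∈ M then (y u ^ 2 + y v ^ 2) / 2 else 0) := by
    refine Finset.sum_le_sum fun u _ => Finset.sum_le_sum fun v _ => ?_
    by_cases h : s(u, v) ∈ M
    · simp only [if_pos h]
      nlinarith [sq_nonneg (y u - y v)]
    · simp [h]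
  have split : ∀ u v : V, (if s(u, v) ∈ M then (y u ^ 2 + y v ^ 2) / 2 else 0)
      = (if s(u, v) ∈ M then y u ^ 2 / 2 else 0) + (if s(u, v) ∈ M then y v ^ 2 / 2 else 0) := by
    intro u v; by_cases h : s(u, v) ∈ M <;> simp [h]; ring
  have swap : ∑ u : V, ∑ v : V, (if s(u, v) ∈ M then y v ^ 2 / 2 else 0)
      = ∑ u : V, ∑ v : V, (if s(u, v) ∈ M then y u ^ 2 / 2 else 0) := by
    rw [Finset.sum_comm]
    refine Finset.sum_congr rfl fun u _ => Finset.sum_congr rfl fun v _ => ?_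
    rw [Sym2.eq_swap]
  have half : ∑ u : V, ∑ v : V, (if s(u, v) ∈ M then y u ^ 2 / 2 else 0) ≤ 1 / 2 := by
    have bnd : ∀ u : V, ∑ v : V, (if s(u, v) ∈ M then y u ^ 2 / 2 else 0) ≤ y u ^ 2 / 2 := by
      intro u
      rw [← Finset.sum_filter, Finset.sum_const, nsmul_eq_mul]
      have h1 := matching_card_le_one hM u
      have h2 : (0 : ℝ) ≤ y u ^ 2 / 2 := by positivity
      calc ((Finset.univ.filter fun v => s(u, v) ∈ M).card : ℝ) * (y u ^ 2 / 2)
          ≤ 1 * (y u ^ 2 / 2) := by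
            apply mul_le_mul_of_nonneg_right _ h2
            exact_mod_cast h1
        _ = y u ^ 2 / 2 := one_mul _
    calc ∑ u : V, ∑ v : V, (if s(u, v) ∈ M then y u ^ 2 / 2 else 0)
        ≤ ∑ u : V, y u ^ 2 / 2 := Finset.sum_le_sum fun u _ => bnd u
      _ = (∑ u : V, y u ^ 2) / 2 := by rw [Finset.sum_div]
      _ ≤ 1 / 2 := by linarith
  calc ∑ u : V, ∑ v : V, (if s(u, v) ∈ M then y u * y v else 0)
      ≤ ∑ u : V, ∑ v : V, (if s(u, v) ∈ M then (y u ^ 2 + y v ^ 2) / 2 else 0) := step1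
    _ = ∑ u : V, ∑ v : V, ((if s(u, v) ∈ M then y u ^ 2 / 2 else 0)
          + (if s(u, v) ∈ M then y v ^ 2 / 2 else 0)) := by
        refine Finset.sum_congr rfl fun u _ => Finset.sum_congr rfl fun v _ => split u v
    _ = ∑ u : V, ∑ v : V, (if s(u, v) ∈ M then y u ^ 2 / 2 else 0)
          + ∑ u : V, ∑ v : V, (if s(u, v) ∈ M then y v ^ 2 / 2 else 0) := by
        rw [← Finset.sum_add_distrib]
        exact Finset.sum_congr rfl fun u _ => Finset.sum_add_distrib
    _ ≤ 1 / 2 + 1 / 2 := by rw [swap]; linarith [half]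
    _ = 1 := by norm_num

lemma column_quad_bound {G : SimpleGraph V} {φ : V → V → ℂ} (hg : IsGain G φ)
    {M : Finset (Sym2 V)} (hM : IsGraphMatching G M) (x : V → ℂ)
    (hx : ∑ u, ‖x u‖ ^ 2 ≤ 1) :
    ‖∑ v : V, ∑ u : V, (starRingEnd ℂ) (x u) * matchMat M φ u v * x v‖ ≤ 1 := by
  have hBnorm : ∀ u v : V, ‖matchMat M φ u v‖ = if s(u, v) ∈ M then 1 else 0 := by
    intro u v
    by_cases h : s(u, v) ∈ M
    · have hadj : G.Adj u v := (G.mem_edgeSet).mp (hM.1 h)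
      simp only [matchMat, if_pos h]
      exact hg.unit u v hadj
    · simp [matchMat, h]
  calc ‖∑ v : V, ∑ u : V, (starRingEnd ℂ) (x u) * matchMat M φ u v * x v‖
      ≤ ∑ v : V, ∑ u : V, ‖(starRingEnd ℂ) (x u) * matchMat M φ u v * x v‖ := by
        refine (norm_sum_le _ _).trans (Finset.sum_le_sum fun v _ => norm_sum_le _ _)
    _ = ∑ v : V, ∑ u : V, (if s(u, v) ∈ M then ‖x u‖ * ‖x v‖ else 0) := by
        refine Finset.sum_congr rfl fun v _ => Finset.sum_congr rfl fun u _ => ?_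
        rw [norm_mul, norm_mul, RCLike.norm_conj, hBnorm u v]
        by_cases h : s(u, v) ∈ M <;> simp [h]
    _ = ∑ u : V, ∑ v : V, (if s(u, v) ∈ M then ‖x u‖ * ‖x v‖ else 0) := Finset.sum_comm
    _ ≤ 1 := quad_bound hM (fun u => ‖x u‖) hx

end EnergyAux

/-- the energy of a complex unit gain graph is at least twice the
matching number of its underlying graph. -/
theorem gainEnergy_ge_two_mul_matchingNumber [Fintype V] [DecidableEq V]
    (G : SimpleGraph V) (φ : V → V → ℂ) (hg : IsGain G φ) :
    2 * (matchingNumber G : ℝ) ≤ gainEnergy G φ hg := by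
  classical
  -- obtain a maximum matching
  have h0 : (0 : ℕ) ∈ {n | ∃ M : Finset (Sym2 V), IsGraphMatching G M ∧ M.card = n} :=
    ⟨∅, ⟨by simp, by simp⟩, rfl⟩
  have hbdd : BddAbove {n | ∃ M : Finset (Sym2 V), IsGraphMatching G M ∧ M.card = n} := by
    refine ⟨Fintype.card (Sym2 V), ?_⟩
    rintro n ⟨M, -, rfl⟩
    exact le_trans (Finset.card_le_univ M) (le_of_eq Finset.card_univ)
  obtain ⟨M, hM, hcard⟩ : ∃ M : Finset (Sym2 V), IsGraphMatching G M ∧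
      M.card = matchingNumber G := Nat.sSup_mem ⟨0, h0⟩ hbdd
  -- notation
  have hA := hg.isHermitian
  set A := gainAdj G φ with hA_def
  set B := matchMat M φ with hB_def
  set U : Matrix V V ℂ := (hA.eigenvectorUnitary : Matrix V V ℂ) with hU_def
  set C := star U * B * U with hC_def
  have hUstar : star U * U = 1 := Unitary.coe_star_mul_self hA.eigenvectorUnitary
  have hU2 : U * star U = 1 := Unitary.coe_mul_star_self hA.eigenvectorUnitary
  -- columns of U are unit vectors
  have hcol : ∀ i : V, ∑ u : V, ‖U u i‖ ^ 2 = 1 := by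
    intro i
    have h1 : (star U * U) i i = 1 := by rw [hUstar]; simp [Matrix.one_apply]
    rw [Matrix.mul_apply] at h1
    have h2 : ∀ u : V, (star U) i u * U u i = ((‖U u i‖ ^ 2 : ℝ) : ℂ) := by
      intro u
      rw [Matrix.star_apply, RCLike.star_def, RCLike.conj_mul]
      norm_cast
    rw [Finset.sum_congr rfl fun u _ => h2 u] at h1
    exact_mod_cast h1
  -- trace identity via the spectral theorem
  have e2 : star U * (A * B) * U = (star U * A * U) * C := by
    calc star U * (A * B) * U = star U * (A * ((U * star U) * (B * U))) := by
          rw [hU2]; simp only [Matrix.mul_assoc, Matrix.one_mul]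
      _ = (star U * A * U) * C := by rw [hC_def]; simp only [Matrix.mul_assoc]
  have e3 : Matrix.trace (star U * (A * B) * U) = Matrix.trace (A * B) := by
    rw [Matrix.trace_mul_comm, ← Matrix.mul_assoc, hU2, Matrix.one_mul]
  have htr : Matrix.trace (A * B)
      = ∑ i : V, ((hA.eigenvalues i : ℂ) * C i i) := by
    rw [← e3, e2, show star U * A * U = diagonal (RCLike.ofReal ∘ hA.eigenvalues) from by
      have h := hA.conjStarAlgAut_star_eigenvectorUnitary
      rw [Unitary.conjStarAlgAut_apply] at h
      simpa using h]
    simp only [Matrix.trace, Matrix.diag, Matrix.diagonal_mul, Function.comp_apply]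
    rfl
  -- bound on the diagonal entries of C
  have hCi : ∀ i : V, ‖C i i‖ ≤ 1 := by
    intro i
    have hCexp : C i i = ∑ v : V, ∑ u : V,
        (starRingEnd ℂ) (U u i) * B u v * U v i := by
      simp only [hC_def, Matrix.mul_apply, Matrix.star_apply, RCLike.star_def]
      exact Finset.sum_congr rfl fun v _ => Finset.sum_mul _ _ _
    rw [hCexp]
    exact column_quad_bound hg hM (fun u => U u i) (le_of_eq (hcol i))
  -- finish
  have hnormtr : ‖Matrix.trace (A * B)‖ = 2 * (M.card : ℝ) := by
    rw [trace_gainAdj_mul_matchMat hg hM]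
    simp
  have key : 2 * (M.card : ℝ) ≤ ∑ i : V, |hA.eigenvalues i| := by
    calc 2 * (M.card : ℝ) = ‖Matrix.trace (A * B)‖ := hnormtr.symm
      _ = ‖∑ i : V, ((hA.eigenvalues i : ℂ) * C i i)‖ := by rw [htr]
      _ ≤ ∑ i : V, ‖(hA.eigenvalues i : ℂ) * C i i‖ := norm_sum_le _ _
      _ ≤ ∑ i : V, |hA.eigenvalues i| := by
          refine Finset.sum_le_sum fun i _ => ?_
          rw [norm_mul, Complex.norm_real, Real.norm_eq_abs]
          calc |hA.eigenvalues i| * ‖C i i‖ ≤ |hA.eigenvalues i| * 1 :=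
                mul_le_mul_of_nonneg_left (hCi i) (abs_nonneg _)
            _ = |hA.eigenvalues i| := mul_one _
  rw [gainEnergy, ← hcard]
  exact_mod_cast key
end

section
/- Let Φ = (G, 𝕋, φ) be a complex unit gain graph. If Φ is balanced and G is the disjoint union of regular complete bipartite graphs K_{n₁,n₁}, …, K_{n_ω,n_ω} together with isolated vertices, then 𝓔(Φ) = 2μ(G) = 2(n₁ + ⋯ + n_ω). -/
open Matrix

variable {V : Type*}

open scoped ComplexOrder

section AuxEnergy
variable {W : Type*} [Fintype W] [DecidableEq W]

lemma myVecMulVec_mul (x y z w : W → ℂ) :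
    vecMulVec x y * vecMulVec z w = (y ⬝ᵥ z) • vecMulVec x w := by
  ext u v
  simp only [Matrix.mul_apply, vecMulVec_apply, Matrix.smul_apply, smul_eq_mul,
    dotProduct, Finset.sum_mul]
  exact Finset.sum_congr rfl fun k _ => by ring

lemma myPosSemidef_vecMulVec (x : W → ℂ) : (vecMulVec x (star x)).PosSemidef := by
  rw [vecMulVec_eq Unit, ← conjTranspose_replicateCol]
  exact posSemidef_self_mul_conjTranspose _

lemma myAuxTrace {A B : Matrix W W ℂ} (hA : A.IsHermitian) (hB : B.PosSemidef)
    (h : A ^ 2 = B ^ 2) :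
    B.trace = ((∑ i, |hA.eigenvalues i| : ℝ) : ℂ) := by
  set U : Matrix W W ℂ := (hA.eigenvectorUnitary : Matrix W W ℂ)
  have hU2 : star U * U = 1 := Matrix.mem_unitaryGroup_iff'.mp hA.eigenvectorUnitary.2
  set D : Matrix W W ℂ := Matrix.diagonal fun i => ((|hA.eigenvalues i| : ℝ) : ℂ)
  have hB' : (U * D * star U).PosSemidef := by
    rw [Matrix.star_eq_conjTranspose]
    refine Matrix.PosSemidef.mul_mul_conjTranspose_same ?_ U
    refine Matrix.PosSemidef.diagonal fun i => ?_
    simp only [Pi.zero_apply]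
    rw [Complex.zero_le_real]
    positivity
  have hDD : D * D = Matrix.diagonal (RCLike.ofReal ∘ hA.eigenvalues) *
      Matrix.diagonal (RCLike.ofReal ∘ hA.eigenvalues) := by
    rw [Matrix.diagonal_mul_diagonal, Matrix.diagonal_mul_diagonal]
    congr 1
    funext i
    simp only [Pi.mul_apply, Function.comp_apply]
    norm_cast
    simp [abs_mul_abs_self]
  have hsq : (U * D * star U) ^ 2 = B ^ 2 := by
    rw [← h]
    conv_rhs => rw [hA.spectral_theorem]
    rw [pow_two, pow_two]
    calc U * D * star U * (U * D * star U)
        = U * (D * ((star U * U) * (D * star U))) := by simp only [Matrix.mul_assoc]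
      _ = U * (D * D) * star U := by rw [hU2, one_mul]; simp only [Matrix.mul_assoc]
      _ = _ := by
          rw [hDD]
          set D0 := Matrix.diagonal (RCLike.ofReal ∘ hA.eigenvalues : W → ℂ)
          calc U * (D0 * D0) * star U = U * (D0 * ((star U * U) * (D0 * star U))) := by
                rw [hU2, one_mul]; rw [mul_assoc, mul_assoc]
            _ = U * D0 * star U * (U * D0 * star U) := by
                rw [mul_assoc, mul_assoc, mul_assoc, mul_assoc]
  have hBeq : U * D * star U = B := by
    open scoped MatrixOrder in exact (CFC.sq_eq_sq_iff _ _ hB'.nonneg hB.nonneg).mp hsq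
  rw [← hBeq, Matrix.trace_mul_cycle, hU2, one_mul, Matrix.trace_diagonal]
  push_cast
  rfl

lemma myPosSemidef_sum {ι : Type*} (s : Finset ι) (M : ι → Matrix W W ℂ)
    (h : ∀ i ∈ s, (M i).PosSemidef) : (∑ i ∈ s, M i).PosSemidef := by
  induction s using Finset.cons_induction with
  | empty => simpa using Matrix.PosSemidef.zero
  | cons i s hi ih =>
      rw [Finset.sum_cons]
      exact (h _ (Finset.mem_cons_self _ _)).add
        (ih fun j hj => h _ (Finset.mem_cons_of_mem hj))

end AuxEnergy

/-- if the gain graph is balanced and the underlying graph is the disjoint union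
of regular complete bipartite graphs `K_{n i, n i}` (with parts `X i`, `Y i` of size `n i`)
together with isolated vertices, then the energy equals twice the matching number, which is
the sum of the `n i`. -/



theorem gainEnergy_of_balanced_disjUnion [Fintype V] [DecidableEq V]
    (G : SimpleGraph V) (φ : V → V → ℂ) (hg : IsGain G φ)
    (hbal : IsBalanced G φ)
    (ι : Type) [Fintype ι] (X Y : ι → Finset V) (n : ι → ℕ)
    (hpos : ∀ i, 0 < n i)
    (hXcard : ∀ i, (X i).card = n i)
    (hYcard : ∀ i, (Y i).card = n i)
    (hXY : ∀ i, Disjoint (X i) (Y i))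
    (hdisj : ∀ i j : ι, ∀ u : V, u ∈ X i ∪ Y i → u ∈ X j ∪ Y j → i = j)
    (hadj : ∀ u v : V, G.Adj u v ↔ ∃ i, (u ∈ X i ∧ v ∈ Y i) ∨ (u ∈ Y i ∧ v ∈ X i)) :
    gainEnergy G φ hg = 2 * (matchingNumber G : ℝ) ∧ matchingNumber G = ∑ i, n i := by
  classical
  -- membership helpers
  have hXY' : ∀ {i j : ι} {v : V}, v ∈ X i → v ∈ Y j → False := by
    intro i j v hx hy
    have hij : i = j := hdisj i j v (Finset.mem_union_left _ hx) (Finset.mem_union_right _ hy)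
    subst hij
    exact (Finset.disjoint_left.mp (hXY i)) hx hy
  have hXX' : ∀ {i j : ι} {v : V}, v ∈ X i → v ∈ X j → i = j := fun hx hx' =>
    hdisj _ _ _ (Finset.mem_union_left _ hx) (Finset.mem_union_left _ hx')
  have hYY' : ∀ {i j : ι} {v : V}, v ∈ Y i → v ∈ Y j → i = j := fun hy hy' =>
    hdisj _ _ _ (Finset.mem_union_right _ hy) (Finset.mem_union_right _ hy')
  have hadjXY : ∀ {i : ι} {u v : V}, u ∈ X i → v ∈ Y i → G.Adj u v := fun hu hv =>
    (hadj _ _).mpr ⟨_, Or.inl ⟨hu, hv⟩⟩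
  have hadj_of_X : ∀ {i : ι} {u v : V}, u ∈ X i → G.Adj u v → v ∈ Y i := by
    intro i u v hu h
    obtain ⟨j, hj | hj⟩ := (hadj u v).mp h
    · rw [hXX' hu hj.1]; exact hj.2
    · exact absurd hj.1 fun h' => hXY' hu h'
  have hadj_of_Y : ∀ {i : ι} {u v : V}, u ∈ Y i → G.Adj u v → v ∈ X i := by
    intro i u v hu h
    obtain ⟨j, hj | hj⟩ := (hadj u v).mp h
    · exact absurd hj.1 fun h' => hXY' h' hu
    · rw [hYY' hu hj.1]; exact hj.2
  have hconj : ∀ {u v : V}, G.Adj u v → (starRingEnd ℂ) (φ u v) = φ v u := by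
    intro u v h
    rw [hg.inv u v h, Complex.inv_eq_conj (hg.unit u v h)]
  have hne0 : ∀ {u v : V}, G.Adj u v → φ u v ≠ 0 := by
    intro u v h h0
    simpa [h0] using hg.unit _ _ h
  have hXne : ∀ i, (X i).Nonempty := fun i => Finset.card_pos.mp (by rw [hXcard]; exact hpos i)
  have hYne : ∀ i, (Y i).Nonempty := fun i => Finset.card_pos.mp (by rw [hYcard]; exact hpos i)
  set x0 : ι → V := fun i => (hXne i).choose with hx0def
  have hx0 : ∀ i, x0 i ∈ X i := fun i => (hXne i).choose_spec
  set y0 : ι → V := fun i => (hYne i).choose with hy0def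
  have hy0 : ∀ i, y0 i ∈ Y i := fun i => (hYne i).choose_spec
  -- 4-cycle balance
  have hbal4 : ∀ {i : ι} {u v u' v' : V}, u ∈ X i → v ∈ Y i → u' ∈ X i → v' ∈ Y i →
      φ u v * φ v u' * φ u' v' * φ v' u = 1 := by
    intro i u v u' v' hu hv hu' hv'
    have h1 : G.Adj u v := hadjXY hu hv
    have h2 : G.Adj u' v := hadjXY hu' hv
    have h3 : G.Adj u' v' := hadjXY hu' hv'
    have h4 : G.Adj u v' := hadjXY hu hv'
    by_cases huu : u = u'
    · subst huu
      by_cases hvv : v = v'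
      · subst hvv
        rw [hg.inv u v h1]
        field_simp [hne0 h1]
      · rw [hg.inv u v h1, hg.inv u v' h4]
        rw [mul_inv_cancel₀ (hne0 h1), one_mul, mul_inv_cancel₀ (hne0 h4)]
    · by_cases hvv : v = v'
      · subst hvv
        rw [hg.inv u' v h2, hg.inv u v h1]
        field_simp [hne0 h1, hne0 h2]
      · -- genuine 4-cycle u → v → u' → v' → u
        have huv : u ≠ v := fun h => hXY' hu (h ▸ hv)
        have huv' : u ≠ v' := fun h => hXY' hu (h ▸ hv')
        have hu'v : u' ≠ v := fun h => hXY' hu' (h ▸ hv)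
        have hu'v' : u' ≠ v' := fun h => hXY' hu' (h ▸ hv')
        let w : G.Walk u u :=
          .cons h1 (.cons h2.symm (.cons h3 (.cons h4.symm .nil)))
        have hc : w.IsCycle := by
          rw [SimpleGraph.Walk.isCycle_def]
          refine ⟨?_, by simp [w], ?_⟩
          · rw [SimpleGraph.Walk.isTrail_def]
            simp only [w, SimpleGraph.Walk.edges_cons, SimpleGraph.Walk.edges_nil,
              List.nodup_cons, List.mem_cons, List.not_mem_nil, or_false, List.nodup_nil,
              and_true, Sym2.eq, Sym2.rel_iff', Prod.mk.injEq, Prod.swap_prod_mk]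
            push_neg
            exact ⟨⟨⟨fun _ h => hu'v h.symm, huu⟩, ⟨fun _ => hvv, fun _ h => hu'v h.symm⟩,
              ⟨fun _ h => huv h.symm, fun _ => hvv⟩⟩,
              ⟨⟨fun _ => hu'v', hvv⟩, ⟨fun _ h => huu h.symm, fun _ => hu'v'⟩⟩,
              ⟨fun _ h => huv' h.symm, fun h => huu h.symm⟩, trivial⟩
          · simp only [w, SimpleGraph.Walk.support_cons, SimpleGraph.Walk.support_nil,
              List.tail_cons, List.nodup_cons, List.mem_cons, List.not_mem_nil, or_false,
              List.nodup_nil, and_true, List.mem_singleton]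
            push_neg
            exact ⟨⟨fun h => hu'v h.symm, hvv, fun h => huv h.symm⟩,
              ⟨hu'v', fun h => huu h.symm⟩, fun h => huv' h.symm, trivial⟩
        have hg1 := hbal u w hc
        have hwg : walkGain φ w = φ u v * φ v u' * φ u' v' * φ v' u := by
          simp [walkGain, w]
          ring
        rw [hwg] at hg1
        exact hg1
  -- switching function
  set f : V → ℂ := fun v =>
    if hx : ∃ i, v ∈ X i then φ v (y0 hx.choose)
    else if hy : ∃ i, v ∈ Y i then φ v (x0 hy.choose) * φ (x0 hy.choose) (y0 hy.choose)
    else 1 with hfdef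
  have hfX : ∀ {i : ι} {v : V}, v ∈ X i → f v = φ v (y0 i) := by
    intro i v hv
    have hx : ∃ j, v ∈ X j := ⟨i, hv⟩
    have hch : hx.choose = i := hXX' hx.choose_spec hv
    simp only [hfdef, dif_pos hx, hch]
  have hfY : ∀ {i : ι} {v : V}, v ∈ Y i → f v = φ v (x0 i) * φ (x0 i) (y0 i) := by
    intro i v hv
    have hx : ¬ ∃ j, v ∈ X j := fun ⟨j, hj⟩ => hXY' hj hv
    have hy : ∃ j, v ∈ Y j := ⟨i, hv⟩
    have hch : hy.choose = i := hYY' hy.choose_spec hv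
    simp only [hfdef, dif_neg hx, dif_pos hy, hch]
  have hfXunit : ∀ {i : ι} {v : V}, v ∈ X i → ‖f v‖ = 1 := by
    intro i v hv
    rw [hfX hv]
    exact hg.unit _ _ (hadjXY hv (hy0 i))
  have hfYunit : ∀ {i : ι} {v : V}, v ∈ Y i → ‖f v‖ = 1 := by
    intro i v hv
    rw [hfY hv, norm_mul, hg.unit _ _ (hadjXY (hx0 i) hv).symm,
      hg.unit _ _ (hadjXY (hx0 i) (hy0 i)), one_mul]
  have hkey : ∀ {i : ι} {u v : V}, u ∈ X i → v ∈ Y i →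
      φ u v = f u * (starRingEnd ℂ) (f v) := by
    intro i u v hu hv
    rw [hfX hu, hfY hv]
    have h4 := hbal4 hu hv (hx0 i) (hy0 i)
    have e1 : G.Adj u v := hadjXY hu hv
    have e2 : G.Adj (x0 i) v := hadjXY (hx0 i) hv
    have e3 : G.Adj (x0 i) (y0 i) := hadjXY (hx0 i) (hy0 i)
    have e4 : G.Adj u (y0 i) := hadjXY hu (hy0 i)
    rw [_root_.map_mul, hconj e2.symm, hconj e3]
    -- goal : φ u v = φ u (y0 i) * (φ (x0 i) v * φ (y0 i) (x0 i))
    rw [hg.inv _ _ e2, hg.inv _ _ e4] at h4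
    -- h4 : φ u v * (φ (x0 i) v)⁻¹ * φ (x0 i) (y0 i) * (φ u (y0 i))⁻¹ = 1
    rw [hg.inv _ _ e3]
    field_simp [hne0 e2, hne0 e4, hne0 e3] at h4 ⊢
    linear_combination h4
  have hkey' : ∀ {i : ι} {u v : V}, u ∈ Y i → v ∈ X i →
      φ u v = f u * (starRingEnd ℂ) (f v) := by
    intro i u v hu hv
    have e : G.Adj v u := hadjXY hv hu
    rw [← hconj e, hkey hv hu, _root_.map_mul, Complex.conj_conj, mul_comm]
  -- indicator vectors
  set a : ι → V → ℂ := fun i v => if v ∈ X i then f v else 0 with hadef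
  set b : ι → V → ℂ := fun i v => if v ∈ Y i then f v else 0 with hbdef
  have hfunit : ∀ {i : ι} {v : V}, v ∈ X i ∨ v ∈ Y i → (starRingEnd ℂ) (f v) * f v = 1 := by
    intro i v hv
    have habs : ‖f v‖ = 1 := hv.elim (fun h => hfXunit h) (fun h => hfYunit h)
    rw [mul_comm, Complex.mul_conj, Complex.normSq_eq_norm_sq, habs]
    norm_num
  have hdot_aa : ∀ i j, star (a i) ⬝ᵥ a j = if i = j then (n i : ℂ) else 0 := by
    intro i j
    have hterm : ∀ v, star (a i) v * a j v
        = if v ∈ X i ∧ v ∈ X j then (starRingEnd ℂ) (f v) * f v else 0 := by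
      intro v
      show (starRingEnd ℂ) (a i v) * a j v = _
      by_cases h1 : v ∈ X i <;> by_cases h2 : v ∈ X j <;> simp [hadef, h1, h2]
    rw [dotProduct]
    simp only [hterm]
    by_cases hij : i = j
    · subst hij
      rw [if_pos rfl]
      simp only [and_self]
      rw [Finset.sum_ite_mem, Finset.univ_inter,
        Finset.sum_congr rfl (fun v hv => hfunit (Or.inl hv)), Finset.sum_const, hXcard]
      simp
    · rw [if_neg hij]
      apply Finset.sum_eq_zero
      intro v _
      rw [if_neg]
      rintro ⟨h1, h2⟩
      exact hij (hXX' h1 h2)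
  have hdot_bb : ∀ i j, star (b i) ⬝ᵥ b j = if i = j then (n i : ℂ) else 0 := by
    intro i j
    have hterm : ∀ v, star (b i) v * b j v
        = if v ∈ Y i ∧ v ∈ Y j then (starRingEnd ℂ) (f v) * f v else 0 := by
      intro v
      show (starRingEnd ℂ) (b i v) * b j v = _
      by_cases h1 : v ∈ Y i <;> by_cases h2 : v ∈ Y j <;> simp [hbdef, h1, h2]
    rw [dotProduct]
    simp only [hterm]
    by_cases hij : i = j
    · subst hij
      rw [if_pos rfl]
      simp only [and_self]
      rw [Finset.sum_ite_mem, Finset.univ_inter,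
        Finset.sum_congr rfl (fun v hv => hfunit (Or.inr hv)), Finset.sum_const, hYcard]
      simp
    · rw [if_neg hij]
      apply Finset.sum_eq_zero
      intro v _
      rw [if_neg]
      rintro ⟨h1, h2⟩
      exact hij (hYY' h1 h2)
  have hdot_ab : ∀ i j, star (a i) ⬝ᵥ b j = 0 := by
    intro i j
    rw [dotProduct]
    apply Finset.sum_eq_zero
    intro v _
    show (starRingEnd ℂ) (a i v) * b j v = 0
    by_cases h1 : v ∈ X i
    · by_cases h2 : v ∈ Y j
      · exact absurd (hXY' h1 h2) not_false
      · simp [hbdef, h2]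
    · simp [hadef, h1]
  have hdot_ba : ∀ i j, star (b i) ⬝ᵥ a j = 0 := by
    intro i j
    rw [dotProduct]
    apply Finset.sum_eq_zero
    intro v _
    show (starRingEnd ℂ) (b i v) * a j v = 0
    by_cases h1 : v ∈ Y i
    · by_cases h2 : v ∈ X j
      · exact absurd (hXY' h2 h1) not_false
      · simp [hadef, h2]
    · simp [hbdef, h1]
  -- matrix identities
  set A : Matrix V V ℂ := gainAdj G φ with hAdef
  set B : Matrix V V ℂ :=
    ∑ i, (vecMulVec (a i) (star (a i)) + vecMulVec (b i) (star (b i))) with hBdef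
  have hterm : ∀ (x y : V → ℂ) (u v : V),
      (vecMulVec x (star y)) u v = x u * (starRingEnd ℂ) (y v) := fun _ _ _ _ => rfl
  have hAeq : A = ∑ i, (vecMulVec (a i) (star (b i)) + vecMulVec (b i) (star (a i))) := by
    ext u v
    rw [Matrix.sum_apply]
    by_cases h : G.Adj u v
    · obtain ⟨i, hi | hi⟩ := (hadj u v).mp h
      · rw [Finset.sum_eq_single i]
        · rw [Matrix.add_apply, hterm, hterm]
          have h1 : a i u = f u := if_pos hi.1
          have h2 : b i v = f v := if_pos hi.2
          have h3 : b i u = (0:ℂ) := if_neg (fun hc => hXY' hi.1 hc)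
          rw [h1, h2, h3, zero_mul, add_zero, hAdef]
          show (if G.Adj u v then φ u v else 0) = _
          rw [if_pos h, hkey hi.1 hi.2]
        · intro j _ hj
          rw [Matrix.add_apply, hterm, hterm]
          have h1 : a j u = (0:ℂ) := if_neg (fun hc => hj (hXX' hc hi.1))
          have h3 : b j u = (0:ℂ) := if_neg (fun hc => hXY' hi.1 hc)
          rw [h1, h3, zero_mul, zero_mul, add_zero]
        · intro hmem
          exact absurd (Finset.mem_univ i) hmem
      · rw [Finset.sum_eq_single i]
        · rw [Matrix.add_apply, hterm, hterm]
          have h1 : b i u = f u := if_pos hi.1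
          have h2 : a i v = f v := if_pos hi.2
          have h3 : a i u = (0:ℂ) := if_neg (fun hc => hXY' hc hi.1)
          rw [h1, h2, h3, zero_mul, zero_add, hAdef]
          show (if G.Adj u v then φ u v else 0) = _
          rw [if_pos h, hkey' hi.1 hi.2]
        · intro j _ hj
          rw [Matrix.add_apply, hterm, hterm]
          have h1 : a j u = (0:ℂ) := if_neg (fun hc => hXY' hc hi.1)
          have h3 : b j u = (0:ℂ) := if_neg (fun hc => hj (hYY' hc hi.1))
          rw [h1, h3, zero_mul, zero_mul, add_zero]
        · intro hmem
          exact absurd (Finset.mem_univ i) hmem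
    · have hA0 : A u v = 0 := by
        rw [hAdef]
        show (if G.Adj u v then φ u v else 0) = 0
        rw [if_neg h]
      rw [hA0]
      symm
      apply Finset.sum_eq_zero
      intro j _
      rw [Matrix.add_apply, hterm, hterm]
      have hz1 : a j u * (starRingEnd ℂ) (b j v) = 0 := by
        by_cases hu : u ∈ X j
        · by_cases hv : v ∈ Y j
          · exact absurd (hadjXY hu hv) h
          · simp [hbdef, hv]
        · simp [hadef, hu]
      have hz2 : b j u * (starRingEnd ℂ) (a j v) = 0 := by
        by_cases hu : u ∈ Y j
        · by_cases hv : v ∈ X j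
          · exact absurd ((hadjXY hv hu).symm) h
          · simp [hadef, hv]
        · simp [hbdef, hu]
      rw [hz1, hz2, add_zero]
  have hAsq : A * A
      = ∑ i, (n i : ℂ) • (vecMulVec (a i) (star (a i)) + vecMulVec (b i) (star (b i))) := by
    rw [hAeq, Finset.sum_mul_sum]
    apply Finset.sum_congr rfl
    intro i _
    rw [Finset.sum_eq_single i]
    · simp only [add_mul, mul_add, myVecMulVec_mul, hdot_aa, hdot_ab, hdot_ba, hdot_bb,
        if_pos rfl]
      simp [smul_add]
      try abel
    · intro j _ hj
      simp only [add_mul, mul_add, myVecMulVec_mul, hdot_aa, hdot_ab, hdot_ba, hdot_bb,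
        if_neg (fun hc : i = j => hj hc.symm)]
      simp
    · intro hmem
      exact absurd (Finset.mem_univ i) hmem
  have hBsq : B * B
      = ∑ i, (n i : ℂ) • (vecMulVec (a i) (star (a i)) + vecMulVec (b i) (star (b i))) := by
    rw [hBdef, Finset.sum_mul_sum]
    apply Finset.sum_congr rfl
    intro i _
    rw [Finset.sum_eq_single i]
    · simp only [add_mul, mul_add, myVecMulVec_mul, hdot_aa, hdot_ab, hdot_ba, hdot_bb,
        if_pos rfl]
      simp [smul_add]
      try abel
    · intro j _ hj
      simp only [add_mul, mul_add, myVecMulVec_mul, hdot_aa, hdot_ab, hdot_ba, hdot_bb,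
        if_neg (fun hc : i = j => hj hc.symm)]
      simp
    · intro hmem
      exact absurd (Finset.mem_univ i) hmem
  have hABsq : A ^ 2 = B ^ 2 := by rw [pow_two, pow_two, hAsq, hBsq]
  have hBpsd : B.PosSemidef := by
    rw [hBdef]
    exact myPosSemidef_sum _ _ fun i _ =>
      (myPosSemidef_vecMulVec (a i)).add (myPosSemidef_vecMulVec (b i))
  have htrace : B.trace = ((2 * ∑ i, (n i : ℝ) : ℝ) : ℂ) := by
    rw [hBdef, Matrix.trace_sum]
    have h1 : ∀ i, (vecMulVec (a i) (star (a i)) + vecMulVec (b i) (star (b i))).trace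
        = 2 * (n i : ℂ) := by
      intro i
      rw [Matrix.trace_add]
      have t1 : (vecMulVec (a i) (star (a i))).trace = star (a i) ⬝ᵥ a i := by
        simp only [Matrix.trace, Matrix.diag, vecMulVec_apply, dotProduct]
        exact Finset.sum_congr rfl fun v _ => mul_comm _ _
      have t2 : (vecMulVec (b i) (star (b i))).trace = star (b i) ⬝ᵥ b i := by
        simp only [Matrix.trace, Matrix.diag, vecMulVec_apply, dotProduct]
        exact Finset.sum_congr rfl fun v _ => mul_comm _ _
      rw [t1, t2, hdot_aa, hdot_bb]
      simp
      ring
    rw [Finset.sum_congr rfl fun i _ => h1 i]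
    push_cast
    rw [Finset.mul_sum]
  have hE := myAuxTrace hg.isHermitian hBpsd hABsq
  have hEnergy : gainEnergy G φ hg = 2 * ∑ i, (n i : ℝ) := by
    have h0 : gainEnergy G φ hg = ∑ i, |hg.isHermitian.eigenvalues i| := rfl
    have h2 : ((∑ i, |hg.isHermitian.eigenvalues i| : ℝ) : ℂ)
        = ((2 * ∑ i, (n i : ℝ) : ℝ) : ℂ) := by rw [← hE, htrace]
    rw [h0]
    exact_mod_cast h2
  -- matching of size ∑ n
  have hcardXY : ∀ i, (X i).card = (Y i).card := fun i => by rw [hXcard, hYcard]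
  set σ : ι → V → V := fun i v =>
    if h : v ∈ X i then ((Finset.equivOfCardEq (hcardXY i)) ⟨v, h⟩ : V) else v with hσdef
  have hσY : ∀ {i : ι} {v : V}, v ∈ X i → σ i v ∈ Y i := by
    intro i v hv
    simp only [hσdef, dif_pos hv]
    exact ((Finset.equivOfCardEq (hcardXY i)) ⟨v, hv⟩).2
  have hσinj : ∀ {i : ι} {u v : V}, u ∈ X i → v ∈ X i → σ i u = σ i v → u = v := by
    intro i u v hu hv h
    simp only [hσdef, dif_pos hu, dif_pos hv] at h
    have h2 := (Finset.equivOfCardEq (hcardXY i)).injective (Subtype.coe_injective h)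
    exact congrArg Subtype.val h2
  set M0 : Finset (Sym2 V) :=
    Finset.univ.biUnion (fun i => (X i).image fun v => s(v, σ i v)) with hM0def
  have hM0mem : ∀ e : Sym2 V, e ∈ M0 ↔ ∃ i, ∃ v ∈ X i, e = s(v, σ i v) := by
    intro e
    simp [hM0def, eq_comm]
  have hM0match : IsGraphMatching G M0 := by
    constructor
    · intro e he
      obtain ⟨i, v, hv, rfl⟩ := (hM0mem e).mp (Finset.mem_coe.mp he)
      exact (SimpleGraph.mem_edgeSet G).mpr (hadjXY hv (hσY hv))
    · intro e he f' hf' hnef v hve hvf'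
      obtain ⟨i, x, hx, rfl⟩ := (hM0mem e).mp he
      obtain ⟨j, x', hx', rfl⟩ := (hM0mem f').mp hf'
      rw [Sym2.mem_iff] at hve hvf'
      rcases hve with rfl | rfl <;> rcases hvf' with h | h
      · subst h
        have hij : i = j := hXX' hx hx'
        subst hij
        exact hnef rfl
      · exact hXY' hx (h ▸ hσY hx')
      · exact hXY' hx' (h ▸ hσY hx)
      · have hij : i = j := hYY' (hσY hx) (by rw [h]; exact hσY hx')
        subst hij
        have hxx : x = x' := hσinj hx hx' h
        subst hxx
        exact hnef rfl
  have hM0card : M0.card = ∑ i, n i := by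
    rw [hM0def, Finset.card_biUnion]
    · apply Finset.sum_congr rfl
      intro i _
      rw [Finset.card_image_of_injOn, hXcard]
      intro u hu v hv h
      rcases Sym2.eq_iff.mp h with ⟨h1, _⟩ | ⟨h1, _⟩
      · exact h1
      · exact absurd (h1 ▸ hσY (Finset.mem_coe.mp hv)) fun hc =>
          hXY' (Finset.mem_coe.mp hu) hc
    · intro i _ j _ hij
      rw [Function.onFun, Finset.disjoint_left]
      intro e he1 he2
      obtain ⟨v, hv, rfl⟩ := Finset.mem_image.mp he1
      obtain ⟨v', hv', heq⟩ := Finset.mem_image.mp he2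
      rcases Sym2.eq_iff.mp heq with ⟨h1, _⟩ | ⟨h1, h2⟩
      · exact hij (hXX' (h1 ▸ hv') hv).symm
      · exact hXY' hv (h2.symm ▸ hσY hv')
  have hupper : ∀ M : Finset (Sym2 V), IsGraphMatching G M → M.card ≤ ∑ i, n i := by
    intro M hM
    obtain ⟨hMsub, hMdisj⟩ := hM
    have hexists : ∀ e : Sym2 V, e ∈ M → ∃ v, v ∈ e ∧ ∃ i, v ∈ X i := by
      intro e
      induction e using Sym2.ind with
      | _ u v =>
        intro he
        have hadj' : G.Adj u v := (SimpleGraph.mem_edgeSet G).mp (hMsub (Finset.mem_coe.mpr he))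
        obtain ⟨i, hi | hi⟩ := (hadj u v).mp hadj'
        · exact ⟨u, Sym2.mem_mk_left _ _, i, hi.1⟩
        · exact ⟨v, Sym2.mem_mk_right _ _, i, hi.2⟩
    choose ρ hρ1 hρ2 using hexists
    calc M.card = M.attach.card := Finset.card_attach.symm
      _ ≤ (Finset.univ.biUnion X).card := by
          apply Finset.card_le_card_of_injOn (fun e => ρ e.1 e.2)
          · intro e _
            obtain ⟨i, hi⟩ := hρ2 e.1 e.2
            exact Finset.mem_biUnion.mpr ⟨i, Finset.mem_univ i, hi⟩
          · intro e _ e' _ h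
            simp only at h
            by_contra hne
            have hne' : e.1 ≠ e'.1 := fun hc => hne (Subtype.ext hc)
            exact hMdisj e.1 e.2 e'.1 e'.2 hne' (ρ e.1 e.2) (hρ1 e.1 e.2)
              (by rw [h]; exact hρ1 e'.1 e'.2)
      _ ≤ ∑ i, (X i).card := Finset.card_biUnion_le
      _ = ∑ i, n i := by simp [hXcard]
  have hMN : matchingNumber G = ∑ i, n i := by
    apply IsGreatest.csSup_eq
    constructor
    · exact ⟨M0, hM0match, hM0card⟩
    · rintro m ⟨M, hM, rfl⟩
      exact hupper M hM
  refine ⟨?_, hMN⟩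
  rw [hEnergy, hMN]
  push_cast
  ring
end

section
/- Let Φ = (G, 𝕋, φ) be a complex unit gain graph and let S be an edge cut of G. Then 𝓔(G − S, 𝕋, φ) ≤ 𝓔(Φ), where (G − S, 𝕋, φ) is the complex unit gain graph obtained by deleting the edges of S from G and restricting the gain function. -/
open Matrix

variable {V : Type*}

section Aux
variable {V : Type*} [Fintype V] [DecidableEq V]


lemma trace_core (U P : Matrix V V ℂ) (l : V → ℝ) (s : V → ℂ) :
    (U * Matrix.diagonal (fun i => (l i : ℂ)) * star U * (P * Matrix.diagonal s * star P)).trace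
      = ∑ i, ∑ j, (l i : ℂ) * (s j * ((star U * P) i j * star ((star U * P) i j))) := by
  set L := Matrix.diagonal (fun i => (l i : ℂ)) with hL
  set S := Matrix.diagonal s with hS
  set Q := star U * P with hQdef
  have hQs : star Q = star P * U := by
    rw [hQdef, Matrix.star_mul, star_star]
  rw [show U * L * star U * (P * S * star P) = U * (L * (Q * S * star P)) from by
    rw [hQdef]; simp only [Matrix.mul_assoc]]
  rw [Matrix.trace_mul_comm]
  rw [show L * (Q * S * star P) * U = L * (Q * S * star Q) from by
    rw [hQs]; simp only [Matrix.mul_assoc]]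
  rw [Matrix.trace]
  refine Finset.sum_congr rfl fun i _ => ?_
  have h1 : (L * (Q * S * star Q)).diag i = (l i : ℂ) * ((Q * S * star Q) i i) := by
    rw [Matrix.diag_apply, hL, Matrix.diagonal_mul]
  rw [h1, Matrix.mul_apply, Finset.mul_sum]
  refine Finset.sum_congr rfl fun j _ => ?_
  rw [hS, Matrix.mul_diagonal, Matrix.star_apply, hQdef]
  ring

lemma qsum {Q : Matrix V V ℂ} (hQ : Q ∈ Matrix.unitaryGroup V ℂ) (i : V) :
    ∑ j, Complex.normSq (Q i j) = 1 := by
  have h1 : (Q * star Q) i i = 1 := by rw [Matrix.mem_unitaryGroup_iff.mp hQ]; simp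
  have h2 : ∑ j, (Complex.normSq (Q i j) : ℂ) = 1 := by
    simpa [Matrix.mul_apply, Matrix.star_apply, Complex.star_def, Complex.mul_conj] using h1
  exact_mod_cast h2

lemma trace_re_le {U P : Matrix V V ℂ} (hU : U ∈ Matrix.unitaryGroup V ℂ)
    (hP : P ∈ Matrix.unitaryGroup V ℂ) (l : V → ℝ) (s : V → ℂ)
    (hs : ∀ j, ‖s j‖ ≤ 1) :
    (U * Matrix.diagonal (fun i => (l i : ℂ)) * star U *
      (P * Matrix.diagonal s * star P)).trace.re ≤ ∑ i, |l i| := by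
  rw [trace_core]
  have hQ : star U * P ∈ Matrix.unitaryGroup V ℂ :=
    mul_mem (Unitary.star_mem hU) hP
  set Q := star U * P with hQdef
  rw [Complex.re_sum]
  refine Finset.sum_le_sum fun i _ => ?_
  rw [Complex.re_sum]
  have key : ∀ j, ((l i : ℂ) * (s j * (Q i j * star (Q i j)))).re
      ≤ |l i| * Complex.normSq (Q i j) := by
    intro j
    rw [Complex.star_def, Complex.mul_conj]
    have h1 : ((l i : ℂ) * (s j * (Complex.normSq (Q i j) : ℂ))).re
        = l i * (s j).re * Complex.normSq (Q i j) := by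
      simp [Complex.mul_re, Complex.mul_im]; ring
    rw [h1]
    have h2 : |l i * (s j).re * Complex.normSq (Q i j)|
        ≤ |l i| * Complex.normSq (Q i j) := by
      rw [abs_mul, abs_mul, abs_of_nonneg (Complex.normSq_nonneg _)]
      have h3 : |(s j).re| ≤ 1 := le_trans (Complex.abs_re_le_norm _) (hs j)
      have h4 : |(s j).re| * Complex.normSq (Q i j) ≤ Complex.normSq (Q i j) := by
        nlinarith [Complex.normSq_nonneg (Q i j)]
      calc |l i| * |(s j).re| * Complex.normSq (Q i j)
          = |l i| * (|(s j).re| * Complex.normSq (Q i j)) := mul_assoc _ _ _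
        _ ≤ |l i| * Complex.normSq (Q i j) :=
            mul_le_mul_of_nonneg_left h4 (abs_nonneg _)
    exact le_trans (le_abs_self _) h2
  calc ∑ j, ((l i : ℂ) * (s j * (Q i j * star (Q i j)))).re
      ≤ ∑ j, |l i| * Complex.normSq (Q i j) := Finset.sum_le_sum fun j _ => key j
    _ = |l i| * ∑ j, Complex.normSq (Q i j) := by rw [Finset.mul_sum]
    _ = |l i| := by rw [qsum hQ]; ring

lemma trace_eq {U : Matrix V V ℂ} (hU : U ∈ Matrix.unitaryGroup V ℂ) (l : V → ℝ) :
    (U * Matrix.diagonal (fun i => (l i : ℂ)) * star U *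
      (U * Matrix.diagonal (fun i => if 0 ≤ l i then (1:ℂ) else -1) * star U)).trace
      = ((∑ i, |l i| : ℝ) : ℂ) := by
  rw [trace_core]
  have h1 : star U * U = 1 := Matrix.mem_unitaryGroup_iff'.mp hU
  rw [h1]
  push_cast
  refine Finset.sum_congr rfl fun i _ => ?_
  rw [Finset.sum_eq_single i]
  · simp only [Matrix.one_apply_eq]
    by_cases h : 0 ≤ l i
    · simp [h, abs_of_nonneg h]
    · simp [h, abs_of_neg (lt_of_not_ge h)]
  · intro j _ hj
    simp [Matrix.one_apply_ne' hj]
  · simp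

lemma diag_unitary {d : V → ℂ} (hd : ∀ v, d v = 1 ∨ d v = -1) :
    Matrix.diagonal d ∈ Matrix.unitaryGroup V ℂ := by
  rw [Matrix.mem_unitaryGroup_iff]
  rw [Matrix.star_eq_conjTranspose, Matrix.diagonal_conjTranspose, Matrix.diagonal_mul_diagonal]
  ext i j
  rcases hd j with h | h <;> by_cases hij : i = j <;>
    simp [Matrix.diagonal_apply, hij, h, Matrix.one_apply]

lemma diag_star {d : V → ℂ} (hd : ∀ v, d v = 1 ∨ d v = -1) :
    star (Matrix.diagonal d) = Matrix.diagonal d := by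
  rw [Matrix.star_eq_conjTranspose, Matrix.diagonal_conjTranspose]
  have h1 : star d = d := funext fun v => by
    rcases hd v with h | h <;> simp [h, Pi.star_apply]
  rw [h1]

lemma energy_key {A B : Matrix V V ℂ} (hA : A.IsHermitian) (hB : B.IsHermitian)
    (d : V → ℂ) (hd : ∀ v, d v = 1 ∨ d v = -1)
    (hAB : B + B = A + Matrix.diagonal d * A * Matrix.diagonal d) :
    ∑ i, |hB.eigenvalues i| ≤ ∑ i, |hA.eigenvalues i| := by
  set UB : Matrix V V ℂ := (Matrix.IsHermitian.eigenvectorUnitary hB : Matrix V V ℂ) with hUB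
  set UA : Matrix V V ℂ := (Matrix.IsHermitian.eigenvectorUnitary hA : Matrix V V ℂ) with hUA
  have hUBm : UB ∈ Matrix.unitaryGroup V ℂ := (Matrix.IsHermitian.eigenvectorUnitary hB).2
  have hUAm : UA ∈ Matrix.unitaryGroup V ℂ := (Matrix.IsHermitian.eigenvectorUnitary hA).2
  set μ := hB.eigenvalues with hμ
  set lam := hA.eigenvalues with hlam
  set s : V → ℂ := fun i => if 0 ≤ μ i then (1:ℂ) else -1 with hs
  set C : Matrix V V ℂ := UB * Matrix.diagonal s * star UB with hC
  have hBspec : B = UB * Matrix.diagonal (fun i => (μ i : ℂ)) * star UB := by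
    have := hB.spectral_theorem
    rw [Unitary.conjStarAlgAut_apply] at this
    exact this
  have hAspec : A = UA * Matrix.diagonal (fun i => (lam i : ℂ)) * star UA := by
    have := hA.spectral_theorem
    rw [Unitary.conjStarAlgAut_apply] at this
    exact this
  set D : Matrix V V ℂ := Matrix.diagonal d with hD
  have hDAD : D * A * D = (D * UA) * Matrix.diagonal (fun i => (lam i : ℂ)) * star (D * UA) := by
    rw [Matrix.star_mul, diag_star hd, hAspec]
    simp only [Matrix.mul_assoc]
    rfl
  have hDU : D * UA ∈ Matrix.unitaryGroup V ℂ := mul_mem (diag_unitary hd) hUAm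
  -- trace computations
  have t1 : (B * C).trace = ((∑ i, |μ i| : ℝ) : ℂ) := by
    rw [hBspec, hC]; exact trace_eq hUBm μ
  have t2 : (A * C).trace.re ≤ ∑ i, |lam i| := by
    rw [hAspec, hC]
    exact trace_re_le hUAm hUBm lam s (fun j => by
      rcases le_or_gt 0 (μ j) with h | h
      · simp [hs, if_pos h]
      · simp [hs, if_neg (not_le.mpr h)])
  have t3 : ((D * A * D) * C).trace.re ≤ ∑ i, |lam i| := by
    rw [hDAD, hC]
    exact trace_re_le hDU hUBm lam s (fun j => by
      rcases le_or_gt 0 (μ j) with h | h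
      · simp [hs, if_pos h]
      · simp [hs, if_neg (not_le.mpr h)])
  have main : ((B + B) * C).trace = ((A * C).trace + ((D * A * D) * C).trace) := by
    rw [hAB, Matrix.add_mul, Matrix.trace_add]
  have lhs : ((B + B) * C).trace.re = 2 * ∑ i, |μ i| := by
    rw [Matrix.add_mul, Matrix.trace_add, t1]
    push_cast
    simp
    ring
  have : 2 * ∑ i, |μ i| ≤ 2 * ∑ i, |lam i| := by
    rw [← lhs, main]
    rw [Complex.add_re]
    linarith
  linarith

end Aux

/-- deleting an edge cut does not increase the energy of a complex unit
gain graph. -/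
theorem gainEnergy_deleteEdges_le [Fintype V] [DecidableEq V]
    (G : SimpleGraph V) (φ : V → V → ℂ) (hg : IsGain G φ)
    (S : Set (Sym2 V)) (hne : S.Nonempty)
    (hcut : ∃ W : Set V, ∀ u v : V, s(u, v) ∈ S ↔ G.Adj u v ∧ (u ∈ W ↔ v ∉ W)) :
    gainEnergy (G.deleteEdges S) φ (hg.anti (SimpleGraph.deleteEdges_le S)) ≤
      gainEnergy G φ hg := by
  classical
  obtain ⟨W, hW⟩ := hcut
  set d : V → ℂ := fun v => if v ∈ W then (1:ℂ) else -1 with hdd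
  have hd : ∀ v, d v = 1 ∨ d v = -1 := fun v => by
    by_cases h : v ∈ W <;> simp [hdd, h]
  have gA : ∀ (G' : SimpleGraph V) (u v : V), G'.Adj u v → gainAdj G' φ u v = φ u v :=
    fun G' u v h => by unfold gainAdj; exact if_pos h
  have gN : ∀ (G' : SimpleGraph V) (u v : V), ¬G'.Adj u v → gainAdj G' φ u v = 0 :=
    fun G' u v h => by unfold gainAdj; exact if_neg h
  have hAB : gainAdj (G.deleteEdges S) φ + gainAdj (G.deleteEdges S) φ
      = gainAdj G φ + Matrix.diagonal d * gainAdj G φ * Matrix.diagonal d := by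
    ext u v
    have hent : (Matrix.diagonal d * gainAdj G φ * Matrix.diagonal d) u v
        = d u * gainAdj G φ u v * d v := by
      rw [Matrix.mul_diagonal, Matrix.diagonal_mul]
    rw [Matrix.add_apply, Matrix.add_apply, hent]
    by_cases hadj : G.Adj u v
    · by_cases hu : u ∈ W <;> by_cases hv : v ∈ W
      · have hnot : s(u, v) ∉ S := fun h => ((hW u v).mp h).2.mp hu hv
        have hadj' : (G.deleteEdges S).Adj u v :=
          (SimpleGraph.deleteEdges_adj).mpr ⟨hadj, hnot⟩
        rw [gA _ _ _ hadj', gA _ _ _ hadj]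
        simp [hdd, hu, hv]
      · have hin : s(u, v) ∈ S := (hW u v).mpr ⟨hadj, ⟨fun _ => hv, fun _ => hu⟩⟩
        have hadj' : ¬(G.deleteEdges S).Adj u v :=
          fun h => ((SimpleGraph.deleteEdges_adj).mp h).2 hin
        rw [gN _ _ _ hadj', gA _ _ _ hadj]
        simp [hdd, hu, hv]
      · have hin : s(u, v) ∈ S := (hW u v).mpr ⟨hadj, ⟨fun h => absurd h hu, fun h => absurd hv h⟩⟩
        have hadj' : ¬(G.deleteEdges S).Adj u v :=
          fun h => ((SimpleGraph.deleteEdges_adj).mp h).2 hin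
        rw [gN _ _ _ hadj', gA _ _ _ hadj]
        simp [hdd, hu, hv]
      · have hnot : s(u, v) ∉ S := fun h => hu (((hW u v).mp h).2.mpr hv)
        have hadj' : (G.deleteEdges S).Adj u v :=
          (SimpleGraph.deleteEdges_adj).mpr ⟨hadj, hnot⟩
        rw [gA _ _ _ hadj', gA _ _ _ hadj]
        simp [hdd, hu, hv]
    · have hadj' : ¬(G.deleteEdges S).Adj u v :=
        fun h => hadj ((SimpleGraph.deleteEdges_adj).mp h).1
      rw [gN _ _ _ hadj', gN _ _ _ hadj]
      simp
  exact energy_key hg.isHermitian (hg.anti (SimpleGraph.deleteEdges_le S)).isHermitian d hd hAB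
end

section
/- Let Φ = (G, 𝕋, φ) be a complex unit gain graph and let S be an edge cut of G such that the subgraph of G induced by the edge set S is a star (i.e., all edges of S share a common vertex). Then 𝓔(G − S, 𝕋, φ) < 𝓔(Φ). -/
set_option linter.unusedSectionVars false
set_option maxHeartbeats 1000000



open Matrix

variable {V : Type*}

open Matrix Polynomial

namespace GainAux

variable {n : Type*} [Fintype n] [DecidableEq n]

/-- Matrices that vanish on pairs straddling the predicate `p`. -/
def IsCross (p : n → Prop) (M : Matrix n n ℂ) : Prop :=
  ∀ u v, p u → ¬ p v → M u v = 0 ∧ M v u = 0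

theorem isCross_one (p : n → Prop) : IsCross p (1 : Matrix n n ℂ) := by
  intro u v hu hv
  constructor <;> rw [Matrix.one_apply_ne] <;> rintro rfl <;> exact hv hu

theorem isCross_mul {p : n → Prop} {M N : Matrix n n ℂ}
    (hM : IsCross p M) (hN : IsCross p N) : IsCross p (M * N) := by
  intro u v hu hv
  constructor
  · rw [Matrix.mul_apply]
    refine Finset.sum_eq_zero fun w _ => ?_
    by_cases hw : p w
    · rw [(hN w v hw hv).1, mul_zero]
    · rw [(hM u w hu hw).1, zero_mul]
  · rw [Matrix.mul_apply]
    refine Finset.sum_eq_zero fun w _ => ?_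
    by_cases hw : p w
    · rw [(hM w v hw hv).2, zero_mul]
    · rw [(hN u w hu hw).2, mul_zero]

/-- The cross-zero matrices form a subalgebra. -/
def crossAlg (p : n → Prop) : Subalgebra ℂ (Matrix n n ℂ) where
  carrier := {M | IsCross p M}
  mul_mem' := isCross_mul
  one_mem' := isCross_one p
  add_mem' := by
    intro M N hM hN u v hu hv
    exact ⟨by rw [Matrix.add_apply, (hM u v hu hv).1, (hN u v hu hv).1, add_zero],
      by rw [Matrix.add_apply, (hM u v hu hv).2, (hN u v hu hv).2, add_zero]⟩
  zero_mem' := fun u v _ _ => ⟨rfl, rfl⟩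
  algebraMap_mem' := by
    intro r u v hu hv
    have huv : u ≠ v := fun h => hv (h ▸ hu)
    have hvu : v ≠ u := fun h => hv (h ▸ hu)  -- fix
    constructor <;> rw [Matrix.algebraMap_matrix_apply]
    · rw [if_neg huv]
    · rw [if_neg hvu]

theorem isCross_aeval {p : n → Prop} {B : Matrix n n ℂ} (hB : IsCross p B) (q : ℂ[X]) :
    IsCross p (Polynomial.aeval B q) := by
  have h1 : Algebra.adjoin ℂ ({B} : Set (Matrix n n ℂ)) ≤ crossAlg p :=
    Algebra.adjoin_le (Set.singleton_subset_iff.mpr hB)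
  exact h1 (Polynomial.aeval_mem_adjoin_singleton ℂ B)

theorem cancel_left {Vm : Matrix n n ℂ} (h : star Vm * Vm = 1) (X : Matrix n n ℂ) :
    star Vm * (Vm * X) = X := by rw [← mul_assoc, h, one_mul]

theorem conj_pow {Vm : Matrix n n ℂ} (h1 : Vm * star Vm = 1) (h2 : star Vm * Vm = 1)
    (M : Matrix n n ℂ) (k : ℕ) : (Vm * M * star Vm) ^ k = Vm * M ^ k * star Vm := by
  induction k with
  | zero => rw [pow_zero, pow_zero, mul_one, h1]
  | succ k ih =>
      rw [pow_succ, pow_succ, ih]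
      calc Vm * M ^ k * star Vm * (Vm * M * star Vm)
          = Vm * (M ^ k * (star Vm * (Vm * (M * star Vm)))) := by
            simp only [mul_assoc]
        _ = Vm * (M ^ k * M) * star Vm := by rw [cancel_left h2]; simp only [mul_assoc]

theorem aeval_unitary_conj {Vm : Matrix n n ℂ} (h1 : Vm * star Vm = 1) (h2 : star Vm * Vm = 1)
    (d : n → ℂ) (q : ℂ[X]) :
    Polynomial.aeval (Vm * diagonal d * star Vm) q
      = Vm * diagonal (fun j => q.eval (d j)) * star Vm := by
  induction q using Polynomial.induction_on' with
  | add p q hp hq =>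
      rw [map_add, hp, hq]
      have h3 : (fun j => Polynomial.eval (d j) (p + q))
          = (fun j => Polynomial.eval (d j) p + Polynomial.eval (d j) q) := by
        funext j; simp [Polynomial.eval_add]
      rw [h3, ← diagonal_add, mul_add, add_mul]
  | monomial k a =>
      rw [Polynomial.aeval_monomial, conj_pow h1 h2, diagonal_pow]
      have : (fun j => Polynomial.eval (d j) (Polynomial.monomial k a))
          = fun j => a * d j ^ k := by
        funext j; simp [Polynomial.eval_monomial]
      rw [this, ← Algebra.smul_def (A := Matrix n n ℂ) a (Vm * diagonal (d ^ k) * star Vm)]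
      have h3 : (fun j => a * d j ^ k) = a • (d ^ k) := by
        funext j; simp [Pi.smul_apply, Pi.pow_apply, smul_eq_mul]
      rw [h3, diagonal_smul, mul_smul_comm, smul_mul_assoc]


section mf

variable {B : Matrix n n ℂ} (hB : B.IsHermitian)

/-- Apply a real function to a Hermitian matrix via its spectral decomposition. -/
noncomputable def mf (f : ℝ → ℝ) : Matrix n n ℂ :=
  (hB.eigenvectorUnitary : Matrix n n ℂ) * diagonal (fun j => (f (hB.eigenvalues j) : ℂ)) *
    star (hB.eigenvectorUnitary : Matrix n n ℂ)

theorem V_mul_star : (hB.eigenvectorUnitary : Matrix n n ℂ)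
    * star (hB.eigenvectorUnitary : Matrix n n ℂ) = 1 :=
  Matrix.mem_unitaryGroup_iff.mp (SetLike.coe_mem _)

theorem star_mul_V : star (hB.eigenvectorUnitary : Matrix n n ℂ)
    * (hB.eigenvectorUnitary : Matrix n n ℂ) = 1 :=
  Matrix.mem_unitaryGroup_iff'.mp (SetLike.coe_mem _)

theorem ofReal_comp_eig : RCLike.ofReal ∘ hB.eigenvalues
    = (fun j => ((hB.eigenvalues j : ℝ) : ℂ)) := by
  funext j
  simp [Function.comp]

theorem mf_spec : B = mf hB (fun t => t) := by
  conv_lhs => rw [hB.spectral_theorem]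
  unfold mf
  rw [Unitary.conjStarAlgAut_apply, ofReal_comp_eig]

theorem mf_mul (f g : ℝ → ℝ) : mf hB f * mf hB g = mf hB (fun t => f t * g t) := by
  unfold mf
  calc (hB.eigenvectorUnitary : Matrix n n ℂ) * diagonal (fun j => (f (hB.eigenvalues j) : ℂ)) *
      star (hB.eigenvectorUnitary : Matrix n n ℂ) *
      ((hB.eigenvectorUnitary : Matrix n n ℂ) * diagonal (fun j => (g (hB.eigenvalues j) : ℂ)) *
      star (hB.eigenvectorUnitary : Matrix n n ℂ))
      = (hB.eigenvectorUnitary : Matrix n n ℂ) * (diagonal (fun j => (f (hB.eigenvalues j) : ℂ)) *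
        diagonal (fun j => (g (hB.eigenvalues j) : ℂ))) * star (hB.eigenvectorUnitary : Matrix n n ℂ) := by
        simp only [mul_assoc, cancel_left (star_mul_V hB)]
    _ = _ := by rw [diagonal_mul_diagonal]; push_cast; rfl

theorem mf_one : mf hB (fun _ => 1) = 1 := by
  unfold mf
  have h1 : diagonal (fun _ : n => ((1 : ℝ) : ℂ)) = (1 : Matrix n n ℂ) := by
    simp
  rw [h1, mul_one, V_mul_star hB]

theorem mf_star (f : ℝ → ℝ) : star (mf hB f) = mf hB f := by
  unfold mf
  rw [StarMul.star_mul, StarMul.star_mul, star_star, star_eq_conjTranspose (diagonal _),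
    diagonal_conjTranspose]
  have h1 : (star fun j => ((f (hB.eigenvalues j) : ℝ) : ℂ))
      = fun j => ((f (hB.eigenvalues j) : ℝ) : ℂ) := by
    funext j
    simp [Pi.star_def]
  rw [h1]
  exact (mul_assoc _ _ _).symm

theorem mf_congr {f g : ℝ → ℝ} (h : ∀ j, f (hB.eigenvalues j) = g (hB.eigenvalues j)) :
    mf hB f = mf hB g := by
  unfold mf
  have h2 : (fun j => ((f (hB.eigenvalues j) : ℝ) : ℂ)) = fun j => ((g (hB.eigenvalues j) : ℝ) : ℂ) := by
    funext j
    rw [h j]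
  rw [h2]

theorem mf_sub (f g : ℝ → ℝ) : mf hB f - mf hB g = mf hB (fun t => f t - g t) := by
  unfold mf
  rw [← sub_mul, ← mul_sub, diagonal_sub]
  have h2 : (fun j => ((f (hB.eigenvalues j) : ℝ) : ℂ) - ((g (hB.eigenvalues j) : ℝ) : ℂ))
      = fun j => (((f (hB.eigenvalues j) - g (hB.eigenvalues j) : ℝ)) : ℂ) := by
    funext j
    push_cast
    ring
  rw [h2]

theorem mf_trace (f : ℝ → ℝ) : trace (mf hB f) = ∑ j, (f (hB.eigenvalues j) : ℂ) := by
  unfold mf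
  rw [trace_mul_cycle, star_mul_V hB, one_mul, trace_diagonal]

theorem mf_apply (f : ℝ → ℝ) (u v : n) :
    mf hB f u v = ∑ j, (f (hB.eigenvalues j) : ℂ) *
      ((hB.eigenvectorUnitary : Matrix n n ℂ) u j *
        (starRingEnd ℂ) ((hB.eigenvectorUnitary : Matrix n n ℂ) v j)) := by
  unfold mf
  rw [Matrix.mul_apply]
  refine Finset.sum_congr rfl fun j _ => ?_
  rw [Matrix.mul_apply, Finset.sum_eq_single j (fun b _ hbj => by
      rw [Matrix.diagonal_apply_ne _ hbj, mul_zero])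
    (fun h => absurd (Finset.mem_univ j) h)]
  rw [Matrix.diagonal_apply_eq, Matrix.star_apply]
  have h3 : star ((hB.eigenvectorUnitary : Matrix n n ℂ) v j)
      = (starRingEnd ℂ) ((hB.eigenvectorUnitary : Matrix n n ℂ) v j) := rfl
  rw [h3]
  ring

theorem mf_isCross {p : n → Prop} (hcr : IsCross p B) (f : ℝ → ℝ) : IsCross p (mf hB f) := by
  classical
  set s : Finset ℂ := Finset.univ.image (fun j => ((hB.eigenvalues j : ℝ) : ℂ)) with hs
  set q := Lagrange.interpolate s id (fun z => ((f z.re : ℝ) : ℂ)) with hq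
  have hqe : ∀ j, Polynomial.eval ((hB.eigenvalues j : ℝ) : ℂ) q = ((f (hB.eigenvalues j) : ℝ) : ℂ) := by
    intro j
    have hmem : ((hB.eigenvalues j : ℝ) : ℂ) ∈ s :=
      Finset.mem_image_of_mem _ (Finset.mem_univ j)
    have := Lagrange.eval_interpolate_at_node (r := fun z => ((f z.re : ℝ) : ℂ))
      (Set.injOn_id _) hmem
    rw [hq]
    simpa using this
  have hBeq : B = (hB.eigenvectorUnitary : Matrix n n ℂ)
      * diagonal (fun j => ((hB.eigenvalues j : ℝ) : ℂ))
      * star (hB.eigenvectorUnitary : Matrix n n ℂ) := by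
    conv_lhs => rw [hB.spectral_theorem]
    rw [Unitary.conjStarAlgAut_apply, ofReal_comp_eig]
  have hmf : mf hB f = Polynomial.aeval B q := by
    conv_rhs => rw [hBeq]
    rw [aeval_unitary_conj (V_mul_star hB) (star_mul_V hB)]
    unfold mf
    have h4 : (fun j => ((f (hB.eigenvalues j) : ℝ) : ℂ))
        = fun j => Polynomial.eval ((hB.eigenvalues j : ℝ) : ℂ) q := by
      funext j
      rw [hqe j]
    rw [h4]
  rw [hmf]
  exact isCross_aeval hcr q

end mf

section extract

theorem normsq_col_one {W : Matrix n n ℂ} (h : star W * W = 1) (i : n) :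
    ∑ j, Complex.normSq (W j i) = 1 := by
  have h1 : (star W * W) i i = 1 := by rw [h, Matrix.one_apply_eq]
  rw [Matrix.mul_apply] at h1
  have h2 : ∀ j, (star W) i j * W j i = (Complex.normSq (W j i) : ℂ) := by
    intro j
    rw [Matrix.star_apply, Complex.normSq_eq_conj_mul_self]
    rfl
  rw [Finset.sum_congr rfl (fun j _ => h2 j)] at h1
  exact_mod_cast h1

theorem normsq_row_one {W : Matrix n n ℂ} (h : W * star W = 1) (i : n) :
    ∑ j, Complex.normSq (W i j) = 1 := by
  have h0 := normsq_col_one (W := star W) (by rw [star_star]; exact h) i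
  simpa [Matrix.star_apply, Complex.normSq_conj] using h0

theorem col_extract {g : n → ℂ} (hsum : ∑ j, Complex.normSq (g j) = 1) {i : n}
    (hi : 1 ≤ Complex.normSq (g i)) : ∀ j, j ≠ i → g j = 0 := by
  intro j hj
  have h2 := Finset.add_sum_erase Finset.univ (fun b => Complex.normSq (g b)) (Finset.mem_univ i)
  have hnn : ∀ b ∈ Finset.univ.erase i, 0 ≤ Complex.normSq (g b) :=
    fun b _ => Complex.normSq_nonneg (g b)
  have h1 : ∑ b ∈ Finset.univ.erase i, Complex.normSq (g b) = 0 := by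
    have h3 : 0 ≤ ∑ b ∈ Finset.univ.erase i, Complex.normSq (g b) := Finset.sum_nonneg hnn
    linarith
  have h4 := (Finset.sum_eq_zero_iff_of_nonneg hnn).mp h1 j
    (Finset.mem_erase.mpr ⟨hj, Finset.mem_univ j⟩)
  exact Complex.normSq_eq_zero.mp h4

theorem eq_extract {A : Matrix n n ℂ} (hA : A.IsHermitian) {U : Matrix n n ℂ}
    (hU1 : star U * U = 1) (hU2 : U * star U = 1) {E : ℝ}
    (htr : trace (A * U) = (E : ℂ)) (hle : ∑ i, |hA.eigenvalues i| ≤ E) :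
    ∀ i, hA.eigenvalues i ≠ 0 → ∀ j,
      (star (hA.eigenvectorUnitary : Matrix n n ℂ) * U * (hA.eigenvectorUnitary : Matrix n n ℂ)) j i
        = (if j = i then ((|hA.eigenvalues i| / hA.eigenvalues i : ℝ) : ℂ) else 0) ∧
      (star (hA.eigenvectorUnitary : Matrix n n ℂ) * U * (hA.eigenvectorUnitary : Matrix n n ℂ)) i j
        = (if j = i then ((|hA.eigenvalues i| / hA.eigenvalues i : ℝ) : ℂ) else 0) := by
  set Va := (hA.eigenvectorUnitary : Matrix n n ℂ) with hVadef
  set lam := hA.eigenvalues with hlamdef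
  set W := star Va * U * Va with hWdef
  have hVa1 : Va * star Va = 1 := V_mul_star hA
  have hVa2 : star Va * Va = 1 := star_mul_V hA
  have hWs : star W = star Va * star U * Va := by
    rw [hWdef]
    simp only [StarMul.star_mul, star_star, mul_assoc]
  have hWu1 : star W * W = 1 := by
    rw [hWs, hWdef]
    calc star Va * star U * Va * (star Va * U * Va)
        = star Va * (star U * ((Va * star Va) * (U * Va))) := by simp only [mul_assoc]
      _ = star Va * ((star U * U) * Va) := by rw [hVa1, one_mul]; simp only [mul_assoc]
      _ = 1 := by rw [hU1, one_mul, hVa2]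
  have hWu2 : W * star W = 1 := by
    rw [hWs, hWdef]
    calc star Va * U * Va * (star Va * star U * Va)
        = star Va * (U * ((Va * star Va) * (star U * Va))) := by simp only [mul_assoc]
      _ = star Va * ((U * star U) * Va) := by rw [hVa1, one_mul]; simp only [mul_assoc]
      _ = 1 := by rw [hU2, one_mul, hVa2]
  have hAspec : A = Va * diagonal (fun j => ((lam j : ℝ) : ℂ)) * star Va := by
    conv_lhs => rw [hA.spectral_theorem]
    rw [Unitary.conjStarAlgAut_apply, ofReal_comp_eig]
  have hAUeq : Va * (diagonal (fun j => ((lam j : ℝ) : ℂ)) * W) * star Va = A * U := by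
    rw [hWdef]
    conv_rhs => rw [hAspec]
    simp only [mul_assoc]
    rw [hVa1]
    simp only [one_mul, mul_one]
  have htr2 : trace (diagonal (fun j => ((lam j : ℝ) : ℂ)) * W) = (E : ℂ) := by
    rw [← htr, ← hAUeq, trace_mul_cycle, hVa2, one_mul]
  have hsum : ∑ i, lam i * (W i i).re = E := by
    have h5 : (∑ i, ((lam i : ℝ) : ℂ) * W i i) = (E : ℂ) := by
      rw [← htr2, Matrix.trace]
      exact Finset.sum_congr rfl fun i _ => by
        rw [Matrix.diag_apply, Matrix.diagonal_mul]
    have h6 := congrArg Complex.re h5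
    rw [Complex.re_sum] at h6
    simpa [Complex.re_ofReal_mul] using h6
  have hWii : ∀ i, Complex.normSq (W i i) ≤ 1 := by
    intro i
    have h0 := normsq_col_one hWu1 i
    have h7 : Complex.normSq (W i i) ≤ ∑ j, Complex.normSq (W j i) :=
      Finset.single_le_sum (f := fun j => Complex.normSq (W j i))
        (fun j _ => Complex.normSq_nonneg _) (Finset.mem_univ i)
    linarith
  have hre_le : ∀ i, |(W i i).re| ≤ 1 := by
    intro i
    have h8 := hWii i
    rw [Complex.normSq_apply] at h8
    have h9 : (W i i).im * (W i i).im ≥ 0 := mul_self_nonneg _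
    have h10 : (W i i).re * (W i i).re ≤ 1 := by linarith
    nlinarith [abs_nonneg (W i i).re, abs_mul_abs_self (W i i).re]
  have hterm_le : ∀ i, lam i * (W i i).re ≤ |lam i| := by
    intro i
    calc lam i * (W i i).re ≤ |lam i * (W i i).re| := le_abs_self _
      _ = |lam i| * |(W i i).re| := abs_mul _ _
      _ ≤ |lam i| * 1 := by
          have := hre_le i
          have := abs_nonneg (lam i)
          nlinarith
      _ = |lam i| := mul_one _
  have hterm : ∀ i, lam i * (W i i).re = |lam i| := by
    by_contra hcon2
    push_neg at hcon2
    obtain ⟨i0, hi0⟩ := hcon2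
    have hlt : lam i0 * (W i0 i0).re < |lam i0| := lt_of_le_of_ne (hterm_le i0) hi0
    have h11 : ∑ i, lam i * (W i i).re < ∑ i, |lam i| :=
      Finset.sum_lt_sum (fun i _ => hterm_le i) ⟨i0, Finset.mem_univ i0, hlt⟩
    rw [hsum] at h11
    linarith
  intro i hne
  have hrei : (W i i).re = |lam i| / lam i := by
    rw [eq_div_iff hne, mul_comm]
    exact hterm i
  have ht2' : (|lam i| / lam i) * (|lam i| / lam i) = 1 := by
    rw [div_mul_div_comm, abs_mul_abs_self, div_self (mul_ne_zero hne hne)]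
  have hn1 : 1 ≤ Complex.normSq (W i i) := by
    rw [Complex.normSq_apply, hrei]
    nlinarith [mul_self_nonneg (W i i).im]
  have him : (W i i).im = 0 := by
    have h12 := hWii i
    rw [Complex.normSq_apply, hrei] at h12
    have h13 : (W i i).im * (W i i).im ≤ 0 := by linarith
    exact mul_self_eq_zero.mp (le_antisymm h13 (mul_self_nonneg _))
  have hWiival : W i i = ((|lam i| / lam i : ℝ) : ℂ) := by
    refine Complex.ext ?_ ?_
    · rw [hrei, Complex.ofReal_re]
    · rw [him, Complex.ofReal_im]
  intro j
  constructor
  · by_cases hji : j = i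
    · rw [if_pos hji, hji]
      exact hWiival
    · rw [if_neg hji]
      exact col_extract (normsq_col_one hWu1 i) hn1 j hji
  · by_cases hji : j = i
    · rw [if_pos hji, hji]
      exact hWiival
    · rw [if_neg hji]
      exact col_extract (g := fun b => W i b) (normsq_row_one hWu2 i) hn1 j hji

end extract

section core

theorem sandwich {Vm U : Matrix n n ℂ} (h1 : Vm * star Vm = 1) :
    Vm * (star Vm * U * Vm) * star Vm = U := by
  calc Vm * (star Vm * U * Vm) * star Vm
      = (Vm * star Vm) * U * (Vm * star Vm) := by simp only [mul_assoc]
    _ = U := by rw [h1, one_mul, mul_one]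

theorem core {A B : Matrix n n ℂ} (hA : A.IsHermitian) (hB : B.IsHermitian)
    {p : n → Prop} {c : n} {y : n → ℂ}
    (hpc : p c) (hyp : ∀ v, p v → y v = 0) (hy : ∃ v, y v ≠ 0)
    (hcross : IsCross p B) (hBcc : B c c = 0)
    (hABC : ∀ u v : n, A u v = B u v + (if u = c then y v else 0)
      + (if v = c then (starRingEnd ℂ) (y u) else 0)) :
    ∑ j, |hB.eigenvalues j| < ∑ i, |hA.eigenvalues i| := by
  classical
  by_contra hcon
  push_neg at hcon
  set s1 : ℝ → ℝ := fun t => if t < 0 then -1 else 1 with hs1def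
  set s2 : ℝ → ℝ := fun t => if 0 < t then 1 else -1 with hs2def
  set U1 := mf hB s1 with hU1def
  set U2 := mf hB s2 with hU2def
  set Eb : ℝ := ∑ j, |hB.eigenvalues j| with hEbdef
  have hs1m : ∀ t, s1 t * s1 t = 1 := by
    intro t; by_cases h : t < 0 <;> simp [hs1def, h]
  have hs2m : ∀ t, s2 t * s2 t = 1 := by
    intro t; by_cases h : 0 < t <;> simp [hs2def, h]
  have hU1star : star U1 = U1 := mf_star hB s1
  have hU2star : star U2 = U2 := mf_star hB s2
  have hU1u : U1 * U1 = 1 := by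
    rw [hU1def, mf_mul, mf_congr hB (g := fun _ => 1) (fun j => hs1m _)]
    exact mf_one hB
  have hU2u : U2 * U2 = 1 := by
    rw [hU2def, mf_mul, mf_congr hB (g := fun _ => 1) (fun j => hs2m _)]
    exact mf_one hB
  have hU1u1 : star U1 * U1 = 1 := by rw [hU1star]; exact hU1u
  have hU1u2 : U1 * star U1 = 1 := by rw [hU1star]; exact hU1u
  have hU2u1 : star U2 * U2 = 1 := by rw [hU2star]; exact hU2u
  have hU2u2 : U2 * star U2 = 1 := by rw [hU2star]; exact hU2u
  have habs1 : ∀ t : ℝ, t * s1 t = |t| := by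
    intro t
    by_cases h : t < 0
    · rw [hs1def]; simp only [if_pos h]; rw [abs_of_neg h]; ring
    · rw [hs1def]; simp only [if_neg h]; rw [abs_of_nonneg (not_lt.mp h)]; ring
  have habs2 : ∀ t : ℝ, t * s2 t = |t| := by
    intro t
    by_cases h : 0 < t
    · rw [hs2def]; simp only [if_pos h]; rw [abs_of_pos h]; ring
    · rw [hs2def]; simp only [if_neg h]; rw [abs_of_nonpos (not_lt.mp h)]; ring
  have hBU1 : B * U1 = mf hB (fun t => |t|) := by
    have h1 : mf hB (fun t => t) * mf hB s1 = mf hB (fun t => |t|) := by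
      rw [mf_mul]; exact mf_congr hB (fun j => habs1 _)
    rw [← mf_spec hB] at h1
    rw [hU1def]; exact h1
  have hBU2 : B * U2 = mf hB (fun t => |t|) := by
    have h1 : mf hB (fun t => t) * mf hB s2 = mf hB (fun t => |t|) := by
      rw [mf_mul]; exact mf_congr hB (fun j => habs2 _)
    rw [← mf_spec hB] at h1
    rw [hU2def]; exact h1
  have hU1B : U1 * B = B * U1 := by
    have h1 : mf hB s1 * mf hB (fun t => t) = mf hB (fun t => t) * mf hB s1 := by
      rw [mf_mul, mf_mul]; exact mf_congr hB (fun j => mul_comm _ _)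
    rw [← mf_spec hB] at h1
    rw [hU1def]; exact h1
  have hU2B : U2 * B = B * U2 := by
    have h1 : mf hB s2 * mf hB (fun t => t) = mf hB (fun t => t) * mf hB s2 := by
      rw [mf_mul, mf_mul]; exact mf_congr hB (fun j => mul_comm _ _)
    rw [← mf_spec hB] at h1
    rw [hU2def]; exact h1
  have htrB1 : trace (B * U1) = (Eb : ℂ) := by
    rw [hBU1, mf_trace, hEbdef]; push_cast; rfl
  have htrB2 : trace (B * U2) = (Eb : ℂ) := by
    rw [hBU2, mf_trace, hEbdef]; push_cast; rfl
  set C : Matrix n n ℂ := A - B with hCdef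
  have hCapp : ∀ u v, C u v = (if u = c then y v else 0)
      + (if v = c then (starRingEnd ℂ) (y u) else 0) := by
    intro u v
    rw [hCdef, Matrix.sub_apply, hABC u v]
    ring
  have hU1cross : IsCross p U1 := mf_isCross hB hcross s1
  have hU2cross : IsCross p U2 := mf_isCross hB hcross s2
  have htrC : ∀ U : Matrix n n ℂ, IsCross p U → trace (C * U) = 0 := by
    intro U hU
    have h1 : ∀ u, (C * U) u u = (if u = c then ∑ w, y w * U w c else 0)
        + (starRingEnd ℂ) (y u) * U c u := by
      intro u
      rw [Matrix.mul_apply]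
      have h2 : ∀ w, C u w * U w u = (if u = c then y w * U w u else 0)
          + (if w = c then (starRingEnd ℂ) (y u) * U w u else 0) := by
        intro w
        rw [hCapp]
        by_cases hu : u = c <;> by_cases hw : w = c <;> simp [hu, hw] <;> ring
      rw [Finset.sum_congr rfl (fun w _ => h2 w), Finset.sum_add_distrib]
      congr 1
      · by_cases hu : u = c
        · simp [hu]
        · simp [hu]
      · simp
    have h3 : trace (C * U) = (∑ u, if u = c then (∑ w, y w * U w c) else 0)
        + ∑ u, (starRingEnd ℂ) (y u) * U c u := by
      have e0 : trace (C * U) = ∑ u, (C * U) u u := rfl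
      rw [e0, Finset.sum_congr rfl (fun u _ => h1 u), Finset.sum_add_distrib]
    rw [h3]
    have hz2 : (∑ w, y w * U w c) = 0 := Finset.sum_eq_zero fun w _ => by
      by_cases hw : y w = 0
      · rw [hw, zero_mul]
      · have hpw : ¬ p w := fun h => hw (hyp w h)
        rw [(hU c w hpc hpw).2, mul_zero]
    have hz3 : (∑ u, (starRingEnd ℂ) (y u) * U c u) = 0 := Finset.sum_eq_zero fun u _ => by
      by_cases hw : y u = 0
      · rw [hw, map_zero, zero_mul]
      · have hpw : ¬ p u := fun h => hw (hyp u h)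
        rw [(hU c u hpc hpw).1, mul_zero]
    rw [hz3, hz2, add_zero]
    simp
  have hCA : A = B + C := by rw [hCdef]; abel
  have htrA1 : trace (A * U1) = (Eb : ℂ) := by
    rw [hCA, add_mul, Matrix.trace_add, htrB1, htrC U1 hU1cross, add_zero]
  have htrA2 : trace (A * U2) = (Eb : ℂ) := by
    rw [hCA, add_mul, Matrix.trace_add, htrB2, htrC U2 hU2cross, add_zero]
  have hx1 := eq_extract hA hU1u1 hU1u2 htrA1 hcon
  have hx2 := eq_extract hA hU2u1 hU2u2 htrA2 hcon
  set Va := (hA.eigenvectorUnitary : Matrix n n ℂ) with hVadef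
  set lam := hA.eigenvalues with hlamdef
  set W1 := star Va * U1 * Va with hW1def
  set W2 := star Va * U2 * Va with hW2def
  have hVa1 : Va * star Va = 1 := V_mul_star hA
  have hVa2 : star Va * Va = 1 := star_mul_V hA
  have hcanc : ∀ X : Matrix n n ℂ, star Va * (Va * X) = X := fun X => by
    rw [← mul_assoc, hVa2, one_mul]
  have hAspec : A = Va * diagonal (fun j => ((lam j : ℝ) : ℂ)) * star Va := by
    conv_lhs => rw [hA.spectral_theorem]
    rw [Unitary.conjStarAlgAut_apply, ofReal_comp_eig]
  have hcomm : ∀ U W' : Matrix n n ℂ, U = Va * W' * star Va →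
      (∀ i, lam i ≠ 0 → ∀ j,
        W' j i = (if j = i then ((|lam i| / lam i : ℝ) : ℂ) else 0) ∧
        W' i j = (if j = i then ((|lam i| / lam i : ℝ) : ℂ) else 0)) →
      U * A = A * U := by
    intro U W' hU' hcols
    have hWD : W' * diagonal (fun j => ((lam j : ℝ) : ℂ))
        = diagonal (fun j => ((lam j : ℝ) : ℂ)) * W' := by
      ext i j
      rw [Matrix.mul_diagonal, Matrix.diagonal_mul]
      by_cases hj : lam j = 0
      · by_cases hi : lam i = 0
        · rw [hi, hj]; norm_num
        · have h4 := (hcols i hi j).2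
          have hji : ¬ j = i := fun h => hi (h ▸ hj)
          rw [if_neg hji] at h4
          rw [h4, hj]
          simp
      · by_cases hij : i = j
        · subst hij; exact mul_comm _ _
        · have h4 := (hcols j hj i).1
          rw [if_neg hij] at h4
          rw [h4, zero_mul, mul_zero]
    calc U * A = Va * W' * star Va * (Va * diagonal (fun j => ((lam j : ℝ) : ℂ)) * star Va) := by
          rw [← hU', ← hAspec]
      _ = Va * (W' * diagonal (fun j => ((lam j : ℝ) : ℂ))) * star Va := by
          simp only [mul_assoc, hcanc]
      _ = Va * (diagonal (fun j => ((lam j : ℝ) : ℂ)) * W') * star Va := by rw [hWD]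
      _ = Va * diagonal (fun j => ((lam j : ℝ) : ℂ)) * star Va * (Va * W' * star Va) := by
          simp only [mul_assoc, hcanc]
      _ = A * U := by rw [← hU', ← hAspec]
  have hU1s : U1 = Va * W1 * star Va := by rw [hW1def, sandwich hVa1]
  have hU2s : U2 = Va * W2 * star Va := by rw [hW2def, sandwich hVa1]
  have hU1A : U1 * A = A * U1 := hcomm U1 W1 hU1s hx1
  have hU2A : U2 * A = A * U2 := hcomm U2 W2 hU2s hx2
  have hPA : (U1 - U2) * A = 0 := by
    have hWD0 : (W1 - W2) * diagonal (fun j => ((lam j : ℝ) : ℂ)) = 0 := by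
      ext i j
      rw [Matrix.mul_diagonal, Matrix.sub_apply, Matrix.zero_apply]
      by_cases hj : lam j = 0
      · rw [hj]; simp
      · rw [(hx1 j hj i).1, (hx2 j hj i).1, sub_self, zero_mul]
    calc (U1 - U2) * A
        = (Va * W1 * star Va - Va * W2 * star Va) * (Va * diagonal (fun j => ((lam j : ℝ) : ℂ)) * star Va) := by
          rw [← hU1s, ← hU2s, ← hAspec]
      _ = (Va * (W1 - W2) * star Va) * (Va * diagonal (fun j => ((lam j : ℝ) : ℂ)) * star Va) := by
          rw [mul_sub Va W1 W2, sub_mul (Va * W1) (Va * W2) (star Va), sub_mul]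
      _ = Va * ((W1 - W2) * diagonal (fun j => ((lam j : ℝ) : ℂ))) * star Va := by
          simp only [mul_assoc, hcanc]
      _ = 0 := by rw [hWD0, mul_zero, zero_mul]
  have hAP : A * (U1 - U2) = 0 := by
    have h1 := congrArg star hPA
    rw [StarMul.star_mul, star_sub, hU1star, hU2star, star_zero] at h1
    have h2 : star A = A := hA
    rw [h2] at h1
    exact h1
  -- vectors
  set ec : n → ℂ := fun u => if u = c then 1 else 0 with hecdef
  set yb : n → ℂ := fun u => (starRingEnd ℂ) (y u) with hybdef
  have hyc : y c = 0 := hyp c hpc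
  have hmvec : ∀ (M : Matrix n n ℂ) (u : n), M.mulVec ec u = M u c := by
    intro M u
    rw [show M.mulVec ec u = ∑ w, M u w * ec w from rfl]
    simp [hecdef]
  have hCmv : ∀ x : n → ℂ, C.mulVec x = (∑ w, y w * x w) • ec + (x c) • yb := by
    intro x
    funext u
    rw [show C.mulVec x u = ∑ w, C u w * x w from rfl]
    have hstep : ∀ w, C u w * x w = (if u = c then y w * x w else 0)
        + (if w = c then (starRingEnd ℂ) (y u) * x w else 0) := by
      intro w
      rw [hCapp]
      by_cases hu : u = c <;> by_cases hw : w = c <;> simp [hu, hw] <;> ring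
    rw [Finset.sum_congr rfl (fun w _ => hstep w), Finset.sum_add_distrib]
    have h1 : (∑ w, if u = c then y w * x w else 0) = (∑ w, y w * x w) * ec u := by
      rw [hecdef]
      by_cases hu : u = c
      · simp [hu]
      · simp [hu]
    have h2 : (∑ w, if w = c then (starRingEnd ℂ) (y u) * x w else 0) = x c * yb u := by
      rw [hybdef]
      rw [Finset.sum_ite_eq' Finset.univ c (fun w => (starRingEnd ℂ) (y u) * x w)]
      simp [mul_comm]
    rw [h1, h2]
    simp [Pi.add_apply, Pi.smul_apply, smul_eq_mul]
  have hCec : C.mulVec ec = yb := by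
    rw [hCmv]
    have h1 : (∑ w, y w * ec w) = 0 := by
      simp [hecdef, hyc]
    have h2 : ec c = 1 := by simp [hecdef]
    rw [h1, h2, zero_smul, one_smul, zero_add]
  set eta : ℂ := ∑ w, y w * (starRingEnd ℂ) (y w) with hetadef
  have hetane : eta ≠ 0 := by
    obtain ⟨v0, hv0⟩ := hy
    have h1 : eta = ((∑ w, Complex.normSq (y w) : ℝ) : ℂ) := by
      rw [hetadef]
      push_cast
      exact Finset.sum_congr rfl fun w _ => (Complex.mul_conj (y w))
    rw [h1, Complex.ofReal_ne_zero]
    have h2 : 0 < ∑ w, Complex.normSq (y w) :=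
      Finset.sum_pos' (fun w _ => Complex.normSq_nonneg _)
        ⟨v0, Finset.mem_univ v0, Complex.normSq_pos.mpr hv0⟩
    exact ne_of_gt h2
  have hCyb : C.mulVec yb = eta • ec := by
    rw [hCmv]
    have h1 : yb c = 0 := by rw [hybdef]; simp [hyc]
    have h2 : (∑ w, y w * yb w) = eta := by rw [hetadef, hybdef]
    rw [h1, h2, zero_smul, add_zero]
  have hkey : ∀ U : Matrix n n ℂ, IsCross p U → U * C = C * U →
      U.mulVec yb = (U c c) • yb ∧ U.mulVec ec = (U c c) • ec := by
    intro U hUcr hUcm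
    have h1 : U.mulVec yb = (U c c) • yb := by
      have e1 : U.mulVec (C.mulVec ec) = C.mulVec (U.mulVec ec) := by
        rw [Matrix.mulVec_mulVec, Matrix.mulVec_mulVec, hUcm]
      rw [hCec] at e1
      rw [e1, hCmv]
      have h2 : (∑ w, y w * (U.mulVec ec) w) = 0 := Finset.sum_eq_zero fun w _ => by
        by_cases hw : y w = 0
        · rw [hw, zero_mul]
        · have hpw : ¬ p w := fun h => hw (hyp w h)
          rw [hmvec U w, (hUcr c w hpc hpw).2, mul_zero]
      rw [h2, zero_smul, zero_add, hmvec U c]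
    have h2 : U.mulVec ec = (U c c) • ec := by
      have e1 : U.mulVec (C.mulVec yb) = C.mulVec (U.mulVec yb) := by
        rw [Matrix.mulVec_mulVec, Matrix.mulVec_mulVec, hUcm]
      rw [hCyb, h1, Matrix.mulVec_smul, Matrix.mulVec_smul, hCyb] at e1
      have e2 : eta • U.mulVec ec = eta • ((U c c) • ec) := by
        rw [e1, smul_comm]
      exact smul_right_injective (n → ℂ) hetane e2
    exact ⟨h1, h2⟩
  have hU1C : U1 * C = C * U1 := by
    rw [hCdef, mul_sub, sub_mul, hU1A, hU1B]
  have hU2C : U2 * C = C * U2 := by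
    rw [hCdef, mul_sub, sub_mul, hU2A, hU2B]
  obtain ⟨hU1yb, hU1ec⟩ := hkey U1 hU1cross hU1C
  obtain ⟨hU2yb, hU2ec⟩ := hkey U2 hU2cross hU2C
  by_cases hbb : U1 c c = U2 c c
  · -- equal diagonal entries
    have hBabsec : (mf hB (fun t => |t|)).mulVec ec = (U1 c c) • B.mulVec ec := by
      rw [← hBU1, ← Matrix.mulVec_mulVec, hU1ec, Matrix.mulVec_smul]
    have hBecc : B.mulVec ec c = 0 := by rw [hmvec]; exact hBcc
    have hBabscc : (mf hB (fun t => |t|)) c c = 0 := by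
      have h1 := congrFun hBabsec c
      rw [hmvec, Pi.smul_apply, hBecc, smul_zero] at h1
      exact h1
    have hker : ∀ j, hB.eigenvalues j ≠ 0 →
        (hB.eigenvectorUnitary : Matrix n n ℂ) c j = 0 := by
      have h1 : (∑ j, |hB.eigenvalues j|
          * Complex.normSq ((hB.eigenvectorUnitary : Matrix n n ℂ) c j)) = 0 := by
        have h2 := hBabscc
        rw [mf_apply] at h2
        have h3 : ∀ j, ((|hB.eigenvalues j| : ℝ) : ℂ)
            * ((hB.eigenvectorUnitary : Matrix n n ℂ) c j
              * (starRingEnd ℂ) ((hB.eigenvectorUnitary : Matrix n n ℂ) c j))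
            = (((|hB.eigenvalues j|
              * Complex.normSq ((hB.eigenvectorUnitary : Matrix n n ℂ) c j)) : ℝ) : ℂ) := by
          intro j
          rw [Complex.mul_conj]
          push_cast
          ring
        rw [Finset.sum_congr rfl (fun j _ => h3 j)] at h2
        exact_mod_cast h2
      intro j hj
      have h4 := (Finset.sum_eq_zero_iff_of_nonneg
        (fun j _ => mul_nonneg (abs_nonneg _) (Complex.normSq_nonneg _))).mp h1 j
        (Finset.mem_univ j)
      rcases mul_eq_zero.mp h4 with h | h
      · exact absurd h (abs_ne_zero.mpr hj)
      · exact Complex.normSq_eq_zero.mp h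
    have hBec : B.mulVec ec = 0 := by
      funext u
      rw [hmvec, Pi.zero_apply]
      conv_lhs => rw [mf_spec hB]
      rw [mf_apply]
      refine Finset.sum_eq_zero fun j _ => ?_
      by_cases hj : hB.eigenvalues j = 0
      · rw [hj]; simp
      · rw [hker j hj]; simp
    have hPec : (U1 - U2).mulVec ec = (2 : ℂ) • ec := by
      funext u
      have h6 : U1 - U2 = mf hB (fun t => s1 t - s2 t) := by
        rw [hU1def, hU2def, mf_sub]
      rw [hmvec, h6, mf_apply, Pi.smul_apply]
      have h7 : ((2 : ℂ) • ec u) = 2 * ((1 : Matrix n n ℂ) u c) := by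
        simp [hecdef, Matrix.one_apply, smul_eq_mul]
      rw [h7, ← V_mul_star hB, Matrix.mul_apply, Finset.mul_sum]
      refine Finset.sum_congr rfl fun j _ => ?_
      rw [Matrix.star_apply]
      by_cases hj : hB.eigenvalues j = 0
      · rw [hj]
        have h8 : s1 0 - s2 0 = 2 := by
          rw [hs1def, hs2def]; norm_num
        rw [h8]
        have h9 : star ((hB.eigenvectorUnitary : Matrix n n ℂ) c j)
            = (starRingEnd ℂ) ((hB.eigenvectorUnitary : Matrix n n ℂ) c j) := rfl
        rw [h9]
        push_cast
        ring
      · rw [hker j hj]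
        simp
    have hAec : A.mulVec ec = 0 := by
      have h8 : (A * (U1 - U2)).mulVec ec = 0 := by rw [hAP, Matrix.zero_mulVec]
      rw [← Matrix.mulVec_mulVec, hPec, Matrix.mulVec_smul] at h8
      rcases smul_eq_zero.mp h8 with h | h
      · norm_num at h
      · exact h
    have hCec0 : yb = 0 := by
      rw [← hCec, hCdef, Matrix.sub_mulVec, hAec, hBec, sub_zero]
    apply hetane
    rw [hetadef]
    refine Finset.sum_eq_zero fun w _ => ?_
    have h9 : (starRingEnd ℂ) (y w) = yb w := by rw [hybdef]
    rw [h9, hCec0, Pi.zero_apply, mul_zero]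
  · -- distinct diagonal entries
    have hPyb : (U1 - U2).mulVec yb = (U1 c c - U2 c c) • yb := by
      rw [Matrix.sub_mulVec, hU1yb, hU2yb, sub_smul]
    have hd : U1 c c - U2 c c ≠ 0 := sub_ne_zero.mpr hbb
    have hAyb : A.mulVec yb = 0 := by
      have h8 : (A * (U1 - U2)).mulVec yb = 0 := by rw [hAP, Matrix.zero_mulVec]
      rw [← Matrix.mulVec_mulVec, hPyb, Matrix.mulVec_smul] at h8
      rcases smul_eq_zero.mp h8 with h | h
      · exact absurd h hd
      · exact h
    have hBP : B * (U1 - U2) = 0 := by rw [mul_sub, hBU1, hBU2, sub_self]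
    have hByb : B.mulVec yb = 0 := by
      have h8 : (B * (U1 - U2)).mulVec yb = 0 := by rw [hBP, Matrix.zero_mulVec]
      rw [← Matrix.mulVec_mulVec, hPyb, Matrix.mulVec_smul] at h8
      rcases smul_eq_zero.mp h8 with h | h
      · exact absurd h hd
      · exact h
    have hCyb0 : eta • ec = 0 := by
      rw [← hCyb, hCdef, Matrix.sub_mulVec, hAyb, hByb, sub_zero]
    have h9 := congrFun hCyb0 c
    rw [Pi.smul_apply, Pi.zero_apply] at h9
    have h10 : ec c = 1 := by simp [hecdef]
    rw [h10, smul_eq_mul, mul_one] at h9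
    exact hetane h9

end core

end GainAux


section Wrapper

variable {V : Type*}

theorem gainAdj_eq_of_adj (G : SimpleGraph V) (φ : V → V → ℂ) {u v : V} (h : G.Adj u v) :
    gainAdj G φ u v = φ u v := by
  unfold gainAdj
  exact if_pos h

theorem gainAdj_eq_zero (G : SimpleGraph V) (φ : V → V → ℂ) {u v : V} (h : ¬ G.Adj u v) :
    gainAdj G φ u v = 0 := by
  unfold gainAdj
  exact if_neg h

theorem wrapper_main [Fintype V] [DecidableEq V]
    (G : SimpleGraph V) (φ : V → V → ℂ) (hg : IsGain G φ)
    (S : Set (Sym2 V)) (hne : S.Nonempty)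
    (hcut : ∃ W : Set V, ∀ u v : V, s(u, v) ∈ S ↔ G.Adj u v ∧ (u ∈ W ↔ v ∉ W))
    (hstar : ∃ c : V, ∀ e ∈ S, c ∈ e) :
    gainEnergy (G.deleteEdges S) φ (hg.anti (SimpleGraph.deleteEdges_le S)) <
      gainEnergy G φ hg := by
  classical
  obtain ⟨W, hW⟩ := hcut
  obtain ⟨c, hc⟩ := hstar
  obtain ⟨e, heS⟩ := hne
  have hed : ∃ d, s(c, d) ∈ S := by
    induction e using Sym2.ind with
    | _ a b =>
      rcases Sym2.mem_iff.mp (hc _ heS) with h | h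
      · exact ⟨b, h ▸ heS⟩
      · refine ⟨a, ?_⟩
        rw [Sym2.eq_swap]
        exact h ▸ heS
  obtain ⟨d, hcd⟩ := hed
  have hAdjcd : G.Adj c d := ((hW c d).mp hcd).1
  have gB : ∀ u v, G.Adj u v → s(u,v) ∉ S → gainAdj (G.deleteEdges S) φ u v = φ u v := by
    intro u v h hs
    exact gainAdj_eq_of_adj _ _ (SimpleGraph.deleteEdges_adj.mpr ⟨h, hs⟩)
  have gB0 : ∀ u v, ¬ (G.Adj u v ∧ s(u,v) ∉ S) → gainAdj (G.deleteEdges S) φ u v = 0 := by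
    intro u v h
    exact gainAdj_eq_zero _ _ (fun hadj => h (SimpleGraph.deleteEdges_adj.mp hadj))
  have hyp : ∀ v, ((v ∈ W ↔ c ∈ W)) → (if s(c, v) ∈ S then φ c v else 0) = 0 := by
    intro v hv
    by_cases h : s(c, v) ∈ S
    · have h2 := ((hW c v).mp h).2
      tauto
    · simp [h]
  have hy : ∃ v, (if s(c, v) ∈ S then φ c v else 0) ≠ 0 := by
    refine ⟨d, ?_⟩
    rw [if_pos hcd]
    intro h0
    have h1 := hg.unit c d hAdjcd
    rw [h0] at h1
    simp at h1
  have hcross : GainAux.IsCross (fun v => (v ∈ W ↔ c ∈ W)) (gainAdj (G.deleteEdges S) φ) := by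
    intro u v hu hv
    have hside : u ∈ W ↔ v ∉ W := by
      simp only [] at hu hv
      tauto
    constructor
    · exact gB0 u v (fun h => h.2 ((hW u v).mpr ⟨h.1, hside⟩))
    · have hside' : v ∈ W ↔ u ∉ W := by tauto
      exact gB0 v u (fun h => h.2 ((hW v u).mpr ⟨h.1, hside'⟩))
  have hBcc : gainAdj (G.deleteEdges S) φ c c = 0 := gB0 c c (fun h => G.loopless.irrefl c h.1)
  have hABC : ∀ u v : V, gainAdj G φ u v = gainAdj (G.deleteEdges S) φ u v
      + (if u = c then (if s(c, v) ∈ S then φ c v else 0) else 0)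
      + (if v = c then (starRingEnd ℂ) (if s(c, u) ∈ S then φ c u else 0) else 0) := by
    intro u v
    by_cases huc : u = c
    · rw [huc]
      by_cases hvc : v = c
      · rw [hvc]
        have hyc : (if s(c, c) ∈ S then φ c c else 0) = 0 := by
          rw [if_neg]
          intro h
          exact G.loopless.irrefl c ((hW c c).mp h).1
        rw [gainAdj_eq_zero G φ (G.loopless.irrefl c), gB0 c c (fun h => G.loopless.irrefl c h.1),
          if_pos rfl, if_pos rfl, hyc]
        simp
      · rw [if_pos rfl, if_neg hvc, add_zero]
        by_cases hS : s(c, v) ∈ S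
        · have hAdj : G.Adj c v := ((hW c v).mp hS).1
          rw [gainAdj_eq_of_adj G φ hAdj, gB0 c v (fun h => h.2 hS), if_pos hS, zero_add]
        · rw [if_neg hS, add_zero]
          by_cases hAdj : G.Adj c v
          · rw [gainAdj_eq_of_adj G φ hAdj, gB c v hAdj hS]
          · rw [gainAdj_eq_zero G φ hAdj, gB0 c v (fun h => hAdj h.1)]
    · by_cases hvc : v = c
      · rw [hvc, if_neg huc, if_pos rfl, add_zero]
        by_cases hS : s(c, u) ∈ S
        · have hAdjcu : G.Adj c u := ((hW c u).mp hS).1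
          have hSuc : s(u, c) ∈ S := by rw [Sym2.eq_swap]; exact hS
          rw [gainAdj_eq_of_adj G φ hAdjcu.symm, gB0 u c (fun h => h.2 hSuc), if_pos hS, zero_add]
          rw [hg.inv c u hAdjcu, Complex.inv_eq_conj (hg.unit c u hAdjcu)]
        · rw [if_neg hS, map_zero, add_zero]
          have hSuc : s(u, c) ∉ S := fun h => hS (by rw [Sym2.eq_swap]; exact h)
          by_cases hAdj : G.Adj u c
          · rw [gainAdj_eq_of_adj G φ hAdj, gB u c hAdj hSuc]
          · rw [gainAdj_eq_zero G φ hAdj, gB0 u c (fun h => hAdj h.1)]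
      · rw [if_neg huc, if_neg hvc, add_zero, add_zero]
        by_cases hAdj : G.Adj u v
        · have hSuv : s(u, v) ∉ S := by
            intro h
            rcases Sym2.mem_iff.mp (hc _ h) with h2 | h2
            · exact huc h2.symm
            · exact hvc h2.symm
          rw [gainAdj_eq_of_adj G φ hAdj, gB u v hAdj hSuv]
        · rw [gainAdj_eq_zero G φ hAdj, gB0 u v (fun h => hAdj h.1)]
  unfold gainEnergy
  exact GainAux.core hg.isHermitian ((hg.anti (SimpleGraph.deleteEdges_le S)).isHermitian)
    (p := fun v => (v ∈ W ↔ c ∈ W)) (c := c)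
    (y := fun v => if s(c, v) ∈ S then φ c v else 0)
    Iff.rfl hyp hy hcross hBcc hABC

end Wrapper


/-- deleting an edge cut whose edges form a star (all share a common vertex)
strictly decreases the energy of a complex unit gain graph. -/
theorem gainEnergy_deleteEdges_lt_of_star [Fintype V] [DecidableEq V]
    (G : SimpleGraph V) (φ : V → V → ℂ) (hg : IsGain G φ)
    (S : Set (Sym2 V)) (hne : S.Nonempty)
    (hcut : ∃ W : Set V, ∀ u v : V, s(u, v) ∈ S ↔ G.Adj u v ∧ (u ∈ W ↔ v ∉ W))
    (hstar : ∃ c : V, ∀ e ∈ S, c ∈ e) :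
    gainEnergy (G.deleteEdges S) φ (hg.anti (SimpleGraph.deleteEdges_le S)) <
      gainEnergy G φ hg := by
  exact wrapper_main G φ hg S hne hcut hstar
end

section
/- Let Φ = (G, 𝕋, φ) be a complex unit gain graph with at least 3 vertices. If G is connected and has a pendant vertex (a vertex of degree 1), then 𝓔(Φ) > 2μ(G). -/
open Matrix

variable {V : Type*}

set_option linter.unusedSectionVars false
set_option maxHeartbeats 1000000

section Aux
variable [Fintype V] [DecidableEq V]

noncomputable def qf (B : Matrix V V ℂ) (z : V → ℂ) : ℂ := star z ⬝ᵥ (B *ᵥ z)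

noncomputable def eb (p q : V) (c : ℂ) : Matrix V V ℂ :=
  c • Matrix.single p q 1 + (starRingEnd ℂ c) • Matrix.single q p 1

theorem qf_add (B C : Matrix V V ℂ) (z : V → ℂ) : qf (B + C) z = qf B z + qf C z := by
  simp [qf, add_mulVec, dotProduct_add]

theorem qf_smul (c : ℂ) (B : Matrix V V ℂ) (z : V → ℂ) : qf (c • B) z = c * qf B z := by
  simp [qf, Matrix.smul_mulVec, dotProduct_smul]

theorem qf_sum {ι : Type*} (s : Finset ι) (f : ι → Matrix V V ℂ) (z : V → ℂ) :
    qf (∑ e ∈ s, f e) z = ∑ e ∈ s, qf (f e) z := by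
  classical
  induction s using Finset.induction with
  | empty => simp [qf]
  | @insert _ _ h ih => rw [Finset.sum_insert h, Finset.sum_insert h, qf_add, ih]

theorem qf_std (p q : V) (z : V → ℂ) :
    qf (Matrix.single p q 1) z = (starRingEnd ℂ (z p)) * z q := by
  simp [qf, Matrix.single_mulVec, dotProduct, Function.update_apply, Complex.star_def,
    mul_ite, Finset.sum_ite_eq']

theorem trace_mul_std (A : Matrix V V ℂ) (p q : V) :
    (A * Matrix.single p q 1).trace = A q p := by
  simp [Matrix.trace, Matrix.diag, Matrix.mul_apply, Matrix.single, Matrix.of_apply,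
    ite_and, mul_ite, Finset.sum_ite_eq, Finset.sum_ite_eq']

theorem qf_eb (p q : V) (c : ℂ) (z : V → ℂ) :
    qf (eb p q c) z = c * ((starRingEnd ℂ (z p)) * z q)
      + starRingEnd ℂ (c * ((starRingEnd ℂ (z p)) * z q)) := by
  rw [eb, qf_add, qf_smul, qf_smul, qf_std, qf_std]
  simp only [_root_.map_mul, Complex.conj_conj]
  ring

theorem abs_qf_eb (p q : V) (c : ℂ) (z : V → ℂ) :
    ‖qf (eb p q c) z‖ ≤
      2 * ‖c‖ * (‖z p‖ * ‖z q‖) := by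
  rw [qf_eb]
  calc ‖_‖ ≤ ‖c * ((starRingEnd ℂ (z p)) * z q)‖
        + ‖starRingEnd ℂ (c * ((starRingEnd ℂ (z p)) * z q))‖ := norm_add_le _ _
    _ = 2 * ‖c‖ * (‖z p‖ * ‖z q‖) := by
        rw [Complex.norm_conj]
        simp only [norm_mul, Complex.norm_conj]
        ring

theorem trace_mul_eb (A : Matrix V V ℂ) (p q : V) (c : ℂ) :
    (A * eb p q c).trace = c * A q p + (starRingEnd ℂ c) * A p q := by
  rw [eb, Matrix.mul_add, Matrix.trace_add, Matrix.mul_smul, Matrix.mul_smul,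
    Matrix.trace_smul, Matrix.trace_smul, trace_mul_std, trace_mul_std]
  simp [smul_eq_mul]

theorem engine {A B : Matrix V V ℂ} (hA : A.IsHermitian)
    (hQ : ∀ z : V → ℂ, ‖qf B z‖ ≤ ∑ i, ‖z i‖ ^ 2) :
    ((A * B).trace).re ≤ ∑ i, |hA.eigenvalues i| := by
  classical
  have hUU : star (hA.eigenvectorUnitary : Matrix V V ℂ) * (hA.eigenvectorUnitary : Matrix V V ℂ) = 1 :=
    (Matrix.mem_unitaryGroup_iff').mp hA.eigenvectorUnitary.2
  set U : Matrix V V ℂ := (hA.eigenvectorUnitary : Matrix V V ℂ) with hU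
  set D : Matrix V V ℂ := diagonal (RCLike.ofReal ∘ hA.eigenvalues) with hD
  have hspec : A = U * D * star U := hA.spectral_theorem
  have htr : (A * B).trace = ∑ i, (hA.eigenvalues i : ℂ) * (star U * B * U) i i := by
    conv_lhs => rw [hspec]
    rw [Matrix.mul_assoc, Matrix.mul_assoc, Matrix.trace_mul_comm, hD]
    rw [Matrix.trace]
    apply Finset.sum_congr rfl; intro i _
    simp [Matrix.diag, Matrix.diagonal_mul, Matrix.mul_assoc]
  -- column i
  have hcol : ∀ i, (star U * B * U) i i = qf B (fun k => U k i) := by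
    intro i
    simp only [qf, Matrix.mul_apply, dotProduct, Matrix.mulVec, dotProduct, Finset.sum_mul,
      Finset.mul_sum]
    rw [Finset.sum_comm]
    apply Finset.sum_congr rfl; intro k _
    apply Finset.sum_congr rfl; intro l _
    simp [Matrix.star_apply, Pi.star_apply]
    ring
  have hnorm : ∀ i, ∑ k, ‖U k i‖ ^ 2 = 1 := by
    intro i
    have := congrFun (congrFun hUU i) i
    simp only [Matrix.mul_apply, Matrix.one_apply_eq, Matrix.star_apply] at this
    have h2 : ((∑ k, star (U k i) * U k i : ℂ)).re = 1 := by rw [this]; simp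
    rw [← h2, Complex.re_sum]
    apply Finset.sum_congr rfl; intro k _
    rw [Complex.star_def, Complex.mul_re]
    simp [Complex.sq_norm, Complex.normSq_apply]
  rw [htr, Complex.re_sum]
  have hle : ∀ i, ((hA.eigenvalues i : ℂ) * (star U * B * U) i i).re ≤ |hA.eigenvalues i| := by
    intro i
    have h1 : ‖(star U * B * U) i i‖ ≤ 1 := by
      rw [hcol i]
      calc ‖qf B fun k => U k i‖ ≤ ∑ k, ‖U k i‖ ^ 2 := hQ _
        _ = 1 := hnorm i
    calc ((hA.eigenvalues i : ℂ) * (star U * B * U) i i).re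
        ≤ ‖(hA.eigenvalues i : ℂ) * (star U * B * U) i i‖ := Complex.re_le_norm _
      _ = |hA.eigenvalues i| * ‖(star U * B * U) i i‖ := by
          rw [norm_mul, Complex.norm_real, Real.norm_eq_abs]
      _ ≤ |hA.eigenvalues i| * 1 := by
          exact mul_le_mul_of_nonneg_left h1 (abs_nonneg _)
      _ = |hA.eigenvalues i| := mul_one _
  exact Finset.sum_le_sum fun i _ => hle i

theorem p3real {s t1 t2 t3 : ℝ} (hs : s^2 = 2) (hs0 : 0 < s)
    (h1 : 0 ≤ t1) (h2 : 0 ≤ t2) (h3 : 0 ≤ t3) :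
    2*(t1*t2+t2*t3) ≤ s*(t1^2+t2^2+t3^2) := by
  nlinarith [sq_nonneg (t1+t3-s*t2), sq_nonneg (t1-t3), mul_pos hs0 hs0]

theorem p4real {s x1 x2 x3 x4 y1 y2 y3 y4 : ℝ} (hs : s^2 = 5) (hs0 : 0 < s) :
    |4*(x1*x2+y1*y2)+2*(x2*x3+y2*y3)+4*(x3*x4+y3*y4)-2*(x1*x4+y1*y4)|
      ≤ s*(x1^2+y1^2+x2^2+y2^2+x3^2+y3^2+x4^2+y4^2) := by
  rw [abs_le]
  constructor
  · nlinarith [sq_nonneg (s*x1+2*x2-x4), sq_nonneg (s*x2+2*x1+x3), sq_nonneg (s*x3+x2+2*x4),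
      sq_nonneg (s*x4+2*x3-x1), sq_nonneg (s*y1+2*y2-y4), sq_nonneg (s*y2+2*y1+y3),
      sq_nonneg (s*y3+y2+2*y4), sq_nonneg (s*y4+2*y3-y1)]
  · nlinarith [sq_nonneg (s*x1-2*x2+x4), sq_nonneg (s*x2-2*x1-x3), sq_nonneg (s*x3-x2-2*x4),
      sq_nonneg (s*x4-2*x3+x1), sq_nonneg (s*y1-2*y2+y4), sq_nonneg (s*y2-2*y1-y3),
      sq_nonneg (s*y3-y2-2*y4), sq_nonneg (s*y4-2*y3+y1)]

theorem sym2_out_eq (e : Sym2 V) : s(e.out.1, e.out.2) = e := by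
  rw [Sym2.mk, Prod.mk.eta, e.out_eq]

theorem sym2_mem_out {a : V} {e : Sym2 V} : a ∈ e ↔ a = e.out.1 ∨ a = e.out.2 := by
  conv_lhs => rw [← sym2_out_eq e]
  exact Sym2.mem_iff

noncomputable def suppM (M : Finset (Sym2 V)) : Finset V :=
  M.biUnion fun e => {e.out.1, e.out.2}

theorem mem_suppM {M : Finset (Sym2 V)} {a : V} : a ∈ suppM M ↔ ∃ e ∈ M, a ∈ e := by
  simp only [suppM, Finset.mem_biUnion, Finset.mem_insert, Finset.mem_singleton]
  constructor
  · rintro ⟨e, he, h⟩; exact ⟨e, he, sym2_mem_out.2 h⟩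
  · rintro ⟨e, he, h⟩; exact ⟨e, he, sym2_mem_out.1 h⟩

variable {G : SimpleGraph V} {φ : V → V → ℂ}

theorem adj_out {M : Finset (Sym2 V)} (hM : IsGraphMatching G M) {e : Sym2 V} (he : e ∈ M) :
    G.Adj e.out.1 e.out.2 := by
  have h := hM.1 he
  rw [← sym2_out_eq e, SimpleGraph.mem_edgeSet] at h
  exact h

theorem gainAdj_adj {u v : V} (h : G.Adj u v) : gainAdj G φ u v = φ u v := if_pos h
theorem gainAdj_nadj {u v : V} (h : ¬ G.Adj u v) : gainAdj G φ u v = 0 := if_neg h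

theorem gain_pair (hg : IsGain G φ) {u v : V} (h : G.Adj u v) :
    φ u v * gainAdj G φ v u = 1 ∧ (starRingEnd ℂ (φ u v)) * gainAdj G φ u v = 1 := by
  have h0 : φ u v ≠ 0 := by
    intro h0; have := hg.unit u v h; rw [h0] at this; simp at this
  constructor
  · rw [gainAdj_adj h.symm, hg.inv u v h, mul_inv_cancel₀ h0]
  · rw [gainAdj_adj h, mul_comm, Complex.mul_conj, ← Complex.sq_norm, hg.unit u v h]
    norm_num

noncomputable def Bmatch (φ : V → V → ℂ) (M : Finset (Sym2 V)) : Matrix V V ℂ :=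
  ∑ e ∈ M, eb e.out.1 e.out.2 (φ e.out.1 e.out.2)

theorem trace_Bmatch (hg : IsGain G φ) {M : Finset (Sym2 V)} (hM : IsGraphMatching G M) :
    (gainAdj G φ * Bmatch φ M).trace = 2 * M.card := by
  rw [Bmatch, Finset.mul_sum, Matrix.trace_sum]
  have h2 : ∀ e ∈ M, (gainAdj G φ * eb e.out.1 e.out.2 (φ e.out.1 e.out.2)).trace = 2 := by
    intro e he
    rw [trace_mul_eb]
    have := gain_pair hg (adj_out hM he)
    rw [this.1, this.2]
    norm_num
  rw [Finset.sum_congr rfl h2, Finset.sum_const, nsmul_eq_mul, mul_comm]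

theorem pdisj {M : Finset (Sym2 V)} (hM : IsGraphMatching G M) :
    (↑M : Set (Sym2 V)).PairwiseDisjoint (fun e => ({e.out.1, e.out.2} : Finset V)) := by
  intro e he f hf hef
  rw [Function.onFun, Finset.disjoint_left]
  intro a hae haf
  have h1 : a ∈ e := sym2_mem_out.2 (by simpa using hae)
  have h2 : a ∈ f := sym2_mem_out.2 (by simpa using haf)
  exact hM.2 e he f hf hef a h1 h2

theorem qf_Bmatch (hg : IsGain G φ) {M : Finset (Sym2 V)} (hM : IsGraphMatching G M)
    (z : V → ℂ) :
    ‖qf (Bmatch φ M) z‖ ≤ ∑ i ∈ suppM M, ‖z i‖ ^ 2 := by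
  rw [Bmatch, qf_sum, suppM, Finset.sum_biUnion (pdisj hM)]
  calc ‖∑ e ∈ M, qf (eb e.out.1 e.out.2 (φ e.out.1 e.out.2)) z‖
      ≤ ∑ e ∈ M, ‖qf (eb e.out.1 e.out.2 (φ e.out.1 e.out.2)) z‖ :=
        norm_sum_le _ _
    _ ≤ ∑ e ∈ M, ∑ i ∈ ({e.out.1, e.out.2} : Finset V), ‖z i‖ ^ 2 := by
        apply Finset.sum_le_sum
        intro e he
        have hne : e.out.1 ≠ e.out.2 := (adj_out hM he).ne
        rw [Finset.sum_pair hne]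
        calc ‖qf (eb e.out.1 e.out.2 (φ e.out.1 e.out.2)) z‖
            ≤ 2 * ‖φ e.out.1 e.out.2‖
              * (‖z e.out.1‖ * ‖z e.out.2‖) := abs_qf_eb _ _ _ _
          _ = 2 * (‖z e.out.1‖ * ‖z e.out.2‖) := by
              rw [hg.unit _ _ (adj_out hM he)]; ring
          _ ≤ ‖z e.out.1‖ ^ 2 + ‖z e.out.2‖ ^ 2 := by
              nlinarith [sq_nonneg (‖z e.out.1‖ - ‖z e.out.2‖)]

theorem P3exists {G : SimpleGraph V} {φ : V → V → ℂ} (hg : IsGain G φ) {v w x : V}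
    (hvw : G.Adj v w) (hwx : G.Adj w x) (hvx : v ≠ x)
    {M' : Finset (Sym2 V)} (hM' : IsGraphMatching G M')
    (havoid : ∀ e ∈ M', ∀ a, a ∈ e → a ≠ v ∧ a ≠ w ∧ a ≠ x) :
    ∃ B : Matrix V V ℂ,
      (∀ z : V → ℂ, ‖qf B z‖ ≤ ∑ i, ‖z i‖ ^ 2) ∧
      ((gainAdj G φ * B).trace).re = 2 * M'.card + 2 * Real.sqrt 2 := by
  have hs0 : (0:ℝ) < Real.sqrt 2 := Real.sqrt_pos.2 (by norm_num)
  have hs2 : Real.sqrt 2 ^ 2 = 2 := Real.sq_sqrt (by norm_num)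
  set r : ℝ := (Real.sqrt 2)⁻¹ with hr
  have hr0 : 0 < r := inv_pos.2 hs0
  refine ⟨eb v w (φ v w * (r:ℂ)) + (eb w x (φ w x * (r:ℂ)) + Bmatch φ M'), ?_, ?_⟩
  · intro z
    have hb1 := abs_qf_eb v w (φ v w * (r:ℂ)) z
    have hb2 := abs_qf_eb w x (φ w x * (r:ℂ)) z
    rw [norm_mul, hg.unit v w hvw, Complex.norm_real, Real.norm_eq_abs, abs_of_pos hr0, one_mul] at hb1
    rw [norm_mul, hg.unit w x hwx, Complex.norm_real, Real.norm_eq_abs, abs_of_pos hr0, one_mul] at hb2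
    have hb3 := qf_Bmatch hg hM' z
    set t1 := ‖z v‖; set t2 := ‖z w‖; set t3 := ‖z x‖
    have key : 2 * r * (t1 * t2) + 2 * r * (t2 * t3) ≤ t1^2 + t2^2 + t3^2 := by
      have hp := p3real hs2 hs0 (norm_nonneg (z v)) (norm_nonneg (z w))
        (norm_nonneg (z x))
      have heq : 2*r*(t1*t2)+2*r*(t2*t3) = r * (2*(t1*t2+t2*t3)) := by ring
      rw [heq, hr, inv_mul_le_iff₀ hs0]
      calc 2*(t1*t2+t2*t3) ≤ Real.sqrt 2 * (t1^2+t2^2+t3^2) := hp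
        _ = Real.sqrt 2 * (t1^2+t2^2+t3^2) := rfl
    -- disjointness of {v,w,x} and suppM
    have hdisj : Disjoint ({v,w,x} : Finset V) (suppM M') := by
      rw [Finset.disjoint_left]
      intro a ha hs
      obtain ⟨e, he, hae⟩ := mem_suppM.1 hs
      obtain ⟨h1, h2, h3⟩ := havoid e he a hae
      simp only [Finset.mem_insert, Finset.mem_singleton] at ha
      rcases ha with rfl|rfl|rfl <;> simp_all
    have hsum3 : ∑ i ∈ ({v,w,x} : Finset V), ‖z i‖ ^ 2 = t1^2 + t2^2 + t3^2 := by
      rw [Finset.sum_insert (by simp [hvw.ne, hvx]), Finset.sum_pair hwx.ne]; ring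
    calc ‖qf _ z‖
        ≤ ‖qf (eb v w (φ v w * (r:ℂ))) z‖
          + (‖qf (eb w x (φ w x * (r:ℂ))) z‖
          + ‖qf (Bmatch φ M') z‖) := by
          rw [qf_add, qf_add]
          exact le_trans (norm_add_le _ _)
            (by gcongr; exact norm_add_le _ _)
      _ ≤ (2 * r * (t1 * t2) + 2 * r * (t2 * t3)) + ∑ i ∈ suppM M', ‖z i‖ ^ 2 := by
          linarith [add_le_add (add_le_add hb1 hb2) hb3]
      _ ≤ (t1^2+t2^2+t3^2) + ∑ i ∈ suppM M', ‖z i‖ ^ 2 := by linarith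
      _ = ∑ i ∈ ({v,w,x} : Finset V) ∪ suppM M', ‖z i‖ ^ 2 := by
          rw [Finset.sum_union hdisj, hsum3]
      _ ≤ ∑ i, ‖z i‖ ^ 2 := by
          apply Finset.sum_le_sum_of_subset_of_nonneg (Finset.subset_univ _)
          intro i _ _; positivity
  · rw [Matrix.mul_add, Matrix.mul_add, Matrix.trace_add, Matrix.trace_add,
      trace_mul_eb, trace_mul_eb, trace_Bmatch hg hM']
    have e1 := gain_pair hg hvw
    have e2 := gain_pair hg hwx
    have c1 : (φ v w * (r:ℂ)) * gainAdj G φ w v + (starRingEnd ℂ (φ v w * (r:ℂ))) * gainAdj G φ v w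
        = 2*(r:ℂ) := by
      rw [_root_.map_mul, Complex.conj_ofReal]
      calc (φ v w * (r:ℂ)) * gainAdj G φ w v + (starRingEnd ℂ (φ v w) * (r:ℂ)) * gainAdj G φ v w
          = (r:ℂ) * (φ v w * gainAdj G φ w v) + (r:ℂ) * ((starRingEnd ℂ (φ v w)) * gainAdj G φ v w) := by ring
        _ = 2*(r:ℂ) := by rw [e1.1, e1.2]; ring
    have c2 : (φ w x * (r:ℂ)) * gainAdj G φ x w + (starRingEnd ℂ (φ w x * (r:ℂ))) * gainAdj G φ w x
        = 2*(r:ℂ) := by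
      rw [_root_.map_mul, Complex.conj_ofReal]
      calc (φ w x * (r:ℂ)) * gainAdj G φ x w + (starRingEnd ℂ (φ w x) * (r:ℂ)) * gainAdj G φ w x
          = (r:ℂ) * (φ w x * gainAdj G φ x w) + (r:ℂ) * ((starRingEnd ℂ (φ w x)) * gainAdj G φ w x) := by ring
        _ = 2*(r:ℂ) := by rw [e2.1, e2.2]; ring
    rw [c1, c2]
    have h4 : (4:ℝ) * r = 2 * Real.sqrt 2 := by
      rw [hr]
      rw [mul_inv_eq_iff_eq_mul₀ (ne_of_gt hs0)]
      nlinarith [hs2]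
    have h4c : (4:ℂ) * (r:ℝ) = 2 * ((Real.sqrt 2 : ℝ):ℂ) := by exact_mod_cast h4
    have hco : (2*((r:ℝ):ℂ) + (2*((r:ℝ):ℂ) + 2*(M'.card:ℂ)))
        = (((2*M'.card + 2*Real.sqrt 2 : ℝ)):ℂ) := by
      push_cast
      linear_combination h4c
    rw [hco, Complex.ofReal_re]

theorem P4exists {G : SimpleGraph V} {φ : V → V → ℂ} (hg : IsGain G φ) {v w x y : V}
    (hvw : G.Adj v w) (hwx : G.Adj w x) (hxy : G.Adj x y)
    (hvx : v ≠ x) (hvy : v ≠ y) (hwy : w ≠ y) (hnadj : ¬ G.Adj v y)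
    {M' : Finset (Sym2 V)} (hM' : IsGraphMatching G M')
    (havoid : ∀ e ∈ M', ∀ a, a ∈ e → a ≠ v ∧ a ≠ w ∧ a ≠ x ∧ a ≠ y) :
    ∃ B : Matrix V V ℂ,
      (∀ z : V → ℂ, ‖qf B z‖ ≤ ∑ i, ‖z i‖ ^ 2) ∧
      ((gainAdj G φ * B).trace).re = 2 * M'.card + 2 * Real.sqrt 5 := by
  have hs0 : (0:ℝ) < Real.sqrt 5 := Real.sqrt_pos.2 (by norm_num)
  have hs2 : Real.sqrt 5 ^ 2 = 5 := Real.sq_sqrt (by norm_num)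
  set r : ℝ := (Real.sqrt 5)⁻¹ with hr
  have hr0 : 0 < r := inv_pos.2 hs0
  have hr5 : r * Real.sqrt 5 = 1 := inv_mul_cancel₀ (ne_of_gt hs0)
  set a := φ v w with hadef
  set b := φ w x with hbdef
  set c := φ x y with hcdef
  have haa : (starRingEnd ℂ) a * a = 1 := by
    rw [mul_comm, Complex.mul_conj, ← Complex.ofReal_one, ← Complex.sq_norm, hg.unit v w hvw]
    norm_num
  have hbb : (starRingEnd ℂ) b * b = 1 := by
    rw [mul_comm, Complex.mul_conj, ← Complex.ofReal_one, ← Complex.sq_norm, hg.unit w x hwx]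
    norm_num
  refine ⟨eb v w (2*a*(r:ℂ)) + (eb w x (b*(r:ℂ)) + (eb x y (2*c*(r:ℂ))
      + (eb v y (-(a*b*c)*(r:ℂ)) + Bmatch φ M'))), ?_, ?_⟩
  · intro z
    set u1 := z v with hu1
    set u2 := a * z w with hu2
    set u3 := a * b * z x with hu3
    set u4 := a * b * c * z y with hu4
    set T1 := (2*a*(r:ℂ)) * ((starRingEnd ℂ (z v)) * z w) with hT1
    set T2 := (b*(r:ℂ)) * ((starRingEnd ℂ (z w)) * z x) with hT2
    set T3 := (2*c*(r:ℂ)) * ((starRingEnd ℂ (z x)) * z y) with hT3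
    set T4 := (-(a*b*c)*(r:ℂ)) * ((starRingEnd ℂ (z v)) * z y) with hT4
    set S := T1 + T2 + T3 + T4 with hS
    have hblock : qf (eb v w (2*a*(r:ℂ))) z + (qf (eb w x (b*(r:ℂ))) z
        + (qf (eb x y (2*c*(r:ℂ))) z + qf (eb v y (-(a*b*c)*(r:ℂ))) z))
        = ((2 * S.re : ℝ) : ℂ) := by
      rw [qf_eb, qf_eb, qf_eb, qf_eb, ← Complex.add_conj]
      rw [hS, _root_.map_add, _root_.map_add, _root_.map_add]
      ring
    have hSu : S = (r:ℂ) * (2*((starRingEnd ℂ u1)*u2) + ((starRingEnd ℂ u2)*u3)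
        + 2*((starRingEnd ℂ u3)*u4) - ((starRingEnd ℂ u1)*u4)) := by
      rw [hS, hT1, hT2, hT3, hT4, hu1, hu2, hu3, hu4]
      simp only [_root_.map_mul]
      linear_combination (-((r:ℂ)*b*(starRingEnd ℂ (z w))*(z x))
        - 2*(r:ℂ)*c*(starRingEnd ℂ (z x))*(z y)) * haa
        + (-(2*(r:ℂ)*c*(starRingEnd ℂ (z x))*(z y)*((starRingEnd ℂ) a)*a)) * hbb
    set F : ℝ := 4*(u1.re*u2.re+u1.im*u2.im)+2*(u2.re*u3.re+u2.im*u3.im)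
        +4*(u3.re*u4.re+u3.im*u4.im)-2*(u1.re*u4.re+u1.im*u4.im) with hF
    have hre : S.re = r * F / 2 := by
      rw [hF]
      rw [hSu]
      simp [Complex.mul_re, Complex.mul_im, Complex.conj_re, Complex.conj_im,
        Complex.add_re, Complex.sub_re, Complex.ofReal_re, Complex.ofReal_im]
      ring
    have habs2 : ∀ (d : ℂ) (t : ℂ), ‖d‖ = 1 → (d*t).re^2 + (d*t).im^2
        = ‖t‖ ^ 2 := by
      intro d t hd
      have : (d*t).re^2 + (d*t).im^2 = Complex.normSq (d*t) := by
        rw [Complex.normSq_apply]; ring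
      rw [this, ← Complex.sq_norm, norm_mul, hd, one_mul]
    have hnorm : u1.re^2+u1.im^2+u2.re^2+u2.im^2+u3.re^2+u3.im^2+u4.re^2+u4.im^2
        = ‖z v‖^2 + ‖z w‖^2 + ‖z x‖^2
          + ‖z y‖^2 := by
      have h1 : u1.re^2+u1.im^2 = ‖z v‖ ^2 := by
        rw [hu1, Complex.sq_norm, Complex.normSq_apply]; ring
      have h2 := habs2 a (z w) (hg.unit v w hvw)
      have h3 := habs2 (a*b) (z x) (by rw [norm_mul, hg.unit v w hvw, hg.unit w x hwx]; norm_num)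
      have h4 := habs2 (a*b*c) (z y) (by rw [norm_mul, norm_mul, hg.unit v w hvw,
        hg.unit w x hwx, hg.unit x y hxy]; norm_num)
      rw [hu2, hu3, hu4]
      rw [mul_assoc a b (z x)] at *
      rw [mul_assoc (a*b) c (z y)] at *
      linarith [h1, h2, h3, h4]
    have hblockabs : ‖((2 * S.re : ℝ) : ℂ)‖
        ≤ ‖z v‖^2 + ‖z w‖^2 + ‖z x‖^2
          + ‖z y‖^2 := by
      rw [Complex.norm_real, Real.norm_eq_abs]
      have hp := p4real (x1 := u1.re) (x2 := u2.re) (x3 := u3.re) (x4 := u4.re)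
        (y1 := u1.im) (y2 := u2.im) (y3 := u3.im) (y4 := u4.im) hs2 hs0
      rw [← hnorm]
      have habs : |2 * S.re| = r * |F| := by
        rw [hre, show 2 * (r * F / 2) = r * F from by ring, abs_mul, abs_of_pos hr0]
      rw [habs]
      calc r * |F| ≤ r * (Real.sqrt 5 * (u1.re^2+u1.im^2+u2.re^2+u2.im^2+u3.re^2+u3.im^2
            +u4.re^2+u4.im^2)) := by
            apply mul_le_mul_of_nonneg_left _ (le_of_lt hr0)
            calc |F| = |4*(u1.re*u2.re+u1.im*u2.im)+2*(u2.re*u3.re+u2.im*u3.im)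
                +4*(u3.re*u4.re+u3.im*u4.im)-2*(u1.re*u4.re+u1.im*u4.im)| := by rw [hF]
              _ ≤ Real.sqrt 5 * (u1.re^2+u1.im^2+u2.re^2+u2.im^2+u3.re^2+u3.im^2
                +u4.re^2+u4.im^2) := by
                  calc _ ≤ _ := hp
                    _ = _ := by ring
        _ = _ := by rw [← mul_assoc, hr5, one_mul]
    have hdisj : Disjoint ({v,w,x,y} : Finset V) (suppM M') := by
      rw [Finset.disjoint_left]
      intro i hi hsupp
      obtain ⟨e, he, hae⟩ := mem_suppM.1 hsupp
      obtain ⟨h1, h2, h3, h4⟩ := havoid e he i hae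
      simp only [Finset.mem_insert, Finset.mem_singleton] at hi
      rcases hi with rfl|rfl|rfl|rfl <;> simp_all
    have hsum4 : ∑ i ∈ ({v,w,x,y} : Finset V), ‖z i‖ ^ 2
        = ‖z v‖^2 + ‖z w‖^2 + ‖z x‖^2
          + ‖z y‖^2 := by
      rw [Finset.sum_insert (by simp [hvw.ne, hvx, hvy]),
        Finset.sum_insert (by simp [hwx.ne, hwy]), Finset.sum_pair hxy.ne]
      ring
    have hsplit : qf (eb v w (2*a*(r:ℂ)) + (eb w x (b*(r:ℂ)) + (eb x y (2*c*(r:ℂ))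
        + (eb v y (-(a*b*c)*(r:ℂ)) + Bmatch φ M')))) z
        = (qf (eb v w (2*a*(r:ℂ))) z + (qf (eb w x (b*(r:ℂ))) z
          + (qf (eb x y (2*c*(r:ℂ))) z + qf (eb v y (-(a*b*c)*(r:ℂ))) z)))
          + qf (Bmatch φ M') z := by
      rw [qf_add, qf_add, qf_add, qf_add]; ring
    rw [hsplit]
    calc ‖_‖ ≤ ‖((2 * S.re : ℝ) : ℂ)‖ + ‖qf (Bmatch φ M') z‖ := by
          rw [← hblock]; exact norm_add_le _ _
      _ ≤ (‖z v‖^2 + ‖z w‖^2 + ‖z x‖^2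
            + ‖z y‖^2) + ∑ i ∈ suppM M', ‖z i‖ ^ 2 :=
          add_le_add hblockabs (qf_Bmatch hg hM' z)
      _ = ∑ i ∈ ({v,w,x,y} : Finset V) ∪ suppM M', ‖z i‖ ^ 2 := by
          rw [Finset.sum_union hdisj, hsum4]
      _ ≤ ∑ i, ‖z i‖ ^ 2 := by
          apply Finset.sum_le_sum_of_subset_of_nonneg (Finset.subset_univ _)
          intro i _ _; positivity
  · rw [Matrix.mul_add, Matrix.mul_add, Matrix.mul_add, Matrix.mul_add,
      Matrix.trace_add, Matrix.trace_add, Matrix.trace_add, Matrix.trace_add,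
      trace_mul_eb, trace_mul_eb, trace_mul_eb, trace_mul_eb, trace_Bmatch hg hM']
    have e1 := gain_pair hg hvw
    have e2 := gain_pair hg hwx
    have e3 := gain_pair hg hxy
    have c1 : (2*a*(r:ℂ)) * gainAdj G φ w v + (starRingEnd ℂ (2*a*(r:ℂ))) * gainAdj G φ v w
        = 4*(r:ℂ) := by
      rw [_root_.map_mul, _root_.map_mul, Complex.conj_ofReal,
        show (starRingEnd ℂ) (2:ℂ) = 2 from map_ofNat _ 2]
      calc _ = 2*(r:ℂ) * (φ v w * gainAdj G φ w v)
            + 2*(r:ℂ) * ((starRingEnd ℂ (φ v w)) * gainAdj G φ v w) := by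
            rw [hadef]; ring
        _ = 4*(r:ℂ) := by rw [e1.1, e1.2]; ring
    have c2 : (b*(r:ℂ)) * gainAdj G φ x w + (starRingEnd ℂ (b*(r:ℂ))) * gainAdj G φ w x
        = 2*(r:ℂ) := by
      rw [_root_.map_mul, Complex.conj_ofReal]
      calc _ = (r:ℂ) * (φ w x * gainAdj G φ x w)
            + (r:ℂ) * ((starRingEnd ℂ (φ w x)) * gainAdj G φ w x) := by
            rw [hbdef]; ring
        _ = 2*(r:ℂ) := by rw [e2.1, e2.2]; ring
    have c3 : (2*c*(r:ℂ)) * gainAdj G φ y x + (starRingEnd ℂ (2*c*(r:ℂ))) * gainAdj G φ x y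
        = 4*(r:ℂ) := by
      rw [_root_.map_mul, _root_.map_mul, Complex.conj_ofReal,
        show (starRingEnd ℂ) (2:ℂ) = 2 from map_ofNat _ 2]
      calc _ = 2*(r:ℂ) * (φ x y * gainAdj G φ y x)
            + 2*(r:ℂ) * ((starRingEnd ℂ (φ x y)) * gainAdj G φ x y) := by
            rw [hcdef]; ring
        _ = 4*(r:ℂ) := by rw [e3.1, e3.2]; ring
    have c4 : (-(a*b*c)*(r:ℂ)) * gainAdj G φ y v
        + (starRingEnd ℂ (-(a*b*c)*(r:ℂ))) * gainAdj G φ v y = 0 := by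
      rw [gainAdj_nadj hnadj, gainAdj_nadj (fun h => hnadj h.symm)]
      ring
    rw [c1, c2, c3, c4]
    have h10 : (10:ℝ) * r = 2 * Real.sqrt 5 := by
      rw [hr, mul_inv_eq_iff_eq_mul₀ (ne_of_gt hs0)]
      nlinarith [hs2]
    have h10c : (10:ℂ) * ((r:ℝ):ℂ) = 2 * ((Real.sqrt 5 : ℝ):ℂ) := by exact_mod_cast h10
    have hco : (4*((r:ℝ):ℂ) + (2*((r:ℝ):ℂ) + (4*((r:ℝ):ℂ) + (0 + 2*(M'.card:ℂ)))))
        = (((2*M'.card + 2*Real.sqrt 5 : ℝ)):ℂ) := by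
      push_cast
      linear_combination h10c
    rw [hco, Complex.ofReal_re]

theorem walk_stuck {G : SimpleGraph V} {v w : V}
    (hv : ∀ z, G.Adj v z → z = w) (hw : ∀ z, G.Adj w z → z = v) :
    ∀ {a b : V} (_ : G.Walk a b), (a = v ∨ a = w) → (b = v ∨ b = w) := by
  intro a b p
  induction p with
  | nil => exact id
  | cons h q ih =>
    rename_i c d e
    intro hab
    apply ih
    rcases hab with rfl|rfl
    · right; exact hv _ h
    · left; exact hw _ h

theorem matching_erase {G : SimpleGraph V} {M : Finset (Sym2 V)} (hM : IsGraphMatching G M)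
    (e : Sym2 V) : IsGraphMatching G (M.erase e) := by
  refine ⟨fun f hf => hM.1 (Finset.mem_coe.2 (Finset.mem_of_mem_erase (Finset.mem_coe.1 hf))), ?_⟩
  intro f hf f' hf' hne a ha
  exact hM.2 f (Finset.mem_of_mem_erase hf) f' (Finset.mem_of_mem_erase hf') hne a ha


end Aux

/-- a connected complex unit gain graph with at least 3 vertices having a
pendant vertex (a vertex with exactly one neighbour) has energy strictly greater than
twice the matching number. -/
theorem gainEnergy_gt_of_pendant [Fintype V] [DecidableEq V]
    (G : SimpleGraph V) (φ : V → V → ℂ) (hg : IsGain G φ)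
    (hcard : 3 ≤ Fintype.card V) (hconn : G.Connected)
    (hpend : ∃ v : V, ∃! w : V, G.Adj v w) :
    2 * (matchingNumber G : ℝ) < gainEnergy G φ hg := by
  show 2 * (matchingNumber G : ℝ) < ∑ i, |hg.isHermitian.eigenvalues i|

  classical
  obtain ⟨v, w, hvw, huniq⟩ := hpend
  -- extract maximum matching
  have hbdd : BddAbove {n | ∃ M : Finset (Sym2 V), IsGraphMatching G M ∧ M.card = n} := by
    refine ⟨Fintype.card (Sym2 V), ?_⟩
    rintro n ⟨M, _, rfl⟩
    exact Finset.card_le_univ M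
  have hne : {n | ∃ M : Finset (Sym2 V), IsGraphMatching G M ∧ M.card = n}.Nonempty :=
    ⟨0, ∅, ⟨by simp, by simp⟩, rfl⟩
  obtain ⟨M, hM, hMcard⟩ : ∃ M : Finset (Sym2 V), IsGraphMatching G M ∧
      M.card = matchingNumber G := Nat.sSup_mem hne hbdd
  have hmax : ∀ M' : Finset (Sym2 V), IsGraphMatching G M' → M'.card ≤ matchingNumber G :=
    fun M' h => le_csSup hbdd ⟨M', h, rfl⟩
  -- a second neighbour x of w
  have hx : ∃ x, G.Adj w x ∧ x ≠ v := by
    by_contra h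
    push_neg at h
    have hv' : ∀ z, G.Adj v z → z = w := fun z hz => huniq z hz
    obtain ⟨u, huv, huw⟩ : ∃ u, u ≠ v ∧ u ≠ w := by
      by_contra h'
      push_neg at h'
      have hsub : (Finset.univ : Finset V) ⊆ {v, w} := by
        intro u _
        rcases eq_or_ne u v with rfl|hne
        · exact Finset.mem_insert_self _ _
        · rw [h' u hne]; exact Finset.mem_insert_of_mem (Finset.mem_singleton_self _)
      have h2 := Finset.card_le_card hsub
      have h3 : ({v, w} : Finset V).card ≤ 2 :=
        le_trans (Finset.card_insert_le _ _) (by simp)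
      rw [Finset.card_univ] at h2
      omega
    obtain ⟨p⟩ := hconn.preconnected v u
    rcases walk_stuck hv' h p (Or.inl rfl) with rfl|rfl
    · exact huv rfl
    · exact huw rfl
  obtain ⟨x0, hwx0, hx0v⟩ := hx
  -- covered predicates
  have hcovv : (∃ e ∈ M, v ∈ e) ∨ ¬ (∃ e ∈ M, v ∈ e) := em _
  -- helper: an edge of M containing v must be s(v,w)
  have hedgev : ∀ e ∈ M, v ∈ e → e = s(v, w) := by
    intro e he hv
    obtain ⟨z, rfl⟩ := Sym2.mem_iff_exists.1 hv
    have hadj : G.Adj v z := (SimpleGraph.mem_edgeSet G).1 (hM.1 he)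
    rw [huniq z hadj]
  have hsqrt2 : (1:ℝ) < Real.sqrt 2 := by
    nlinarith [Real.sq_sqrt (show (0:ℝ) ≤ 2 by norm_num), Real.sqrt_nonneg 2]
  have hsqrt5 : (2:ℝ) < Real.sqrt 5 := by
    nlinarith [Real.sq_sqrt (show (0:ℝ) ≤ 5 by norm_num), Real.sqrt_nonneg 5]
  have hherm := hg.isHermitian
  have hxw : x0 ≠ w := hwx0.ne'
  by_cases hv : ∃ e ∈ M, v ∈ e
  · obtain ⟨e, he, hve⟩ := hv
    have hevw : e = s(v, w) := hedgev e he hve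
    have hvwM : s(v, w) ∈ M := hevw ▸ he
    by_cases hxc : ∃ f ∈ M, x0 ∈ f
    · -- P4 case
      obtain ⟨f, hf, hxf⟩ := hxc
      obtain ⟨y, rfl⟩ := Sym2.mem_iff_exists.1 hxf
      have hxyadj : G.Adj x0 y := (SimpleGraph.mem_edgeSet G).1 (hM.1 hf)
      have hfne : s(x0, y) ≠ s(v, w) := by
        intro hEq
        have : x0 ∈ s(v, w) := hEq ▸ Sym2.mem_mk_left x0 y
        rcases Sym2.mem_iff.1 this with h|h
        · exact hx0v h
        · exact hxw h
      have hyv : y ≠ v := by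
        intro h
        subst h
        exact hM.2 _ hf _ hvwM hfne y (Sym2.mem_mk_right x0 y) (Sym2.mem_mk_left y w)
      have hyw : y ≠ w := by
        intro h
        subst h
        exact hM.2 _ hf _ hvwM hfne y (Sym2.mem_mk_right x0 y) (Sym2.mem_mk_right v y)
      have hnadj : ¬ G.Adj v y := by
        intro h
        exact hyw (huniq y h)
      set M' := (M.erase s(v, w)).erase s(x0, y) with hM'def
      have hM' : IsGraphMatching G M' := matching_erase (matching_erase hM _) _
      have hsub : M' ⊆ M := Finset.Subset.trans (Finset.erase_subset _ _) (Finset.erase_subset _ _)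
      have havoid : ∀ e' ∈ M', ∀ a, a ∈ e' → a ≠ v ∧ a ≠ w ∧ a ≠ x0 ∧ a ≠ y := by
        intro e' he' a ha
        have he'M : e' ∈ M := hsub he'
        have hne1 : e' ≠ s(v, w) := Finset.ne_of_mem_erase (Finset.mem_of_mem_erase he')
        have hne2 : e' ≠ s(x0, y) := Finset.ne_of_mem_erase he'
        have h1 := hM.2 e' he'M _ hvwM hne1 a ha
        have h2 := hM.2 e' he'M _ hf hne2 a ha
        refine ⟨?_, ?_, ?_, ?_⟩ <;> intro hEq <;> subst hEq
        · exact h1 (Sym2.mem_mk_left _ _)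
        · exact h1 (Sym2.mem_mk_right _ _)
        · exact h2 (Sym2.mem_mk_left _ _)
        · exact h2 (Sym2.mem_mk_right _ _)
      obtain ⟨B, hQ, htr⟩ := P4exists hg hvw hwx0 hxyadj (Ne.symm hx0v) (Ne.symm hyv)
        (Ne.symm hyw) hnadj hM' havoid
      have hfM' : s(x0, y) ∈ M.erase s(v, w) := Finset.mem_erase.2 ⟨hfne, hf⟩
      have hc1 : M'.card + 1 = (M.erase s(v, w)).card := Finset.card_erase_add_one hfM'
      have hc2 : (M.erase s(v, w)).card + 1 = M.card := Finset.card_erase_add_one hvwM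
      have hmu : matchingNumber G = M'.card + 2 := by omega
      have hen := engine hherm hQ
      rw [htr] at hen
      rw [hmu]
      push_cast
      linarith
    · -- P3 case, x0 uncovered
      set M' := M.erase s(v, w) with hM'def
      have hM' : IsGraphMatching G M' := matching_erase hM _
      have havoid : ∀ e' ∈ M', ∀ a, a ∈ e' → a ≠ v ∧ a ≠ w ∧ a ≠ x0 := by
        intro e' he' a ha
        have he'M : e' ∈ M := Finset.mem_of_mem_erase he'
        have hne1 : e' ≠ s(v, w) := Finset.ne_of_mem_erase he'
        have h1 := hM.2 e' he'M _ hvwM hne1 a ha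
        refine ⟨?_, ?_, ?_⟩ <;> intro hEq <;> subst hEq
        · exact h1 (Sym2.mem_mk_left _ _)
        · exact h1 (Sym2.mem_mk_right _ _)
        · exact hxc ⟨e', he'M, ha⟩
      obtain ⟨B, hQ, htr⟩ := P3exists hg hvw hwx0 (Ne.symm hx0v) hM' havoid
      have hc2 : M'.card + 1 = M.card := Finset.card_erase_add_one hvwM
      have hmu : matchingNumber G = M'.card + 1 := by omega
      have hen := engine hherm hQ
      rw [htr] at hen
      rw [hmu]
      push_cast
      linarith
  · by_cases hw : ∃ f ∈ M, w ∈ f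
    · -- P3 case, w covered by s(w,x1)
      obtain ⟨f, hf, hwf⟩ := hw
      obtain ⟨x1, rfl⟩ := Sym2.mem_iff_exists.1 hwf
      have hwx1 : G.Adj w x1 := (SimpleGraph.mem_edgeSet G).1 (hM.1 hf)
      have hx1v : x1 ≠ v := by
        intro h
        subst h
        exact hv ⟨s(w, x1), hf, Sym2.mem_mk_right w x1⟩
      set M' := M.erase s(w, x1) with hM'def
      have hM' : IsGraphMatching G M' := matching_erase hM _
      have havoid : ∀ e' ∈ M', ∀ a, a ∈ e' → a ≠ v ∧ a ≠ w ∧ a ≠ x1 := by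
        intro e' he' a ha
        have he'M : e' ∈ M := Finset.mem_of_mem_erase he'
        have hne1 : e' ≠ s(w, x1) := Finset.ne_of_mem_erase he'
        have h1 := hM.2 e' he'M _ hf hne1 a ha
        refine ⟨?_, ?_, ?_⟩ <;> intro hEq <;> subst hEq
        · exact hv ⟨e', he'M, ha⟩
        · exact h1 (Sym2.mem_mk_left _ _)
        · exact h1 (Sym2.mem_mk_right _ _)
      obtain ⟨B, hQ, htr⟩ := P3exists hg hvw hwx1 (Ne.symm hx1v) hM' havoid
      have hc2 : M'.card + 1 = M.card := Finset.card_erase_add_one hf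
      have hmu : matchingNumber G = M'.card + 1 := by omega
      have hen := engine hherm hQ
      rw [htr] at hen
      rw [hmu]
      push_cast
      linarith
    · -- neither v nor w covered: contradiction with maximality
      exfalso
      have hnotM : s(v, w) ∉ M := fun h => hv ⟨_, h, Sym2.mem_mk_left v w⟩
      have hM'' : IsGraphMatching G (insert s(v, w) M) := by
        constructor
        · intro e he
          rcases Finset.mem_insert.1 (Finset.mem_coe.1 he) with rfl|he'
          · exact (SimpleGraph.mem_edgeSet G).2 hvw
          · exact hM.1 he'
        · intro e he f hf hnef a ha
          rcases Finset.mem_insert.1 he with rfl|he' <;>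
            rcases Finset.mem_insert.1 hf with rfl|hf'
          · exact absurd rfl hnef
          · rcases Sym2.mem_iff.1 ha with rfl|rfl
            · exact fun hc => hv ⟨f, hf', hc⟩
            · exact fun hc => hw ⟨f, hf', hc⟩
          · intro hc
            rcases Sym2.mem_iff.1 hc with rfl|rfl
            · exact hv ⟨e, he', ha⟩
            · exact hw ⟨e, he', ha⟩
          · exact hM.2 e he' f hf' hnef a ha
      have := hmax _ hM''
      rw [Finset.card_insert_of_notMem hnotM] at this
      omega
end

section
/- Let C̃₆ be the graph obtained from the 6-cycle v₁v₂v₃v₄v₅v₆v₁ by adding the chord v₂v₅. Then for every complex unit gain graph Φ = (C̃₆, 𝕋, φ) with underlying graph C̃₆, one has 𝓔(Φ) > 6. -/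
open Matrix

variable {V : Type*}

/-- The graph obtained from the 6-cycle `v₁v₂v₃v₄v₅v₆v₁` (vertices `0,…,5`) by adding the
chord `v₂v₅` (i.e. `1 — 4`). -/
def tildeC6 : SimpleGraph (Fin 6) :=
  SimpleGraph.fromRel fun u v =>
    (u, v) ∈ ([(0, 1), (1, 2), (2, 3), (3, 4), (4, 5), (5, 0), (1, 4)] : List (Fin 6 × Fin 6))

section AuxiliaryLemmas

open Finset

/-- Trace of a power of a Hermitian matrix is the sum of the powers of its eigenvalues. -/
lemma trace_pow_eq_sum_eigenvalues {n : Type*} [Fintype n] [DecidableEq n]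
    {M : Matrix n n ℂ} (hM : M.IsHermitian) (k : ℕ) :
    (M ^ k).trace = ∑ i, ((hM.eigenvalues i : ℂ)) ^ k := by
  set U : Matrix n n ℂ := (Matrix.IsHermitian.eigenvectorUnitary hM : Matrix n n ℂ) with hU
  set D : Matrix n n ℂ := Matrix.diagonal (RCLike.ofReal ∘ hM.eigenvalues) with hD
  have hmem := (Matrix.IsHermitian.eigenvectorUnitary hM).2
  have hUU : star U * U = 1 := Matrix.mem_unitaryGroup_iff'.mp hmem
  have hUU' : U * star U = 1 := Matrix.mem_unitaryGroup_iff.mp hmem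
  have hspec : M = U * D * star U := hM.spectral_theorem
  have hpow : ∀ m : ℕ, M ^ m = U * D ^ m * star U := by
    intro m
    induction m with
    | zero => simp [pow_zero, Matrix.mul_one, hUU']
    | succ m ih =>
      rw [pow_succ, ih, pow_succ]
      conv_lhs => rw [hspec]
      rw [show U * D ^ m * star U * (U * D * star U)
            = U * D ^ m * (star U * U) * D * star U by
          simp only [Matrix.mul_assoc], hUU, Matrix.mul_one]
      simp only [Matrix.mul_assoc]
  rw [hpow k, Matrix.trace_mul_cycle, hUU, Matrix.one_mul,
    Matrix.diagonal_pow, Matrix.trace_diagonal]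
  rfl

instance : DecidableRel tildeC6.Adj := fun u v =>
  decidable_of_iff _ (SimpleGraph.fromRel_adj _ u v).symm

/-- The 0-1 adjacency matrix of `tildeC6`, over `ℕ`. -/
def auxN : Matrix (Fin 6) (Fin 6) ℕ :=
  !![0,1,0,0,0,1; 1,0,1,0,1,0; 0,1,0,1,0,0; 0,0,1,0,1,0; 0,1,0,1,0,1; 1,0,0,0,1,0]

lemma auxN_adj : ∀ u v, tildeC6.Adj u v → auxN u v = 1 := by
  intro u v h; fin_cases u <;> fin_cases v <;> simp_all [auxN, tildeC6]

lemma auxN_dartcount :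
    (∑ u : Fin 6, ∑ v : Fin 6, if tildeC6.Adj u v then (1 : ℕ) else 0) = 14 := by decide

lemma auxN_four : (∑ u : Fin 6, ∑ w : Fin 6, ((auxN * auxN) u w) ^ 2) = 70 := by decide

end AuxiliaryLemmas


/-- every complex unit gain graph with underlying graph `tildeC6` has energy
strictly greater than `6`. -/
theorem gainEnergy_tildeC6_gt_six (φ : Fin 6 → Fin 6 → ℂ) (hg : IsGain tildeC6 φ) :
    6 < gainEnergy tildeC6 φ hg := by
  have hA := hg.isHermitian
  set A : Matrix (Fin 6) (Fin 6) ℂ := gainAdj tildeC6 φ with hAdef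
  set e : Fin 6 → ℝ := hA.eigenvalues with he
  -- basic entry facts
  have hzero : ∀ u v, ¬ tildeC6.Adj u v → A u v = 0 := by
    intro u v h
    simp only [hAdef, gainAdj]
    rw [if_neg h]
  have habs1 : ∀ u v, tildeC6.Adj u v → ‖A u v‖ = 1 := by
    intro u v h
    simp only [hAdef, gainAdj]
    rw [if_pos h]
    exact hg.unit u v h
  have hone : ∀ u v, tildeC6.Adj u v → A u v * A v u = 1 := by
    intro u v h
    have h1 : ‖φ u v‖ = 1 := hg.unit u v h
    have hne : φ u v ≠ 0 := by
      intro h0; rw [h0] at h1; simp at h1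
    simp only [hAdef, gainAdj]
    rw [if_pos h, if_pos h.symm, hg.inv u v h, mul_inv_cancel₀ hne]
  -- trace of A^2 equals 14
  have htr2 : (A ^ 2).trace = 14 := by
    rw [pow_two, Matrix.trace]
    simp only [Matrix.diag, Matrix.mul_apply]
    have key : ∀ u v : Fin 6, A u v * A v u
        = (((if tildeC6.Adj u v then (1 : ℕ) else 0) : ℕ) : ℂ) := by
      intro u v
      by_cases h : tildeC6.Adj u v
      · rw [if_pos h, hone u v h]; norm_num
      · rw [if_neg h, hzero u v h, zero_mul]; norm_num
    simp only [key, ← Nat.cast_sum]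
    rw [auxN_dartcount]
    norm_num
  -- trace of A^4 is at most 70
  have hsq : (A ^ 2).IsHermitian := hA.pow 2
  have habs : ∀ u v, ‖A u v‖ ≤ ((auxN u v : ℕ) : ℝ) := by
    intro u v
    by_cases h : tildeC6.Adj u v
    · rw [habs1 u v h, auxN_adj u v h]; norm_num
    · rw [hzero u v h]
      simp only [norm_zero]
      positivity
  have habs2 : ∀ u w, ‖(A ^ 2) u w‖ ≤ (((auxN * auxN) u w : ℕ) : ℝ) := by
    intro u w
    rw [pow_two, Matrix.mul_apply]
    calc ‖∑ v, A u v * A v w‖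
        ≤ ∑ v, ‖A u v * A v w‖ := norm_sum_le _ _
      _ ≤ ∑ v : Fin 6, ((auxN u v : ℕ) : ℝ) * ((auxN v w : ℕ) : ℝ) := by
          apply Finset.sum_le_sum
          intro v _
          rw [norm_mul]
          exact mul_le_mul (habs u v) (habs v w) (norm_nonneg _) (Nat.cast_nonneg _)
      _ = (((auxN * auxN) u w : ℕ) : ℝ) := by
          rw [Matrix.mul_apply]
          push_cast
          rfl
  have htr4 : (A ^ 4).trace.re ≤ 70 := by
    have hherm : ∀ u w, (A ^ 2) w u = (starRingEnd ℂ) ((A ^ 2) u w) := by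
      intro u w
      conv_lhs => rw [← hsq]
      simp [Matrix.conjTranspose_apply]
    have h44 : (A ^ 4).trace = ((∑ u, ∑ w, (‖(A ^ 2) u w‖) ^ 2 : ℝ) : ℂ) := by
      rw [show (4 : ℕ) = 2 + 2 by norm_num, pow_add, Matrix.trace]
      simp only [Matrix.diag, Matrix.mul_apply]
      push_cast
      refine Finset.sum_congr rfl fun u _ => Finset.sum_congr rfl fun w _ => ?_
      rw [hherm u w, Complex.mul_conj, ← Complex.sq_norm]
      push_cast
      ring
    rw [h44, Complex.ofReal_re]
    calc (∑ u, ∑ w, (‖(A ^ 2) u w‖) ^ 2 : ℝ)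
        ≤ ∑ u, ∑ w, ((((auxN * auxN) u w : ℕ) : ℝ)) ^ 2 := by
          apply Finset.sum_le_sum
          intro u _
          apply Finset.sum_le_sum
          intro w _
          exact pow_le_pow_left₀ (norm_nonneg _) (habs2 u w) 2
      _ = ((∑ u, ∑ w, ((auxN * auxN) u w) ^ 2 : ℕ) : ℝ) := by push_cast; rfl
      _ = 70 := by rw [auxN_four]; norm_num
  -- eigenvalue power sums
  have h2 : ∑ i, e i ^ 2 = 14 := by
    have h := trace_pow_eq_sum_eigenvalues hA 2
    rw [htr2] at h
    have h' : ((∑ i, e i ^ 2 : ℝ) : ℂ) = 14 := by push_cast; exact h.symm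
    exact_mod_cast h'
  have h4 : ∑ i, e i ^ 4 ≤ 70 := by
    have h := trace_pow_eq_sum_eigenvalues hA 4
    have h' : ((∑ i, e i ^ 4 : ℝ) : ℂ) = (A ^ 4).trace := by push_cast; exact h.symm
    have h'' : ∑ i, e i ^ 4 = (A ^ 4).trace.re := by rw [← h', Complex.ofReal_re]
    rw [h'']
    exact htr4
  -- Cauchy–Schwarz twice
  have hCS1 : (∑ i, e i ^ 2) ^ 2 ≤ (∑ i, |e i|) * (∑ i, |e i| ^ 3) := by
    have h := Finset.sum_mul_sq_le_sq_mul_sq Finset.univ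
      (fun i => Real.sqrt |e i|) (fun i => |e i| * Real.sqrt |e i|)
    have key1 : ∀ i : Fin 6, Real.sqrt |e i| * (|e i| * Real.sqrt |e i|) = e i ^ 2 := by
      intro i
      rw [show Real.sqrt |e i| * (|e i| * Real.sqrt |e i|)
            = |e i| * (Real.sqrt |e i| * Real.sqrt |e i|) by ring,
        Real.mul_self_sqrt (abs_nonneg _), abs_mul_abs_self, sq]
    have key2 : ∀ i : Fin 6, (Real.sqrt |e i|) ^ 2 = |e i| := fun i =>
      Real.sq_sqrt (abs_nonneg _)
    have key3 : ∀ i : Fin 6, (|e i| * Real.sqrt |e i|) ^ 2 = |e i| ^ 3 := by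
      intro i
      rw [mul_pow, Real.sq_sqrt (abs_nonneg _)]
      ring
    simp only [key1, key2, key3] at h
    exact h
  have hCS2 : (∑ i, |e i| ^ 3) ^ 2 ≤ (∑ i, e i ^ 2) * (∑ i, e i ^ 4) := by
    have h := Finset.sum_mul_sq_le_sq_mul_sq Finset.univ
      (fun i => |e i|) (fun i => e i ^ 2)
    have key1 : ∀ i : Fin 6, |e i| * e i ^ 2 = |e i| ^ 3 := by
      intro i
      rw [← sq_abs]
      ring
    have key2 : ∀ i : Fin 6, |e i| ^ 2 = e i ^ 2 := fun i => sq_abs _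
    have key3 : ∀ i : Fin 6, (e i ^ 2) ^ 2 = e i ^ 4 := by intro i; ring
    simp only [key1, key2, key3] at h
    exact h
  -- conclude numerically
  have hS3nonneg : 0 ≤ ∑ i, |e i| ^ 3 := by positivity
  have hEnonneg : 0 ≤ ∑ i, |e i| := by positivity
  have hS2 : (∑ i, e i ^ 2) = 14 := h2
  rw [hS2] at hCS1
  have hS3sq : (∑ i, |e i| ^ 3) ^ 2 ≤ 980 := by
    calc (∑ i, |e i| ^ 3) ^ 2 ≤ (∑ i, e i ^ 2) * (∑ i, e i ^ 4) := hCS2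
      _ ≤ 14 * 70 := by
          rw [hS2]
          have h2nonneg : (0:ℝ) ≤ 14 := by norm_num
          nlinarith [h4]
      _ = 980 := by norm_num
  show 6 < ∑ i, |e i|
  nlinarith [hCS1, hS3sq, hS3nonneg, hEnonneg]
end

section
/- Let Φ = (G, 𝕋, φ) be a complex unit gain graph and let G₁ be an induced subgraph of G with μ(G) = μ(G₁) + μ(G − G₁), where G − G₁ is the subgraph induced by the vertices outside G₁. If 𝓔(Φ) = 2μ(G), then the restricted gain graph (G₁, 𝕋, φ) satisfies 𝓔(G₁, 𝕋, φ) = 2μ(G₁). -/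
open Matrix

variable {V : Type*}

section AuxEnergyLemmas

open Finset

set_option linter.unusedSectionVars false
set_option linter.unusedTactic false
set_option maxHeartbeats 1000000

variable {n : Type*} [Fintype n] [DecidableEq n]

lemma star_dot_self (v : n → ℂ) :
    star v ⬝ᵥ v = ((∑ i, ‖v i‖ ^ 2 : ℝ) : ℂ) := by
  simp only [dotProduct, Pi.star_apply, Complex.sq_norm]
  push_cast
  congr 1
  ext i
  exact (Complex.normSq_eq_conj_mul_self (z := v i)).symm ▸ rfl

noncomputable def signMat {A : Matrix n n ℂ} (hA : A.IsHermitian) : Matrix n n ℂ :=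
  (hA.eigenvectorUnitary : Matrix n n ℂ) *
    diagonal (fun i => (Real.sign (hA.eigenvalues i) : ℂ)) *
    star (hA.eigenvectorUnitary : Matrix n n ℂ)

lemma mySign_mul_self (r : ℝ) : r * Real.sign r = |r| := by
  rcases lt_trichotomy r 0 with h | h | h
  · rw [Real.sign_of_neg h, abs_of_neg h]; ring
  · simp [h]
  · rw [Real.sign_of_pos h, abs_of_pos h]; ring

lemma trace_mul_signMat {A : Matrix n n ℂ} (hA : A.IsHermitian) :
    (A * signMat hA).trace = ((∑ i, |hA.eigenvalues i| : ℝ) : ℂ) := by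
  set U : Matrix n n ℂ := (hA.eigenvectorUnitary : Matrix n n ℂ) with hU
  have hsU : star U * U = 1 := Unitary.coe_star_mul_self hA.eigenvectorUnitary
  set D : Matrix n n ℂ := diagonal (RCLike.ofReal ∘ hA.eigenvalues) with hD
  set E : Matrix n n ℂ := diagonal (fun i => (Real.sign (hA.eigenvalues i) : ℂ)) with hE
  have hspec : A = U * D * star U := hA.spectral_theorem
  have : A * signMat hA = U * (D * E) * star U := by
    have hs : signMat hA = U * E * star U := rfl
    rw [hs, hspec]
    calc U * D * star U * (U * E * star U)
        = U * D * (star U * U) * E * star U := by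
          simp only [Matrix.mul_assoc]
      _ = U * (D * E) * star U := by rw [hsU]; simp only [Matrix.mul_one, Matrix.mul_assoc]
  rw [this, trace_mul_cycle, ← Matrix.mul_assoc, hsU, Matrix.one_mul]
  rw [hD, hE, diagonal_mul_diagonal, trace_diagonal]
  push_cast
  refine Finset.sum_congr rfl fun i _ => ?_
  rw [Function.comp_apply]
  have hco : (RCLike.ofReal (K := ℂ) (hA.eigenvalues i)) = ((hA.eigenvalues i : ℝ) : ℂ) := rfl
  rw [hco, ← Complex.ofReal_mul, mySign_mul_self (hA.eigenvalues i)]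

lemma signMat_quad {A : Matrix n n ℂ} (hA : A.IsHermitian) (x : n → ℂ) :
    ‖star x ⬝ᵥ signMat hA *ᵥ x‖ ≤ ∑ i, ‖x i‖ ^ 2 := by
  set U : Matrix n n ℂ := (hA.eigenvectorUnitary : Matrix n n ℂ) with hU
  have hUs : U * star U = 1 := Unitary.coe_mul_star_self hA.eigenvectorUnitary
  set E : Matrix n n ℂ := diagonal (fun i => (Real.sign (hA.eigenvalues i) : ℂ)) with hE
  set y : n → ℂ := star U *ᵥ x with hy
  have key : ∀ M : Matrix n n ℂ, star x ⬝ᵥ (U * M * star U) *ᵥ x = star y ⬝ᵥ M *ᵥ y := by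
    intro M
    have hstar : star y = star x ᵥ* U := by
      rw [hy, star_mulVec, star_eq_conjTranspose, conjTranspose_conjTranspose]
    rw [hstar, hy, ← dotProduct_mulVec, mulVec_mulVec, mulVec_mulVec, Matrix.mul_assoc]
  have hEy : star x ⬝ᵥ signMat hA *ᵥ x = star y ⬝ᵥ E *ᵥ y := key E
  have hnorm : (∑ i, ‖y i‖ ^ 2) = ∑ i, ‖x i‖ ^ 2 := by
    have h1 : star y ⬝ᵥ y = star x ⬝ᵥ x := by
      have h := key 1
      rw [Matrix.mul_one, hUs] at h
      simpa using h.symm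
    rw [star_dot_self, star_dot_self] at h1
    exact_mod_cast h1
  rw [hEy, ← hnorm]
  have : star y ⬝ᵥ E *ᵥ y = ∑ i, (Real.sign (hA.eigenvalues i) : ℂ) * (star (y i) * y i) := by
    simp only [hE, dotProduct, mulVec_diagonal, Pi.star_apply]
    refine Finset.sum_congr rfl fun i _ => ?_
    ring
  rw [this]
  refine le_trans (norm_sum_le _ _) (Finset.sum_le_sum fun i _ => ?_)
  have h2 : (star (y i) * y i) = ((‖y i‖ ^ 2 : ℝ) : ℂ) := by
    rw [Complex.star_def, ← Complex.normSq_eq_conj_mul_self, Complex.sq_norm]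
  rw [h2, norm_mul, Complex.norm_real, Real.norm_eq_abs, Complex.norm_real, Real.norm_eq_abs,
    abs_of_nonneg (by positivity : (0:ℝ) ≤ ‖y i‖ ^ 2)]
  have hs1 : |Real.sign (hA.eigenvalues i)| ≤ 1 := by
    rcases lt_trichotomy (hA.eigenvalues i) 0 with h | h | h
    · rw [Real.sign_of_neg h]; norm_num
    · simp [h]
    · rw [Real.sign_of_pos h]; norm_num
  exact mul_le_of_le_one_left (by positivity) hs1


lemma abs_trace_le {A S : Matrix n n ℂ} (hA : A.IsHermitian)
    (hS : ∀ x : n → ℂ, ‖star x ⬝ᵥ S *ᵥ x‖ ≤ ∑ i, ‖x i‖ ^ 2) :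
    ‖(A * S).trace‖ ≤ ∑ i, |hA.eigenvalues i| := by
  set U : Matrix n n ℂ := (hA.eigenvectorUnitary : Matrix n n ℂ) with hU
  have hsU : star U * U = 1 := Unitary.coe_star_mul_self hA.eigenvectorUnitary
  have hUs : U * star U = 1 := Unitary.coe_mul_star_self hA.eigenvectorUnitary
  set D : Matrix n n ℂ := diagonal (RCLike.ofReal ∘ hA.eigenvalues) with hD
  have hspec : A = U * D * star U := hA.spectral_theorem
  -- trace computation
  have htr : (A * S).trace = ∑ i, (hA.eigenvalues i : ℂ) * (star U * S * U) i i := by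
    calc (A * S).trace = (U * (D * (star U * S))).trace := by
          rw [hspec]; simp only [Matrix.mul_assoc]
      _ = ((D * (star U * S)) * U).trace := trace_mul_comm _ _
      _ = (D * (star U * S * U)).trace := by rw [Matrix.mul_assoc]
      _ = ∑ i, (hA.eigenvalues i : ℂ) * (star U * S * U) i i := by
          simp [Matrix.trace, Matrix.diag, Matrix.diagonal_mul, hD]
  rw [htr]
  refine le_trans (norm_sum_le _ _) ?_
  refine Finset.sum_le_sum fun i _ => ?_
  rw [norm_mul, Complex.norm_real, Real.norm_eq_abs]
  have hquad : (star U * S * U) i i = star (fun a => U a i) ⬝ᵥ S *ᵥ (fun a => U a i) := by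
    simp only [Matrix.mul_apply, dotProduct, mulVec, Pi.star_apply, conjTranspose_apply,
      star_apply, Finset.sum_mul, Finset.mul_sum]
    rw [Finset.sum_comm]
    refine Finset.sum_congr rfl fun a _ => Finset.sum_congr rfl fun b _ => ?_
    ring
  have hcol : ∑ a, ‖U a i‖ ^ 2 = 1 := by
    have h1 : (star U * U) i i = 1 := by rw [hsU]; simp
    have h2 : star (fun a => U a i) ⬝ᵥ (fun a => U a i)
        = ((∑ a, ‖U a i‖ ^ 2 : ℝ) : ℂ) := star_dot_self _
    have h3 : (star U * U) i i = star (fun a => U a i) ⬝ᵥ (fun a => U a i) := by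
      simp [Matrix.mul_apply, dotProduct]
    rw [h3, h2] at h1
    exact_mod_cast h1
  calc |hA.eigenvalues i| * ‖(star U * S * U) i i‖
      ≤ |hA.eigenvalues i| * 1 := by
        refine mul_le_mul_of_nonneg_left ?_ (abs_nonneg _)
        rw [hquad]
        exact le_trans (hS _) (le_of_eq hcol)
    _ = |hA.eigenvalues i| := mul_one _


variable {V : Type*} [Fintype V] [DecidableEq V]


lemma split_single (U : Finset V) {M : Type*} [AddCommMonoid M] (f : V → M) :
    (∑ v : (↑U : Set V), f ↑v) + (∑ v : (↑(Uᶜ) : Set V), f ↑v) = ∑ v, f v := by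
  rw [← Finset.sum_subtype U (fun x => by simp) f,
    ← Finset.sum_subtype (Uᶜ) (fun x => by simp) f]
  exact Finset.sum_add_sum_compl U f

lemma split_sum (U : Finset V) (F : V → V → ℂ)
    (h0 : ∀ v w, ¬(v ∈ U ↔ w ∈ U) → F v w = 0) :
    ∑ v, ∑ w, F v w =
      (∑ v : (↑U : Set V), ∑ w : (↑U : Set V), F ↑v ↑w) +
        (∑ v : (↑(Uᶜ) : Set V), ∑ w : (↑(Uᶜ) : Set V), F ↑v ↑w) := by
  have inner1 : ∀ v : V, v ∈ U → ∑ w, F v w = ∑ w : (↑U : Set V), F v ↑w := by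
    intro v hv
    rw [← Finset.sum_subtype U (fun x => by simp) (F v)]
    refine (Finset.sum_subset (Finset.subset_univ U) fun w _ hw => ?_).symm
    exact h0 v w (by tauto)
  have inner2 : ∀ v : V, v ∈ Uᶜ → ∑ w, F v w = ∑ w : (↑(Uᶜ) : Set V), F v ↑w := by
    intro v hv
    rw [← Finset.sum_subtype (Uᶜ) (fun x => by simp) (F v)]
    refine (Finset.sum_subset (Finset.subset_univ (Uᶜ)) fun w _ hw => ?_).symm
    rw [Finset.mem_compl] at hv hw
    push_neg at hw
    exact h0 v w (by tauto)
  calc ∑ v, ∑ w, F v w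
      = (∑ v ∈ U, ∑ w, F v w) + ∑ v ∈ Uᶜ, ∑ w, F v w :=
        (Finset.sum_add_sum_compl U _).symm
    _ = (∑ v ∈ U, ∑ w : (↑U : Set V), F v ↑w) +
          ∑ v ∈ Uᶜ, ∑ w : (↑(Uᶜ) : Set V), F v ↑w := by
        rw [Finset.sum_congr rfl inner1, Finset.sum_congr rfl inner2]
    _ = _ := by
        rw [Finset.sum_subtype (p := fun x => x ∈ (↑U : Set V)) U (fun x => by simp)
            (fun v => ∑ w : (↑U : Set V), F v ↑w),
          Finset.sum_subtype (p := fun x => x ∈ (↑(Uᶜ) : Set V)) (Uᶜ) (fun x => by simp)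
            (fun v => ∑ w : (↑(Uᶜ) : Set V), F v ↑w)]


lemma pinch (A : Matrix V V ℂ) (hA : A.IsHermitian) (U : Finset V)
    (h1 : (A.submatrix (Subtype.val : (↑U : Set V) → V) Subtype.val).IsHermitian)
    (h2 : (A.submatrix (Subtype.val : (↑(Uᶜ) : Set V) → V) Subtype.val).IsHermitian) :
    (∑ i, |h1.eigenvalues i|) + (∑ i, |h2.eigenvalues i|) ≤ ∑ i, |hA.eigenvalues i| := by
  classical
  set A₁ := A.submatrix (Subtype.val : (↑U : Set V) → V) Subtype.val with hA₁
  set A₂ := A.submatrix (Subtype.val : (↑(Uᶜ) : Set V) → V) Subtype.val with hA₂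
  set S₁ := signMat h1 with hS₁
  set S₂ := signMat h2 with hS₂
  set S : Matrix V V ℂ := fun v w =>
    if h : v ∈ U ∧ w ∈ U then S₁ ⟨v, h.1⟩ ⟨w, h.2⟩
    else if h' : v ∉ U ∧ w ∉ U then
      S₂ ⟨v, by simp [h'.1]⟩ ⟨w, by simp [h'.2]⟩
    else 0 with hSdef
  have hS11 : ∀ (v w : V) (hv : v ∈ (↑U : Set V)) (hw : w ∈ (↑U : Set V)),
      S v w = S₁ ⟨v, hv⟩ ⟨w, hw⟩ := by
    intro v w hv hw
    have hv' : v ∈ U := hv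
    have hw' : w ∈ U := hw
    simp only [hSdef, dif_pos (And.intro hv' hw')]
  have hS22 : ∀ (v w : V) (hv : v ∈ (↑(Uᶜ) : Set V)) (hw : w ∈ (↑(Uᶜ) : Set V)),
      S v w = S₂ ⟨v, hv⟩ ⟨w, hw⟩ := by
    intro v w hv hw
    have hv' : v ∉ U := by simpa using hv
    have hw' : w ∉ U := by simpa using hw
    simp only [hSdef, dif_neg (by tauto : ¬(v ∈ U ∧ w ∈ U)),
      dif_pos (And.intro hv' hw')]
  have hS0 : ∀ v w : V, ¬(v ∈ U ↔ w ∈ U) → S v w = 0 := by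
    intro v w h
    simp only [hSdef]
    rw [dif_neg (by tauto), dif_neg (by tauto)]
  -- quadratic form bound
  have hquad : ∀ x : V → ℂ,
      ‖star x ⬝ᵥ S *ᵥ x‖ ≤ ∑ i, ‖x i‖ ^ 2 := by
    intro x
    set x₁ : (↑U : Set V) → ℂ := fun i => x ↑i with hx₁
    set x₂ : (↑(Uᶜ) : Set V) → ℂ := fun i => x ↑i with hx₂
    have hsplit : star x ⬝ᵥ S *ᵥ x =
        (star x₁ ⬝ᵥ S₁ *ᵥ x₁) + (star x₂ ⬝ᵥ S₂ *ᵥ x₂) := by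
      have e1 : star x ⬝ᵥ S *ᵥ x = ∑ v, ∑ w, star (x v) * S v w * x w := by
        simp only [dotProduct, mulVec, Pi.star_apply, Finset.mul_sum]
        exact Finset.sum_congr rfl fun v _ => Finset.sum_congr rfl fun w _ => by ring
      rw [e1, split_sum U _ (fun v w h => by rw [hS0 v w h]; ring)]
      congr 1
      · simp only [dotProduct, mulVec, Pi.star_apply, Finset.mul_sum]
        refine Finset.sum_congr rfl fun v _ => Finset.sum_congr rfl fun w _ => ?_
        rw [hS11 ↑v ↑w v.2 w.2]
        simp only [Subtype.coe_eta]
        ring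
      · simp only [dotProduct, mulVec, Pi.star_apply, Finset.mul_sum]
        refine Finset.sum_congr rfl fun v _ => Finset.sum_congr rfl fun w _ => ?_
        rw [hS22 ↑v ↑w v.2 w.2]
        simp only [Subtype.coe_eta]
        ring
    rw [hsplit]
    calc ‖star x₁ ⬝ᵥ S₁ *ᵥ x₁ + star x₂ ⬝ᵥ S₂ *ᵥ x₂‖
        ≤ ‖star x₁ ⬝ᵥ S₁ *ᵥ x₁‖ + ‖star x₂ ⬝ᵥ S₂ *ᵥ x₂‖ :=
          norm_add_le _ _
      _ ≤ (∑ i : (↑U : Set V), ‖x₁ i‖ ^ 2) +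
            ∑ i : (↑(Uᶜ) : Set V), ‖x₂ i‖ ^ 2 :=
          add_le_add (signMat_quad h1 x₁) (signMat_quad h2 x₂)
      _ = ∑ i, ‖x i‖ ^ 2 :=
          split_single U (fun v => ‖x v‖ ^ 2)
  -- trace identity
  have htrace : (A * S).trace =
      ((∑ i, |h1.eigenvalues i| : ℝ) : ℂ) + ((∑ i, |h2.eigenvalues i| : ℝ) : ℂ) := by
    have e1 : (A * S).trace = ∑ v, ∑ w, A v w * S w v := by
      simp [Matrix.trace, Matrix.diag, Matrix.mul_apply]
    rw [e1, split_sum U _ (fun v w h => by rw [hS0 w v (by tauto)]; ring)]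
    rw [← trace_mul_signMat h1, ← trace_mul_signMat h2]
    congr 1
    · rw [show (A₁ * signMat h1).trace = ∑ v, ∑ w, A₁ v w * S₁ w v by
        simp [Matrix.trace, Matrix.diag, Matrix.mul_apply, hS₁]]
      refine Finset.sum_congr rfl fun v _ => Finset.sum_congr rfl fun w _ => ?_
      rw [hS11 ↑w ↑v w.2 v.2]
      simp [hA₁, Subtype.coe_eta]
    · rw [show (A₂ * signMat h2).trace = ∑ v, ∑ w, A₂ v w * S₂ w v by
        simp [Matrix.trace, Matrix.diag, Matrix.mul_apply, hS₂]]
      refine Finset.sum_congr rfl fun v _ => Finset.sum_congr rfl fun w _ => ?_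
      rw [hS22 ↑w ↑v w.2 v.2]
      simp [hA₂, Subtype.coe_eta]
  have habs := abs_trace_le hA hquad
  rw [htrace] at habs
  have h1n : (0:ℝ) ≤ ∑ i, |h1.eigenvalues i| :=
    Finset.sum_nonneg fun i _ => abs_nonneg _
  have h2n : (0:ℝ) ≤ ∑ i, |h2.eigenvalues i| :=
    Finset.sum_nonneg fun i _ => abs_nonneg _
  calc (∑ i, |h1.eigenvalues i|) + ∑ i, |h2.eigenvalues i|
      = ‖((∑ i, |h1.eigenvalues i| : ℝ) : ℂ) +
          ((∑ i, |h2.eigenvalues i| : ℝ) : ℂ)‖ := by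
        rw [← Complex.ofReal_add, Complex.norm_real, Real.norm_eq_abs, abs_of_nonneg (by linarith)]
    _ ≤ ∑ i, |hA.eigenvalues i| := habs


lemma exists_max_matching [Fintype V] [DecidableEq V] (G : SimpleGraph V) :
    ∃ M : Finset (Sym2 V), IsGraphMatching G M ∧ M.card = matchingNumber G := by
  have hne : {n | ∃ M : Finset (Sym2 V), IsGraphMatching G M ∧ M.card = n}.Nonempty :=
    ⟨0, ∅, ⟨by simp, by simp⟩, by simp⟩
  have hbdd : BddAbove {n | ∃ M : Finset (Sym2 V), IsGraphMatching G M ∧ M.card = n} := by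
    refine ⟨Fintype.card (Sym2 V), fun n hn => ?_⟩
    obtain ⟨M, _, hc⟩ := hn
    exact hc ▸ Finset.card_le_univ M
  exact Nat.sSup_mem hne hbdd

lemma matching_pairs_card [Fintype V] [DecidableEq V] {G : SimpleGraph V}
    {M : Finset (Sym2 V)} (hM : IsGraphMatching G M) :
    (Finset.univ.filter (fun p : V × V => s(p.1, p.2) ∈ M)).card = 2 * M.card := by
  classical
  set P := Finset.univ.filter (fun p : V × V => s(p.1, p.2) ∈ M) with hP
  rw [Finset.card_eq_sum_card_fiberwise
    (f := fun p : V × V => s(p.1, p.2)) (s := P) (t := M)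
    (fun p hp => (Finset.mem_filter.mp hp).2)]
  rw [Finset.sum_congr rfl (g := fun _ => 2) ?_, Finset.sum_const, smul_eq_mul, mul_comm]
  intro e he
  have hee : e ∈ G.edgeSet := hM.1 he
  induction e with
  | _ a b =>
    have hadj : G.Adj a b := hee
    have hne : a ≠ b := hadj.ne
    have : P.filter (fun p => s(p.1, p.2) = s(a, b)) = {(a, b), (b, a)} := by
      ext p
      simp only [hP, Finset.mem_filter, Finset.mem_univ, true_and,
        Finset.mem_insert, Finset.mem_singleton]
      constructor
      · rintro ⟨-, hpe⟩
        rcases Sym2.eq_iff.mp hpe with ⟨h1, h2⟩ | ⟨h1, h2⟩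
        · left; exact Prod.ext h1 h2
        · right; exact Prod.ext h1 h2
      · rintro (rfl | rfl)
        · exact ⟨he, rfl⟩
        · exact ⟨by rwa [Sym2.eq_swap], Sym2.eq_swap⟩
    rw [this, Finset.card_pair (by simp [hne, Prod.ext_iff])]

lemma matching_fst_inj [DecidableEq V] {G : SimpleGraph V} {M : Finset (Sym2 V)}
    (hM : IsGraphMatching G M) {p q : V × V}
    (hp : s(p.1, p.2) ∈ M) (hq : s(q.1, q.2) ∈ M) (h1 : p.1 = q.1) : p = q := by
  have hpe : G.Adj p.1 p.2 := hM.1 hp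
  have hqe : G.Adj q.1 q.2 := hM.1 hq
  have heq : s(p.1, p.2) = s(q.1, q.2) := by
    by_contra hne
    exact hM.2 _ hp _ hq hne p.1 (Sym2.mem_mk_left _ _) (h1 ▸ Sym2.mem_mk_left _ _)
  rw [h1] at heq
  rcases Sym2.eq_iff.mp heq with ⟨-, h2⟩ | ⟨ha, hb⟩
  · exact Prod.ext h1 h2
  · exact absurd ha hqe.ne

lemma matching_snd_inj [DecidableEq V] {G : SimpleGraph V} {M : Finset (Sym2 V)}
    (hM : IsGraphMatching G M) {p q : V × V}
    (hp : s(p.1, p.2) ∈ M) (hq : s(q.1, q.2) ∈ M) (h2 : p.2 = q.2) : p = q := by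
  have h := matching_fst_inj hM (p := (p.2, p.1)) (q := (q.2, q.1))
    (by rwa [Sym2.eq_swap]) (by rwa [Sym2.eq_swap]) h2
  exact Prod.ext (congrArg Prod.snd h) (congrArg Prod.fst h)

lemma two_mu_core [Fintype V] [DecidableEq V] {G : SimpleGraph V} {M : Finset (Sym2 V)}
    (hM : IsGraphMatching G M) {A : Matrix V V ℂ} (hA : A.IsHermitian)
    (habs1 : ∀ v w : V, s(v, w) ∈ M → ‖A v w‖ = 1) :
    2 * (M.card : ℝ) ≤ ∑ i, |hA.eigenvalues i| := by
  classical
  set S : Matrix V V ℂ := fun v w => if s(v, w) ∈ M then A v w else 0 with hSdef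
  have hunit : ∀ v w : V, s(v, w) ∈ M → A v w * A w v = 1 := by
    intro v w h
    have h2 : A w v = star (A v w) := by rw [← hA.apply v w, star_star]
    rw [h2, Complex.star_def, Complex.mul_conj]
    rw [← Complex.sq_norm, habs1 v w h]
    norm_num
  -- trace computation
  have htr : (A * S).trace = (2 * M.card : ℝ) := by
    have e1 : (A * S).trace = ∑ v, ∑ w, A v w * S w v := by
      simp [Matrix.trace, Matrix.diag, Matrix.mul_apply]
    have e2 : ∀ v w : V, A v w * S w v = if s(v, w) ∈ M then (1 : ℂ) else 0 := by
      intro v w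
      by_cases h : s(v, w) ∈ M
      · have h' : s(w, v) ∈ M := by rwa [Sym2.eq_swap]
        rw [if_pos h, hSdef]
        simp only
        rw [if_pos h', hunit v w h]
      · have h' : s(w, v) ∉ M := fun hc => h (by rwa [Sym2.eq_swap] at hc)
        rw [if_neg h, hSdef]
        simp only
        rw [if_neg h', mul_zero]
    rw [e1]
    simp_rw [e2]
    rw [← Fintype.sum_prod_type
      (f := fun p : V × V => if s(p.1, p.2) ∈ M then (1 : ℂ) else 0)]
    rw [Finset.sum_boole]
    rw [matching_pairs_card hM]
    push_cast
    ring
  have hquad : ∀ x : V → ℂ, ‖star x ⬝ᵥ S *ᵥ x‖ ≤ ∑ i, ‖x i‖ ^ 2 := by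
    intro x
    set P := Finset.univ.filter (fun p : V × V => s(p.1, p.2) ∈ M) with hP
    have e1 : star x ⬝ᵥ S *ᵥ x = ∑ p ∈ P, star (x p.1) * A p.1 p.2 * x p.2 := by
      have e0 : star x ⬝ᵥ S *ᵥ x = ∑ p : V × V, star (x p.1) * S p.1 p.2 * x p.2 := by
        rw [Fintype.sum_prod_type (f := fun p : V × V => star (x p.1) * S p.1 p.2 * x p.2)]
        simp only [dotProduct, mulVec, Pi.star_apply, Finset.mul_sum]
        exact Finset.sum_congr rfl fun v _ => Finset.sum_congr rfl fun w _ => by ring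
      rw [e0, hP, Finset.sum_filter]
      refine Finset.sum_congr rfl fun p _ => ?_
      by_cases h : s(p.1, p.2) ∈ M
      · rw [if_pos h]
        have : S p.1 p.2 = A p.1 p.2 := if_pos h
        rw [this]
      · rw [if_neg h]
        have : S p.1 p.2 = 0 := if_neg h
        rw [this, mul_zero, zero_mul]
    rw [e1]
    have habsc : ∀ z : ℂ, ‖star z‖ = ‖z‖ := fun z => by
      rw [Complex.star_def, Complex.norm_conj]
    calc ‖∑ p ∈ P, star (x p.1) * A p.1 p.2 * x p.2‖
        ≤ ∑ p ∈ P, ‖star (x p.1) * A p.1 p.2 * x p.2‖ :=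
          norm_sum_le _ _
      _ ≤ ∑ p ∈ P, (‖x p.1‖ ^ 2 + ‖x p.2‖ ^ 2) / 2 := by
          refine Finset.sum_le_sum fun p hp => ?_
          have hm := (Finset.mem_filter.mp hp).2
          rw [norm_mul, norm_mul, habs1 _ _ hm, habsc, mul_one]
          nlinarith [sq_nonneg (‖x p.1‖ - ‖x p.2‖),
            norm_nonneg (x p.1), norm_nonneg (x p.2)]
      _ = ((∑ p ∈ P, ‖x p.1‖ ^ 2) + ∑ p ∈ P, ‖x p.2‖ ^ 2) / 2 := by
          rw [← Finset.sum_add_distrib, ← Finset.sum_div]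
      _ ≤ ((∑ v, ‖x v‖ ^ 2) + ∑ v, ‖x v‖ ^ 2) / 2 := by
          have hfst : ∑ p ∈ P, ‖x p.1‖ ^ 2 ≤ ∑ v, ‖x v‖ ^ 2 := by
            rw [show (∑ p ∈ P, ‖x p.1‖ ^ 2)
                = ∑ v ∈ P.image Prod.fst, ‖x v‖ ^ 2 from
              (Finset.sum_image (s := P) (g := Prod.fst) (f := fun v => ‖x v‖ ^ 2)
                fun p hp q hq h => matching_fst_inj hM
                (Finset.mem_filter.mp hp).2 (Finset.mem_filter.mp hq).2 h).symm]
            exact Finset.sum_le_sum_of_subset_of_nonneg (Finset.subset_univ _)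
              fun v _ _ => by positivity
          have hsnd : ∑ p ∈ P, ‖x p.2‖ ^ 2 ≤ ∑ v, ‖x v‖ ^ 2 := by
            rw [show (∑ p ∈ P, ‖x p.2‖ ^ 2)
                = ∑ v ∈ P.image Prod.snd, ‖x v‖ ^ 2 from
              (Finset.sum_image (s := P) (g := Prod.snd) (f := fun v => ‖x v‖ ^ 2)
                fun p hp q hq h => matching_snd_inj hM
                (Finset.mem_filter.mp hp).2 (Finset.mem_filter.mp hq).2 h).symm]
            exact Finset.sum_le_sum_of_subset_of_nonneg (Finset.subset_univ _)
              fun v _ _ => by positivity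
          linarith
      _ = ∑ v, ‖x v‖ ^ 2 := by ring
  have hle := abs_trace_le hA hquad
  rw [htr, Complex.norm_real, Real.norm_eq_abs, abs_of_nonneg (by positivity)] at hle
  push_cast at hle ⊢
  linarith

lemma two_mu_le_energy [Fintype V] [DecidableEq V] (G : SimpleGraph V) (φ : V → V → ℂ)
    (hg : IsGain G φ) (hA : (gainAdj G φ).IsHermitian) :
    2 * (matchingNumber G : ℝ) ≤ ∑ i, |hA.eigenvalues i| := by
  obtain ⟨M, hM, hMc⟩ := exists_max_matching G
  have habs1 : ∀ v w : V, s(v, w) ∈ M → ‖gainAdj G φ v w‖ = 1 := by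
    intro v w h
    have hadj : G.Adj v w := hM.1 h
    have h1 : gainAdj G φ v w = φ v w := if_pos hadj
    rw [h1]; exact hg.unit v w hadj
  have := two_mu_core hM hA habs1
  rw [hMc] at this
  exact this


lemma eig_sum_congr {n : Type*} [Fintype n] [DecidableEq n] {A B : Matrix n n ℂ}
    (h : A = B) (hA : A.IsHermitian) (hB : B.IsHermitian) :
    ∑ i, |hA.eigenvalues i| = ∑ i, |hB.eigenvalues i| := by
  subst h; rfl

end AuxEnergyLemmas

/-- if `G₁` is an induced subgraph (on vertex set `U`) with
`μ(G) = μ(G₁) + μ(G − G₁)` and the energy of `Φ` equals `2μ(G)`, then the energy of the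
restriction of `Φ` to `G₁` equals `2μ(G₁)`. -/
theorem gainEnergy_induce_eq [Fintype V] [DecidableEq V]
    (G : SimpleGraph V) (φ : V → V → ℂ) (hg : IsGain G φ) (U : Finset V)
    (hμ : matchingNumber G =
      matchingNumber (G.induce (U : Set V)) + matchingNumber (G.induce ((Uᶜ : Finset V) : Set V)))
    (hE : gainEnergy G φ hg = 2 * (matchingNumber G : ℝ)) :
    gainEnergy (G.induce (U : Set V)) (fun a b => φ a b) (hg.induce (U : Set V)) =
      2 * (matchingNumber (G.induce (U : Set V)) : ℝ) := by
  classical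
  have hH := hg.isHermitian
  have h1 : ((gainAdj G φ).submatrix (Subtype.val : (↑U : Set V) → V) Subtype.val).IsHermitian :=
    hH.submatrix _
  have h2 : ((gainAdj G φ).submatrix
      (Subtype.val : (↑(Uᶜ) : Set V) → V) Subtype.val).IsHermitian :=
    hH.submatrix _
  have hpinch := pinch (gainAdj G φ) hH U h1 h2
  have hsub1 : gainAdj (G.induce (↑U : Set V)) (fun a b => φ ↑a ↑b) =
      (gainAdj G φ).submatrix Subtype.val Subtype.val := by
    ext i j
    simp only [gainAdj, Matrix.submatrix_apply]
    by_cases h : G.Adj ↑i ↑j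
    · rw [if_pos h]; exact if_pos h
    · rw [if_neg h]; exact if_neg h
  have hsub2 : gainAdj (G.induce (↑(Uᶜ) : Set V)) (fun a b => φ ↑a ↑b) =
      (gainAdj G φ).submatrix Subtype.val Subtype.val := by
    ext i j
    simp only [gainAdj, Matrix.submatrix_apply]
    by_cases h : G.Adj ↑i ↑j
    · rw [if_pos h]; exact if_pos h
    · rw [if_neg h]; exact if_neg h
  have hE1 : gainEnergy (G.induce (↑U : Set V)) (fun a b => φ ↑a ↑b)
      (hg.induce (↑U : Set V)) = ∑ i, |h1.eigenvalues i| :=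
    eig_sum_congr hsub1 _ h1
  have hE2 : gainEnergy (G.induce (↑(Uᶜ) : Set V)) (fun a b => φ ↑a ↑b)
      (hg.induce (↑(Uᶜ) : Set V)) = ∑ i, |h2.eigenvalues i| :=
    eig_sum_congr hsub2 _ h2
  have hB1 := two_mu_le_energy (G.induce (↑U : Set V)) (fun a b => φ ↑a ↑b)
    (hg.induce (↑U : Set V)) (hg.induce (↑U : Set V)).isHermitian
  have hB2 := two_mu_le_energy (G.induce (↑(Uᶜ) : Set V)) (fun a b => φ ↑a ↑b)
    (hg.induce (↑(Uᶜ) : Set V)) (hg.induce (↑(Uᶜ) : Set V)).isHermitian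
  rw [show (∑ i, |(hg.induce (↑U : Set V)).isHermitian.eigenvalues i|)
      = gainEnergy (G.induce (↑U : Set V)) (fun a b => φ ↑a ↑b)
        (hg.induce (↑U : Set V)) from rfl, hE1] at hB1
  rw [show (∑ i, |(hg.induce (↑(Uᶜ) : Set V)).isHermitian.eigenvalues i|)
      = gainEnergy (G.induce (↑(Uᶜ) : Set V)) (fun a b => φ ↑a ↑b)
        (hg.induce (↑(Uᶜ) : Set V)) from rfl, hE2] at hB2
  have hEt : gainEnergy G φ hg = ∑ i, |hH.eigenvalues i| := rfl
  rw [hEt] at hE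
  have hμ' : (matchingNumber G : ℝ) = (matchingNumber (G.induce (↑U : Set V)) : ℝ) +
      (matchingNumber (G.induce ((↑(Uᶜ) : Finset V) : Set V)) : ℝ) := by
    exact_mod_cast hμ
  rw [hE1]
  linarith
end
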